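/- arXiv:1304.0161 — 6 statements merged into one kernel-verified Lean document; each statement's English description precedes it below -/
import Mathlib

section
/- Let p be a prime and q ∈ ℚ_p. Every y ∈ ℚ_p can be written uniquely as y = ⟨y⟩ + z with ⟨y⟩ ∈ ℤ[1/p] ∩ [0,1) and z ∈ ℤ_p; define the p-adic β-transformation T_q : ℤ_p → ℤ_p by T_q(x) = q·x − ⟨q·x⟩. Then the topological entropy of T_q on the compact metric space ℤ_p equals log⁺|q|_p = max(log |q|_p, 0). -/
/-- `T : ℤ_p → ℤ_p` is the p-adic β-transformation associated to `q ∈ ℚ_p`: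
for each `x ∈ ℤ_p`, `T x = q·x − ⟨q·x⟩`, where the p-adic fractional part
`⟨q·x⟩` is the unique element of `ℤ[1/p] ∩ [0,1)` with `q·x − ⟨q·x⟩ ∈ ℤ_p`. -/
def IsPadicBetaTransform (p : ℕ) [Fact p.Prime] (q : ℚ_[p]) (T : ℤ_[p] → ℤ_[p]) : Prop :=
  ∀ x : ℤ_[p], ∃ r : ℚ, (∃ a : ℤ, ∃ n : ℕ, r = (a : ℚ) / (p : ℚ) ^ n) ∧
    0 ≤ r ∧ r < 1 ∧ ((T x : ℚ_[p]) = q * (x : ℚ_[p]) - (r : ℚ_[p]))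


lemma padicNorm_ppow (p : ℕ) [Fact p.Prime] (n : ℕ) :
    padicNorm p ((p:ℚ)^n) = ((p:ℚ)⁻¹)^n := by
  induction n with
  | zero => simp
  | succ k ih => rw [pow_succ, padicNorm.mul, ih, pow_succ, padicNorm.padicNorm_p_of_prime]

lemma rat_aux (p : ℕ) [hp : Fact p.Prime] (d : ℚ) (hd : ∃ a : ℤ, ∃ n : ℕ, d = (a:ℚ) / (p:ℚ)^n)
    (h1 : ‖(d : ℚ_[p])‖ ≤ 1) (h2 : -1 < d) (h3 : d < 1) : d = 0 := by
  obtain ⟨a, n, rfl⟩ := hd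
  rw [Padic.eq_padicNorm] at h1
  have hp1 : (1:ℚ) < p := by exact_mod_cast hp.out.one_lt
  have hpn : ((p:ℚ))^n ≠ 0 := by positivity
  have h1' : padicNorm p ((a:ℚ) / (p:ℚ)^n) ≤ 1 := by exact_mod_cast h1
  have hdvd : ((p^n : ℕ) : ℤ) ∣ a := by
    rw [padicNorm.dvd_iff_norm_le]
    have : padicNorm p (a:ℚ) = padicNorm p ((a:ℚ) / (p:ℚ)^n) * padicNorm p ((p:ℚ)^n) := by
      rw [← padicNorm.mul, div_mul_cancel₀ _ hpn]
    rw [this]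
    have hpow : padicNorm p ((p:ℚ)^n) = (p:ℚ)^(-(n:ℤ)) := by
      rw [padicNorm_ppow, inv_pow, ← zpow_natCast, ← zpow_neg]
    rw [hpow]
    calc padicNorm p ((a:ℚ) / (p:ℚ)^n) * (p:ℚ)^(-(n:ℤ)) ≤ 1 * (p:ℚ)^(-(n:ℤ)) := by
          apply mul_le_mul_of_nonneg_right h1' (zpow_nonneg (by positivity) _)
      _ = (p:ℚ)^(-(n:ℤ)) := one_mul _
  obtain ⟨b, rfl⟩ := hdvd
  have he : (((((p^n : ℕ) : ℤ) * b : ℤ) : ℚ)) / (p:ℚ)^n = (b:ℚ) := by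
    push_cast
    rw [mul_comm, mul_div_assoc, div_self hpn, mul_one]
  rw [he] at h2 h3 ⊢
  have hb : b = 0 := by
    have h2' : (-1 : ℤ) < b := by exact_mod_cast h2
    have h3' : b < 1 := by exact_mod_cast h3
    omega
  simp [hb]

variable {p : ℕ} [Fact p.Prime] {q : ℚ_[p]} {T : ℤ_[p] → ℤ_[p]}

lemma step (hT : IsPadicBetaTransform p q T) {x y : ℤ_[p]}
    (h : ‖q * ((x : ℚ_[p]) - y)‖ ≤ 1) :
    ((T x : ℚ_[p]) - T y) = q * ((x : ℚ_[p]) - y) := by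
  obtain ⟨r1, hr1d, hr1a, hr1b, hr1⟩ := hT x
  obtain ⟨r2, hr2d, hr2a, hr2b, hr2⟩ := hT y
  have key : (((r1 - r2 : ℚ)) : ℚ_[p]) = q * ((x : ℚ_[p]) - y) - ((T x : ℚ_[p]) - T y) := by
    push_cast
    rw [hr1, hr2]; ring
  have hnorm : ‖(((r1 - r2 : ℚ)) : ℚ_[p])‖ ≤ 1 := by
    rw [key, sub_eq_add_neg]
    refine (Padic.nonarchimedean _ _).trans (max_le h ?_)
    rw [norm_neg, show ((T x : ℚ_[p]) - T y) = ((T x - T y : ℤ_[p]) : ℚ_[p]) by push_cast; ring]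
    rw [← PadicInt.norm_def]
    exact PadicInt.norm_le_one _
  have hzero : r1 - r2 = 0 := by
    apply rat_aux p _ _ hnorm (by linarith) (by linarith)
    obtain ⟨a1, n1, rfl⟩ := hr1d
    obtain ⟨a2, n2, rfl⟩ := hr2d
    refine ⟨a1 * p ^ n2 - a2 * p ^ n1, n1 + n2, ?_⟩
    have hp0 : (0:ℚ) < p := by exact_mod_cast (Fact.out : p.Prime).pos
    have h1 : ((p:ℚ))^n1 ≠ 0 := by positivity
    have h2 : ((p:ℚ))^n2 ≠ 0 := by positivity
    field_simp
    push_cast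
    ring
  have h0 : (((r1 - r2 : ℚ)) : ℚ_[p]) = 0 := by rw [hzero]; simp
  rw [key] at h0
  exact (sub_eq_zero.mp h0).symm

lemma iter (hT : IsPadicBetaTransform p q T) (x y : ℤ_[p]) :
    ∀ i : ℕ, (∀ j, j < i → ‖q‖ * ‖(T^[j] x : ℚ_[p]) - (T^[j] y : ℚ_[p])‖ ≤ 1) →
      ((T^[i] x : ℚ_[p]) - (T^[i] y : ℚ_[p])) = q ^ i * ((x : ℚ_[p]) - y) := by
  intro i
  induction i with
  | zero => simp
  | succ k ih =>
    intro hall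
    have hk := ih (fun j hj => hall j (hj.trans (Nat.lt_succ_self k)))
    rw [Function.iterate_succ_apply', Function.iterate_succ_apply']
    have hs : ‖q * ((T^[k] x : ℚ_[p]) - (T^[k] y : ℚ_[p]))‖ ≤ 1 := by
      rw [norm_mul]; exact hall k (Nat.lt_succ_self k)
    rw [step hT hs, hk, pow_succ]; ring

lemma iterA (hT : IsPadicBetaTransform p q T) (x y : ℤ_[p]) :
    ∀ i : ℕ, (∀ j, j ≤ i → ‖q‖ ^ j * ‖(x : ℚ_[p]) - (y : ℚ_[p])‖ ≤ 1) →
      ((T^[i] x : ℚ_[p]) - (T^[i] y : ℚ_[p])) = q ^ i * ((x : ℚ_[p]) - y) := by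
  intro i
  induction i with
  | zero => simp
  | succ k ih =>
    intro hall
    have hk := ih (fun j hj => hall j (hj.trans (Nat.le_succ k)))
    rw [Function.iterate_succ_apply', Function.iterate_succ_apply']
    have hs : ‖q * ((T^[k] x : ℚ_[p]) - (T^[k] y : ℚ_[p]))‖ ≤ 1 := by
      rw [norm_mul, hk, norm_mul, norm_pow, ← mul_assoc, ← pow_succ']
      exact hall (k+1) le_rfl
    rw [step hT hs, hk, pow_succ]; ring

open Dynamics Set Uniformity
open scoped ENNReal

/-- congruence mod p^j as norm bound -/
lemma zmod_eq_of_norm_le {j : ℕ} {x y : ℤ_[p]} (h : ‖x - y‖ ≤ (p:ℝ)^(-(j:ℤ))) :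
    PadicInt.toZModPow j x = PadicInt.toZModPow j y := by
  have : x - y ∈ RingHom.ker (PadicInt.toZModPow (p := p) j) := by
    rw [PadicInt.ker_toZModPow]
    exact (PadicInt.norm_le_pow_iff_mem_span_pow _ j).mp h
  rw [RingHom.mem_ker, map_sub, sub_eq_zero] at this
  exact this

lemma norm_le_of_zmod_eq {j : ℕ} {x y : ℤ_[p]}
    (h : PadicInt.toZModPow j x = PadicInt.toZModPow j y) : ‖x - y‖ ≤ (p:ℝ)^(-(j:ℤ)) := by
  rw [PadicInt.norm_le_pow_iff_mem_span_pow, ← PadicInt.ker_toZModPow, RingHom.mem_ker,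
    map_sub, sub_eq_zero]
  exact h

lemma cover_upper (hT : IsPadicBetaTransform p q T) (K m n : ℕ) (hK : ‖q‖ ≤ (p:ℝ)^(K:ℕ))
    (hn : 1 ≤ n) :
    coverMincard T Set.univ {xy : ℤ_[p] × ℤ_[p] | dist xy.1 xy.2 ≤ (p:ℝ)^(-(m:ℤ))} n
      ≤ ((p^(m + K*(n-1)) : ℕ) : ℕ∞) := by
  classical
  have hp1 : (1:ℝ) < p := by exact_mod_cast (Fact.out : p.Prime).one_lt
  have hp0 : p ≠ 0 := (Fact.out : p.Prime).ne_zero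
  set j := m + K*(n-1) with hj
  haveI : NeZero (p^j) := ⟨pow_ne_zero _ hp0⟩
  set s : Finset ℤ_[p] := Finset.image (fun z : ZMod (p^j) => ((z.val : ℤ_[p]))) Finset.univ
    with hs
  have hcov : IsDynCoverOf T Set.univ {xy : ℤ_[p] × ℤ_[p] | dist xy.1 xy.2 ≤ (p:ℝ)^(-(m:ℤ))} n s := by
    intro x _
    set z := PadicInt.toZModPow (p := p) j x with hz
    set c : ℤ_[p] := (z.val : ℤ_[p]) with hc
    have hcx : ‖c - x‖ ≤ (p:ℝ)^(-(j:ℤ)) := by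
      apply norm_le_of_zmod_eq
      rw [hc, map_natCast, ZMod.natCast_zmod_val]
    have hqnn : (0:ℝ) ≤ ‖q‖ := norm_nonneg q
    -- main iterate estimate
    have hiter : ∀ i, i ≤ n - 1 →
        ((T^[i] c : ℚ_[p]) - (T^[i] x : ℚ_[p])) = q ^ i * ((c : ℚ_[p]) - x) := by
      intro i hi
      apply iterA hT
      intro l hl
      have hnorm : ‖(c : ℚ_[p]) - x‖ ≤ (p:ℝ)^(-(j:ℤ)) := by
        rw [← PadicInt.coe_sub, PadicInt.padic_norm_e_of_padicInt]; exact hcx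
      calc ‖q‖^l * ‖(c:ℚ_[p]) - x‖ ≤ ((p:ℝ)^(K:ℕ))^l * (p:ℝ)^(-(j:ℤ)) := by
            apply mul_le_mul (pow_le_pow_left₀ hqnn hK l) hnorm (norm_nonneg _) (by positivity)
        _ = (p:ℝ)^((K*l : ℕ) : ℤ) * (p:ℝ)^(-(j:ℤ)) := by
            rw [← pow_mul, ← zpow_natCast]
        _ = (p:ℝ)^(((K*l : ℕ) : ℤ) - j) := by rw [← zpow_add₀ (by positivity), sub_eq_add_neg]
        _ ≤ 1 := by
            apply zpow_le_one_of_nonpos₀ hp1.le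
            have : K * l ≤ j := by
              calc K * l ≤ K * (n-1) := Nat.mul_le_mul_left K (hl.trans hi)
                _ ≤ j := Nat.le_add_left _ _
            omega
    refine ⟨c, (Finset.mem_coe (s := s)).mpr (by rw [hs]; exact Finset.mem_image_of_mem _ (Finset.mem_univ z)), ?_⟩
    show (x, c) ∈ dynEntourage T _ n
    rw [Dynamics.mem_dynEntourage]
    intro i hi
    have hi' : i ≤ n - 1 := by omega
    have := hiter i hi'
    show dist (T^[i] x) (T^[i] c) ≤ (p:ℝ)^(-(m:ℤ))
    rw [dist_comm, dist_eq_norm, PadicInt.norm_def, PadicInt.coe_sub, this, norm_mul, norm_pow]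
    have hnorm : ‖(c : ℚ_[p]) - x‖ ≤ (p:ℝ)^(-(j:ℤ)) := by
      rw [← PadicInt.coe_sub, PadicInt.padic_norm_e_of_padicInt]; exact hcx
    calc ‖q‖^i * ‖(c:ℚ_[p]) - x‖ ≤ ((p:ℝ)^(K:ℕ))^i * (p:ℝ)^(-(j:ℤ)) := by
          apply mul_le_mul (pow_le_pow_left₀ (norm_nonneg q) hK i) hnorm (norm_nonneg _) (by positivity)
      _ = (p:ℝ)^(((K*i : ℕ) : ℤ) - j) := by
          rw [← pow_mul, ← zpow_natCast, ← zpow_add₀ (by positivity : (p:ℝ) ≠ 0), sub_eq_add_neg]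
      _ ≤ (p:ℝ)^(-(m:ℤ)) := by
          apply zpow_le_zpow_right₀ hp1.le
          have : K * i ≤ K * (n-1) := Nat.mul_le_mul_left K hi'
          omega
  calc coverMincard T Set.univ _ n ≤ (s.card : ℕ∞) := hcov.coverMincard_le_card
    _ ≤ ((p^j : ℕ) : ℕ∞) := by
        have := Finset.card_image_le (s := (Finset.univ : Finset (ZMod (p^j))))
          (f := fun z : ZMod (p^j) => ((z.val : ℤ_[p])))
        rw [← hs] at this
        have hcard : (Finset.univ : Finset (ZMod (p^j))).card = p^j := by
          rw [Finset.card_univ, ZMod.card]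
        exact_mod_cast this.trans_eq hcard

lemma cover_lower (hT : IsPadicBetaTransform p q T) (k n : ℕ) (hq : ‖q‖ = (p:ℝ)^(k:ℕ))
    (hn : 1 ≤ n) :
    ((p^(k*n) : ℕ) : ℕ∞) ≤
      coverMincard T Set.univ {xy : ℤ_[p] × ℤ_[p] | dist xy.1 xy.2 ≤ (p:ℝ)^(-(k:ℤ))} n := by
  classical
  have hp1 : (1:ℝ) < p := by exact_mod_cast (Fact.out : p.Prime).one_lt
  have hp0 : p ≠ 0 := (Fact.out : p.Prime).ne_zero
  have hppos : (0:ℝ) < p := by positivity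
  haveI : NeZero (p^(k*n)) := ⟨pow_ne_zero _ hp0⟩
  rw [coverMincard]
  refine le_iInf fun s => le_iInf fun hs => ?_
  -- every point is within p^{-kn} of some element of s
  have key : ∀ x : ℤ_[p], ∃ c ∈ s, PadicInt.toZModPow (k*n) c = PadicInt.toZModPow (k*n) x := by
    intro x
    obtain ⟨c, hcs, hcx⟩ := hs (Set.mem_univ x)
    refine ⟨c, hcs, ?_⟩
    rw [Dynamics.mem_dynEntourage] at hcx
    have hdist : ∀ i, i < n → ‖(T^[i] c : ℚ_[p]) - (T^[i] x : ℚ_[p])‖ ≤ (p:ℝ)^(-(k:ℤ)) := by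
      intro i hi
      have := hcx i hi
      rw [Set.mem_setOf_eq, dist_comm, dist_eq_norm, PadicInt.norm_def, PadicInt.coe_sub] at this
      exact this
    have hfor : ((T^[n-1] c : ℚ_[p]) - (T^[n-1] x : ℚ_[p])) = q^(n-1) * ((c:ℚ_[p]) - x) := by
      apply iter hT
      intro l hl
      have := hdist l (by omega)
      calc ‖q‖ * ‖(T^[l] c : ℚ_[p]) - (T^[l] x : ℚ_[p])‖ ≤ (p:ℝ)^(k:ℕ) * (p:ℝ)^(-(k:ℤ)) := by
            apply mul_le_mul (le_of_eq hq) this (norm_nonneg _) (by positivity)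
        _ = 1 := by rw [← zpow_natCast, ← zpow_add₀ (ne_of_gt hppos)]; simp
    have hnc : ‖(c:ℚ_[p]) - x‖ ≤ (p:ℝ)^(-((k*n : ℕ) : ℤ)) := by
      have h1 := hdist (n-1) (by omega)
      rw [hfor, norm_mul, norm_pow, hq, ← pow_mul, ← zpow_natCast ((p:ℝ))] at h1
      have hpow : (0:ℝ) < (p:ℝ)^((k*(n-1) : ℕ) : ℤ) := by positivity
      rw [← le_div_iff₀' hpow] at h1
      calc ‖(c:ℚ_[p]) - x‖ ≤ (p:ℝ)^(-(k:ℤ)) / (p:ℝ)^((k*(n-1):ℕ) : ℤ) := h1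
        _ = (p:ℝ)^(-((k*n:ℕ):ℤ)) := by
            rw [div_eq_mul_inv, ← zpow_neg, ← zpow_add₀ (ne_of_gt hppos)]
            congr 1
            have : k * n = k + k * (n-1) := by
              cases n with
              | zero => omega
              | succ m => simp [Nat.mul_succ]; ring
            omega
    refine zmod_eq_of_norm_le ?_
    rw [PadicInt.norm_def, PadicInt.coe_sub]
    exact hnc
  -- conclude via surjectivity onto ZMod (p^(k*n))
  have himg : (Finset.univ : Finset (ZMod (p^(k*n)))) ⊆ s.image (PadicInt.toZModPow (k*n)) := by
    intro z _
    obtain ⟨c, hcs, hc⟩ := key ((z.val : ℤ_[p]))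
    refine Finset.mem_image.mpr ⟨c, hcs, ?_⟩
    rw [hc, map_natCast, ZMod.natCast_zmod_val]
  have hcard : p^(k*n) ≤ s.card := by
    have h1 := Finset.card_le_card himg
    rw [Finset.card_univ, ZMod.card] at h1
    exact h1.trans (Finset.card_image_le)
  exact Nat.cast_le.mpr hcard

open Filter in
lemma ent_upper (hT : IsPadicBetaTransform p q T) (K m : ℕ) (hK : ‖q‖ ≤ (p:ℝ)^(K:ℕ)) :
    coverEntropyEntourage T Set.univ {xy : ℤ_[p] × ℤ_[p] | dist xy.1 xy.2 ≤ (p:ℝ)^(-(m:ℤ))}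
      ≤ (((K : ℝ) * Real.log p : ℝ) : EReal) := by
  have hp1 : (1:ℝ) < p := by exact_mod_cast (Fact.out : p.Prime).one_lt
  have hp0 : p ≠ 0 := (Fact.out : p.Prime).ne_zero
  set L := Real.log p with hL
  set g : ℕ → EReal := fun n => ((((m:ℝ) + (K:ℝ)*((n:ℝ)-1)) * L / n : ℝ) : EReal) with hg
  have hbound : ∀ᶠ n : ℕ in atTop,
      ENNReal.log (Dynamics.coverMincard T Set.univ
        {xy : ℤ_[p] × ℤ_[p] | dist xy.1 xy.2 ≤ (p:ℝ)^(-(m:ℤ))} n) / (n : EReal) ≤ g n := by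
    filter_upwards [eventually_ge_atTop 1] with n hn
    have h1 := cover_upper hT K m n hK hn
    have h2 : ENNReal.log (Dynamics.coverMincard T Set.univ
        {xy : ℤ_[p] × ℤ_[p] | dist xy.1 xy.2 ≤ (p:ℝ)^(-(m:ℤ))} n)
        ≤ ENNReal.log (((p^(m + K*(n-1)) : ℕ) : ℕ∞) : ℝ≥0∞) :=
      ENNReal.log_monotone (ENat.toENNReal_mono h1)
    have h3 : ENNReal.log (((p^(m + K*(n-1)) : ℕ) : ℕ∞) : ℝ≥0∞)
        = ((((m + K*(n-1) : ℕ) : ℝ) * L : ℝ) : EReal) := by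
      rw [ENat.toENNReal_coe, Nat.cast_pow, ENNReal.log_pow]
      have hplog : ENNReal.log ((p:ℕ) : ℝ≥0∞) = (L : EReal) := by
        rw [ENNReal.log_pos_real (by exact_mod_cast hp0) (by simp), ENNReal.toReal_natCast]
      rw [hplog, ← EReal.coe_coe_eq_natCast, ← EReal.coe_mul]
    have h4 : (((((m + K*(n-1) : ℕ) : ℝ)) * L : ℝ) : EReal) / (n : EReal) ≤ g n := by
      apply le_of_eq
      rw [hg, ← EReal.coe_coe_eq_natCast n, ← EReal.coe_div]
      congr 2
      have : ((n-1 : ℕ) : ℝ) = (n:ℝ) - 1 := by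
        rw [Nat.cast_sub hn, Nat.cast_one]
      push_cast
      rw [this]
    refine le_trans ?_ h4
    rw [← h3]
    exact EReal.div_le_div_right_of_nonneg (by exact_mod_cast Nat.zero_le n) h2
  have hgtend : Tendsto g atTop (nhds (((K:ℝ) * L : ℝ) : EReal)) := by
    rw [hg, EReal.tendsto_coe]
    have h1 : Tendsto (fun n : ℕ => (1:ℝ)/n) atTop (nhds 0) := tendsto_one_div_atTop_nhds_zero_nat
    have h2 := (h1.const_mul (((m:ℝ) - (K:ℝ)) * L)).add_const ((K:ℝ)*L)
    rw [mul_zero, zero_add] at h2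
    apply h2.congr'
    filter_upwards [eventually_ge_atTop 1] with n hn
    have hn0 : (n:ℝ) ≠ 0 := ne_of_gt (by exact_mod_cast Nat.lt_of_lt_of_le Nat.zero_lt_one hn)
    field_simp
    ring
  calc coverEntropyEntourage T Set.univ _ ≤ atTop.limsup g := limsup_le_limsup hbound
    _ = (((K:ℝ) * L : ℝ) : EReal) := hgtend.limsup_eq

open Filter in
lemma ent_lower (hT : IsPadicBetaTransform p q T) (k : ℕ) (hq : ‖q‖ = (p:ℝ)^(k:ℕ)) :
    (((k : ℝ) * Real.log p : ℝ) : EReal) ≤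
      coverEntropyEntourage T Set.univ {xy : ℤ_[p] × ℤ_[p] | dist xy.1 xy.2 ≤ (p:ℝ)^(-(k:ℤ))} := by
  have hp1 : (1:ℝ) < p := by exact_mod_cast (Fact.out : p.Prime).one_lt
  have hp0 : p ≠ 0 := (Fact.out : p.Prime).ne_zero
  set L := Real.log p with hL
  apply le_limsup_of_frequently_le (hu_le := isBoundedUnder_of ⟨⊤, fun _ => le_top⟩)
  apply Eventually.frequently
  filter_upwards [eventually_ge_atTop 1] with n hn
  have h1 := cover_lower hT k n hq hn
  have h2 : ENNReal.log (((p^(k*n) : ℕ) : ℕ∞) : ℝ≥0∞)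
      ≤ ENNReal.log (Dynamics.coverMincard T Set.univ
        {xy : ℤ_[p] × ℤ_[p] | dist xy.1 xy.2 ≤ (p:ℝ)^(-(k:ℤ))} n) :=
    ENNReal.log_monotone (ENat.toENNReal_mono h1)
  have h3 : ENNReal.log (((p^(k*n) : ℕ) : ℕ∞) : ℝ≥0∞)
      = ((((k*n : ℕ) : ℝ) * L : ℝ) : EReal) := by
    rw [ENat.toENNReal_coe, Nat.cast_pow, ENNReal.log_pow]
    have hplog : ENNReal.log ((p:ℕ) : ℝ≥0∞) = (L : EReal) := by
      rw [ENNReal.log_pos_real (by exact_mod_cast hp0) (by simp), ENNReal.toReal_natCast]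
    rw [hplog, ← EReal.coe_coe_eq_natCast, ← EReal.coe_mul]
  have h4 : (((k : ℝ) * L : ℝ) : EReal) = ((((k*n : ℕ) : ℝ) * L : ℝ) : EReal) / (n : EReal) := by
    rw [← EReal.coe_coe_eq_natCast n, ← EReal.coe_div]
    have hn0 : (n:ℝ) ≠ 0 := ne_of_gt (by exact_mod_cast Nat.lt_of_lt_of_le Nat.zero_lt_one hn)
    congr 1
    push_cast
    field_simp
  rw [h4]
  refine le_trans (le_of_eq rfl) ?_
  rw [← h3]
  exact EReal.div_le_div_right_of_nonneg (by exact_mod_cast Nat.zero_le n) (h3 ▸ h2)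


/-- The topological entropy of the p-adic β-transformation `T_q` on the compact
metric space `ℤ_p` equals `log⁺ |q|_p = max (log |q|_p) 0`. -/
theorem topologicalEntropy_padic_beta_transform (p : ℕ) [Fact p.Prime] (q : ℚ_[p])
    (T : ℤ_[p] → ℤ_[p]) (hT : IsPadicBetaTransform p q T) :
    Dynamics.coverEntropy T Set.univ = ((max (Real.log ‖q‖) 0 : ℝ) : EReal) := by
  have hp1 : (1:ℝ) < p := by exact_mod_cast (Fact.out : p.Prime).one_lt
  have hppos : (0:ℝ) < p := lt_trans one_pos hp1
  have hpinv : (p:ℝ)⁻¹ < 1 := by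
    rw [inv_lt_one_iff₀]; right; exact hp1
  have upper : ∀ K : ℕ, ‖q‖ ≤ (p:ℝ)^(K:ℕ) →
      coverEntropy T Set.univ ≤ (((K:ℝ) * Real.log p : ℝ) : EReal) := by
    intro K hK
    rw [coverEntropy_eq_iSup_basis Metric.uniformity_basis_dist T Set.univ]
    refine iSup₂_le fun ε hε => ?_
    obtain ⟨m, hm⟩ := exists_pow_lt_of_lt_one hε hpinv
    have hsub : {xy : ℤ_[p] × ℤ_[p] | dist xy.1 xy.2 ≤ (p:ℝ)^(-(m:ℤ))}
        ⊆ {xy : ℤ_[p] × ℤ_[p] | dist xy.1 xy.2 < ε} := by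
      intro xy hxy
      have he : (p:ℝ)^(-(m:ℤ)) = ((p:ℝ)⁻¹)^m := by
        rw [zpow_neg, zpow_natCast, inv_pow]
      exact lt_of_le_of_lt (he ▸ hxy) hm
    exact (coverEntropyEntourage_antitone T Set.univ hsub).trans (ent_upper hT K m hK)
  rcases le_or_gt ‖q‖ 1 with hq1 | hq1
  · have hmax : max (Real.log ‖q‖) 0 = 0 := max_eq_right (Real.log_nonpos (norm_nonneg q) hq1)
    rw [hmax]
    refine le_antisymm ?_ (coverEntropy_nonneg T Set.univ_nonempty)
    have h := upper 0 (by simpa using hq1)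
    simpa using h
  · have hq0 : q ≠ 0 := by
      intro h; rw [h, norm_zero] at hq1; linarith
    have hval := Padic.norm_eq_zpow_neg_valuation hq0
    set v := q.valuation with hv
    have hvneg : v < 0 := by
      by_contra h
      push_neg at h
      have : ‖q‖ ≤ 1 := by
        rw [hval]
        exact zpow_le_one_of_nonpos₀ hp1.le (by omega)
      linarith
    set k := (-v).toNat with hk
    have hkv : (k : ℤ) = -v := Int.toNat_of_nonneg (by omega)
    have hqk : ‖q‖ = (p:ℝ)^(k:ℕ) := by rw [hval, ← zpow_natCast, hkv]
    have hlog : Real.log ‖q‖ = (k:ℝ) * Real.log p := by rw [hqk, Real.log_pow]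
    have hmax : max (Real.log ‖q‖) 0 = (k:ℝ) * Real.log p := by
      rw [hlog]
      exact max_eq_left (mul_nonneg (Nat.cast_nonneg k) (Real.log_nonneg hp1.le))
    rw [hmax]
    refine le_antisymm (upper k hqk.le) ?_
    refine le_trans (ent_lower hT k hqk) ?_
    apply coverEntropyEntourage_le_coverEntropy
    have hmem : {xy : ℤ_[p] × ℤ_[p] | dist xy.1 xy.2 < (p:ℝ)^(-(k:ℤ))} ∈ 𝓤 ℤ_[p] :=
      Metric.dist_mem_uniformity (by positivity)
    refine Filter.mem_of_superset hmem (fun xy hxy => ?_)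
    simp only [Set.mem_setOf_eq] at hxy ⊢
    exact hxy.le
end

section
/- Let p be a prime and q ∈ ℚ_p with |q|_p > 1. Then the p-adic β-transformation T_q : ℤ_p → ℤ_p, T_q(x) = q·x − ⟨q·x⟩, is ergodic with respect to the Haar probability measure on the compact additive group ℤ_p (which T_q preserves). -/
open MeasureTheory
open Set ENNReal

noncomputable instance (p : ℕ) [Fact p.Prime] : MeasurableSpace ℤ_[p] := borel _

instance (p : ℕ) [Fact p.Prime] : BorelSpace ℤ_[p] := ⟨rfl⟩

namespace PadicBetaAux

variable {p : ℕ} [hp : Fact p.Prime]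

/-- The closed ball (coset of `p^m ℤ_p`). -/
def C (m : ℕ) (c : ℤ_[p]) : Set ℤ_[p] := Metric.closedBall c ((p : ℝ) ^ (-(m : ℤ)))

lemma mem_C {m : ℕ} {c x : ℤ_[p]} : x ∈ C m c ↔ ‖x - c‖ ≤ (p : ℝ) ^ (-(m : ℤ)) := by
  simp [C, Metric.mem_closedBall, dist_eq_norm]

lemma C_measurable (m : ℕ) (c : ℤ_[p]) : MeasurableSet (C m c) :=
  Metric.isClosed_closedBall.measurableSet

lemma mem_C_self (m : ℕ) (c : ℤ_[p]) : c ∈ C m c := by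
  simp [mem_C, zpow_nonneg (by positivity : (0:ℝ) ≤ (p:ℝ))]

lemma C_zero (c : ℤ_[p]) : C 0 c = univ := by
  ext x
  simp only [mem_C, mem_univ, iff_true, Nat.cast_zero, neg_zero, zpow_zero]
  exact PadicInt.norm_le_one _

lemma C_subset {m m' : ℕ} (h : m ≤ m') {c c' x : ℤ_[p]}
    (hx : x ∈ C m' c') (hx' : x ∈ C m c) : C m' c' ⊆ C m c := by
  intro y hy
  rw [mem_C] at hx hx' hy ⊢
  have hle : (p : ℝ) ^ (-(m' : ℤ)) ≤ (p : ℝ) ^ (-(m : ℤ)) := by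
    apply zpow_le_zpow_right₀ (by exact_mod_cast hp.out.one_lt.le)
    omega
  have h1 : ‖y - x‖ ≤ (p : ℝ) ^ (-(m : ℤ)) := by
    have := PadicInt.nonarchimedean (y - c') (c' - x)
    simp only [sub_add_sub_cancel] at this
    refine this.trans (max_le (hy.trans hle) ?_)
    have : ‖c' - x‖ = ‖x - c'‖ := by rw [← norm_neg]; ring_nf
    rw [this]; exact hx.trans hle
  have := PadicInt.nonarchimedean (y - x) (x - c)
  simp only [sub_add_sub_cancel] at this
  exact this.trans (max_le h1 hx')

lemma mem_C_symm {m : ℕ} {c x : ℤ_[p]} (hx : x ∈ C m c) : c ∈ C m x := by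
  rw [mem_C] at hx ⊢
  rwa [← norm_neg, neg_sub]

lemma C_eq_of_mem {m : ℕ} {c x : ℤ_[p]} (hx : x ∈ C m c) : C m x = C m c :=
  subset_antisymm (C_subset le_rfl (mem_C_self m x) hx)
    (C_subset le_rfl (mem_C_self m c) (mem_C_symm hx))

/-- The collection of all cosets. -/
def 𝒞 : Set (Set ℤ_[p]) := {S | ∃ m : ℕ, ∃ c : ℤ_[p], S = C m c}

lemma piSystem_C : IsPiSystem (𝒞 (p := p)) := by
  rintro S ⟨m, c, rfl⟩ S' ⟨m', c', rfl⟩ ⟨x, hx, hx'⟩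
  rcases le_total m m' with h | h
  · refine ⟨m', x, ?_⟩
    rw [inter_eq_right.2 (C_subset h hx' hx), C_eq_of_mem hx']
  · refine ⟨m, x, ?_⟩
    rw [inter_eq_left.2 (C_subset h hx hx'), C_eq_of_mem hx]

lemma C_disjoint {m : ℕ} {i j : ℕ} (hi : i < p ^ m) (hj : j < p ^ m) (hne : i ≠ j) :
    Disjoint (C m (i : ℤ_[p])) (C m (j : ℤ_[p])) := by
  rw [Set.disjoint_left]
  intro x hxi hxj
  have h : ((i : ℤ_[p])) ∈ C m (j : ℤ_[p]) :=
    (C_subset le_rfl (mem_C_self m x) hxj) (mem_C_symm hxi)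
  rw [mem_C] at h
  have : ((i : ℤ_[p])) - (j : ℤ_[p]) = (((i : ℤ) - (j : ℤ) : ℤ) : ℤ_[p]) := by push_cast; ring
  rw [this] at h
  have hdvd : ((p : ℤ) ^ m) ∣ ((i : ℤ) - (j : ℤ)) := PadicInt.norm_int_le_pow_iff_dvd.1 h
  have hi' : (i : ℤ) < (p : ℤ) ^ m := by exact_mod_cast hi
  have hj' : (j : ℤ) < (p : ℤ) ^ m := by exact_mod_cast hj
  have hlt : |(i : ℤ) - (j : ℤ)| < (p : ℤ) ^ m := by
    rw [abs_sub_lt_iff]; constructor <;> omega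
  have := Int.eq_zero_of_abs_lt_dvd hdvd hlt
  omega

lemma mem_C_appr (x : ℤ_[p]) (m : ℕ) : x ∈ C m ((x.appr m : ℕ) : ℤ_[p]) := by
  rw [mem_C]
  exact (PadicInt.norm_le_pow_iff_mem_span_pow _ m).2 (x.appr_spec m)

lemma C_cover (m : ℕ) : (⋃ j ∈ Finset.range (p ^ m), C m (j : ℤ_[p])) = univ := by
  refine eq_univ_of_forall fun x => ?_
  refine Set.mem_biUnion ?_ (mem_C_appr x m)
  exact Finset.mem_range.2 (x.appr_lt m)


lemma borel_eq_C :
    (inferInstance : MeasurableSpace ℤ_[p]) = MeasurableSpace.generateFrom (𝒞 (p := p)) := by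
  refine le_antisymm ?_ (MeasurableSpace.generateFrom_le ?_)
  · -- borel ≤ generateFrom 𝒞
    refine MeasurableSpace.generateFrom_le fun U (hU : IsOpen U) => ?_
    have hUnion : U = ⋃ mj : ℕ × ℕ, ⋃ (_ : C mj.1 ((mj.2 : ℕ) : ℤ_[p]) ⊆ U),
        C mj.1 ((mj.2 : ℕ) : ℤ_[p]) := by
      apply subset_antisymm
      · intro x hx
        obtain ⟨ε, hε, hball⟩ := Metric.isOpen_iff.1 hU x hx
        obtain ⟨m, hm⟩ := exists_pow_lt_of_lt_one hε
          (show (p : ℝ)⁻¹ < 1 by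
            rw [inv_lt_one_iff₀]; right; exact_mod_cast hp.out.one_lt)
        have hCsub : C m x ⊆ U := by
          intro y hy
          apply hball
          rw [mem_C] at hy
          rw [Metric.mem_ball, dist_eq_norm]
          calc ‖y - x‖ ≤ (p : ℝ) ^ (-(m : ℤ)) := hy
            _ = ((p : ℝ)⁻¹) ^ m := by
                rw [zpow_neg, ← zpow_natCast, inv_zpow]
            _ < ε := hm
        have hx' : x ∈ C m ((x.appr m : ℕ) : ℤ_[p]) := mem_C_appr x m
        refine mem_iUnion.2 ⟨(m, x.appr m), mem_iUnion.2 ⟨?_, hx'⟩⟩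
        exact C_eq_of_mem hx' ▸ hCsub
      · intro x hx
        obtain ⟨mj, hmj⟩ := mem_iUnion.1 hx
        obtain ⟨hsub, hmem⟩ := mem_iUnion.1 hmj
        exact hsub hmem
    rw [hUnion]
    exact MeasurableSet.iUnion fun mj => MeasurableSet.iUnion fun hsub =>
      MeasurableSpace.measurableSet_generateFrom ⟨mj.1, _, rfl⟩
  · rintro S ⟨m, c, rfl⟩
    exact C_measurable m c

/-- Any translation-invariant probability measure gives each coset `C m c`
measure `(p^m)⁻¹`. -/
lemma meas_C (ν : Measure ℤ_[p]) (hprob : ν univ = 1)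
    (hinv : ∀ (t : ℤ_[p]) (E : Set ℤ_[p]), MeasurableSet E →
      ν ((fun x => t + x) ⁻¹' E) = ν E) (m : ℕ) (c : ℤ_[p]) :
    ν (C m c) = ((p : ℝ≥0∞) ^ m)⁻¹ := by
  have htrans : ∀ c' : ℤ_[p], ν (C m c') = ν (C m 0) := by
    intro c'
    have hset : C m c' = (fun x => (-c') + x) ⁻¹' (C m 0) := by
      ext x; simp only [mem_preimage, mem_C, sub_zero]
      constructor <;> intro h <;>
        · convert h using 2 <;> abel
    rw [hset, hinv _ _ (C_measurable m 0)]
  have hsum : ν univ = ∑ j ∈ Finset.range (p ^ m), ν (C m (j : ℤ_[p])) := by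
    rw [← C_cover m]
    rw [measure_biUnion_finset ?_ (fun j _ => C_measurable m _)]
    intro i hi j hj hne
    exact C_disjoint (Finset.mem_range.1 hi) (Finset.mem_range.1 hj) hne
  rw [hprob] at hsum
  have heach : ∀ j ∈ Finset.range (p ^ m), ν (C m (j : ℤ_[p])) = ν (C m 0) :=
    fun j _ => htrans _
  rw [Finset.sum_congr rfl heach, Finset.sum_const, Finset.card_range, nsmul_eq_mul] at hsum
  have hp0 : ((p : ℝ≥0∞) ^ m) ≠ 0 := by
    apply pow_ne_zero; exact_mod_cast hp.out.ne_zero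
  have hptop : ((p : ℝ≥0∞) ^ m) ≠ ⊤ := by
    apply pow_ne_top; exact ENNReal.natCast_ne_top p
  have : ((p : ℝ≥0∞) ^ m) * ν (C m 0) = 1 := by
    rw [← Nat.cast_pow, ← hsum]
  rw [htrans c]
  calc ν (C m 0) = ((p : ℝ≥0∞) ^ m)⁻¹ * (((p : ℝ≥0∞) ^ m) * ν (C m 0)) := by
        rw [← mul_assoc, ENNReal.inv_mul_cancel hp0 hptop, one_mul]
    _ = ((p : ℝ≥0∞) ^ m)⁻¹ := by rw [this, mul_one]

/-- Two translation-invariant probability measures on `ℤ_p` coincide. -/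
lemma eq_of_inv (ν₁ ν₂ : Measure ℤ_[p]) (h1 : ν₁ univ = 1) (h2 : ν₂ univ = 1)
    (hinv1 : ∀ (t : ℤ_[p]) (E : Set ℤ_[p]), MeasurableSet E →
      ν₁ ((fun x => t + x) ⁻¹' E) = ν₁ E)
    (hinv2 : ∀ (t : ℤ_[p]) (E : Set ℤ_[p]), MeasurableSet E →
      ν₂ ((fun x => t + x) ⁻¹' E) = ν₂ E) : ν₁ = ν₂ := by
  haveI : IsFiniteMeasure ν₁ := ⟨by rw [h1]; exact one_lt_top⟩
  refine ext_of_generate_finite 𝒞 borel_eq_C piSystem_C ?_ (by rw [h1, h2])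
  rintro S ⟨m, c, rfl⟩
  rw [meas_C ν₁ h1 hinv1, meas_C ν₂ h2 hinv2]

/-- The affine image scaling property of a translation-invariant probability
measure on `ℤ_p`. -/
lemma scale (μ : Measure ℤ_[p]) (hprob : μ univ = 1)
    (hinv : ∀ (t : ℤ_[p]) (E : Set ℤ_[p]), MeasurableSet E →
      μ ((fun x => t + x) ⁻¹' E) = μ E)
    (a d : ℤ_[p]) (m : ℕ) (ha : ‖a‖ = (p : ℝ) ^ (-(m : ℤ)))
    (E : Set ℤ_[p]) (hE : MeasurableSet E) :
    μ ((fun y => d + a * y) '' E) = ((p : ℝ≥0∞) ^ m)⁻¹ * μ E := by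
  have hppos : (0 : ℝ) < (p : ℝ) := by exact_mod_cast hp.out.pos
  have ha0 : a ≠ 0 := by
    intro h
    rw [h, norm_zero] at ha
    exact absurd ha.symm (ne_of_gt (zpow_pos hppos _))
  set f : ℤ_[p] → ℤ_[p] := fun y => d + a * y with hf
  have hinj : Function.Injective f := by
    intro y₁ y₂ h
    simp only [hf] at h
    exact mul_left_cancel₀ ha0 (add_left_cancel h)
  have hcont : Continuous f := by
    simp only [hf]
    exact continuous_const.add (continuous_const.mul continuous_id)
  have hemb : MeasurableEmbedding f :=
    (hcont.isClosedEmbedding hinj).measurableEmbedding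
  have him : ∀ S : Set ℤ_[p], MeasurableSet S → MeasurableSet (f '' S) :=
    fun S hS => hemb.measurableSet_image.2 hS
  set σ : Measure ℤ_[p] := μ.comap f with hσ
  have hσ_apply : ∀ S : Set ℤ_[p], MeasurableSet S → σ S = μ (f '' S) :=
    fun S hS => Measure.comap_apply f hinj him μ hS
  -- the image of the whole space is the ball of radius p^{-m} around d
  have himage_univ : f '' univ = C m d := by
    ext z
    simp only [image_univ, mem_range, mem_C, hf]
    constructor
    · rintro ⟨y, rfl⟩
      have : d + a * y - d = a * y := by ring
      rw [this, norm_mul, ha]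
      calc (p : ℝ) ^ (-(m : ℤ)) * ‖y‖ ≤ (p : ℝ) ^ (-(m : ℤ)) * 1 := by
            exact mul_le_mul_of_nonneg_left y.norm_le_one (le_of_lt (zpow_pos hppos _))
        _ = (p : ℝ) ^ (-(m : ℤ)) := mul_one _
    · intro hz
      have haq : (a : ℚ_[p]) ≠ 0 := fun h => ha0 (Subtype.coe_injective (by simpa using h))
      have hy : ‖((z : ℚ_[p]) - (d : ℚ_[p])) / (a : ℚ_[p])‖ ≤ 1 := by
        rw [norm_div]
        rw [div_le_one (norm_pos_iff.mpr haq)]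
        have h1 : ‖(z : ℚ_[p]) - (d : ℚ_[p])‖ = ‖z - d‖ := by
          rw [← PadicInt.coe_sub, PadicInt.padic_norm_e_of_padicInt]
        have h2 : ‖(a : ℚ_[p])‖ = ‖a‖ := PadicInt.padic_norm_e_of_padicInt a
        rw [h1, h2, ha]
        exact hz
      refine ⟨⟨((z : ℚ_[p]) - (d : ℚ_[p])) / (a : ℚ_[p]), hy⟩, ?_⟩
      apply Subtype.coe_injective
      show (d : ℚ_[p]) + (a : ℚ_[p]) * (((z : ℚ_[p]) - (d : ℚ_[p])) / (a : ℚ_[p])) = z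
      rw [mul_comm, div_mul_cancel₀ _ haq]; ring
  -- σ is translation invariant
  have hσinv : ∀ (t : ℤ_[p]) (S : Set ℤ_[p]), MeasurableSet S →
      σ ((fun x => t + x) ⁻¹' S) = σ S := by
    intro t S hS
    have hpre : MeasurableSet ((fun x => t + x) ⁻¹' S) :=
      hS.preimage (continuous_const.add continuous_id).measurable
    rw [hσ_apply _ hpre, hσ_apply _ hS]
    have hkey : f '' ((fun x => t + x) ⁻¹' S) = (fun z => a * t + z) ⁻¹' (f '' S) := by
      ext z
      simp only [mem_image, mem_preimage, hf]
      constructor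
      · rintro ⟨x, hx, rfl⟩
        exact ⟨t + x, hx, by ring⟩
      · rintro ⟨x', hx', hx'e⟩
        refine ⟨x' - t, by simpa using hx', ?_⟩
        have : d + a * x' = a * t + (d + a * (x' - t)) := by ring
        rw [this] at hx'e
        exact add_right_injective _ hx'e
    rw [hkey, hinv (a * t) _ (him S hS)]
  -- total mass of σ
  have hσuniv : σ univ = ((p : ℝ≥0∞) ^ m)⁻¹ := by
    rw [hσ_apply _ MeasurableSet.univ, himage_univ]
    exact meas_C μ hprob hinv m d
  have hp0 : ((p : ℝ≥0∞) ^ m) ≠ 0 := by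
    apply pow_ne_zero; exact_mod_cast hp.out.ne_zero
  have hptop : ((p : ℝ≥0∞) ^ m) ≠ ⊤ := by
    apply pow_ne_top; exact ENNReal.natCast_ne_top p
  -- the rescaled measure is an invariant probability measure, hence equals μ
  set ν : Measure ℤ_[p] := ((p : ℝ≥0∞) ^ m) • σ with hν
  have hνuniv : ν univ = 1 := by
    rw [hν, Measure.smul_apply, smul_eq_mul, hσuniv, ENNReal.mul_inv_cancel hp0 hptop]
  have hνinv : ∀ (t : ℤ_[p]) (S : Set ℤ_[p]), MeasurableSet S →
      ν ((fun x => t + x) ⁻¹' S) = ν S := by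
    intro t S hS
    rw [hν, Measure.smul_apply, Measure.smul_apply, smul_eq_mul, smul_eq_mul, hσinv t S hS]
  have hνμ : ν = μ := eq_of_inv ν μ hνuniv hprob hνinv hinv
  have : ((p : ℝ≥0∞) ^ m) * σ E = μ E := by
    rw [← smul_eq_mul, ← Measure.smul_apply, ← hν, hνμ]
  rw [← hσ_apply E hE]
  calc σ E = ((p : ℝ≥0∞) ^ m)⁻¹ * (((p : ℝ≥0∞) ^ m) * σ E) := by
        rw [← mul_assoc, ENNReal.inv_mul_cancel hp0 hptop, one_mul]
    _ = ((p : ℝ≥0∞) ^ m)⁻¹ * μ E := by rw [this]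

/-- Rigidity of p-adic fractional parts: two elements of `ℤ[1/p] ∩ [0,1)` whose
difference is a p-adic integer are equal. -/
lemma frac_unique {r r' : ℚ} (h1 : ∃ a : ℤ, ∃ n : ℕ, r = (a : ℚ) / (p : ℚ) ^ n)
    (h2 : ∃ a : ℤ, ∃ n : ℕ, r' = (a : ℚ) / (p : ℚ) ^ n)
    (hr0 : 0 ≤ r) (hr1 : r < 1) (hr0' : 0 ≤ r') (hr1' : r' < 1)
    (hnorm : ‖((r : ℚ_[p]) - (r' : ℚ_[p]))‖ ≤ 1) : r = r' := by
  obtain ⟨a, n, rfl⟩ := h1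
  obtain ⟨a', n', rfl⟩ := h2
  have hpQ : (p : ℚ) ≠ 0 := by exact_mod_cast hp.out.ne_zero
  have hpP : ((p : ℚ_[p])) ≠ 0 := by exact_mod_cast hp.out.ne_zero
  set N := n + n' with hN
  set c : ℤ := a * (p : ℤ) ^ n' - a' * (p : ℤ) ^ n with hc
  have hdiff : (a : ℚ) / (p : ℚ) ^ n - (a' : ℚ) / (p : ℚ) ^ n'
      = (c : ℚ) / (p : ℚ) ^ N := by
    rw [hc, hN]
    push_cast
    field_simp
    ring
  have hdiffP : ((a : ℚ) / (p : ℚ) ^ n - (a' : ℚ) / (p : ℚ) ^ n' : ℚ) =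
      ((c : ℚ) / (p : ℚ) ^ N) := hdiff
  have hpR : (0 : ℝ) < (p : ℝ) := by exact_mod_cast hp.out.pos
  have hnorm2 : ‖((c : ℚ_[p]))‖ ≤ (p : ℝ) ^ (-(N : ℤ)) := by
    have e1 : ((((a : ℚ) / (p : ℚ) ^ n) : ℚ) : ℚ_[p]) - ((((a' : ℚ) / (p : ℚ) ^ n') : ℚ) : ℚ_[p])
        = (c : ℚ_[p]) / (p : ℚ_[p]) ^ N := by
      have := congrArg (fun x : ℚ => (x : ℚ_[p])) hdiff
      push_cast at this
      push_cast
      convert this using 2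
    rw [e1, norm_div, norm_pow, Padic.norm_p,
      div_le_one (by positivity)] at hnorm
    calc ‖(c : ℚ_[p])‖ ≤ ((p : ℝ)⁻¹) ^ N := hnorm
      _ = (p : ℝ) ^ (-(N : ℤ)) := by
          rw [inv_pow, ← zpow_natCast (p : ℝ), ← zpow_neg]
  have hdvd : ((p : ℤ) ^ N) ∣ c := by
    have := (Padic.norm_int_le_pow_iff_dvd (p := p) c N).1 hnorm2
    exact_mod_cast this
  obtain ⟨t, ht⟩ := hdvd
  have htr : (a : ℚ) / (p : ℚ) ^ n - (a' : ℚ) / (p : ℚ) ^ n' = (t : ℚ) := by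
    rw [hdiff, ht]
    push_cast
    field_simp
  have habs : |(t : ℚ)| < 1 := by
    rw [abs_lt, ← htr]
    constructor <;> linarith
  have ht0 : t = 0 := by
    have h2 : |t| < 1 := by exact_mod_cast habs
    have h3 := abs_lt.mp h2
    omega
  have : (a : ℚ) / (p : ℚ) ^ n - (a' : ℚ) / (p : ℚ) ^ n' = 0 := by
    rw [htr, ht0, Int.cast_zero]
  linarith [this]

end PadicBetaAux

open PadicBetaAux

/-- If `|q|_p > 1` then the p-adic β-transformation `T_q` is ergodic with respect to
the Haar probability measure on the compact additive group `ℤ_p`. -/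
theorem padic_beta_transform_ergodic (p : ℕ) [Fact p.Prime] (q : ℚ_[p]) (hq : 1 < ‖q‖)
    (T : ℤ_[p] → ℤ_[p]) (hT : IsPadicBetaTransform p q T)
    (μ : Measure ℤ_[p]) [μ.IsAddHaarMeasure] [IsProbabilityMeasure μ] :
    Ergodic T μ := by
  have hp : Fact p.Prime := inferInstance
  have hq0 : q ≠ 0 := by
    intro h; rw [h, norm_zero] at hq; linarith
  have hpR : (0 : ℝ) < (p : ℝ) := by exact_mod_cast hp.out.pos
  have hpR1 : (1 : ℝ) < (p : ℝ) := by exact_mod_cast hp.out.one_lt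
  -- the valuation of q is negative; extract K ≥ 1 with ‖q‖ = p^K
  have hval : ‖q‖ = (p : ℝ) ^ (-q.valuation) := Padic.norm_eq_zpow_neg_valuation hq0
  have hvneg : 0 < -q.valuation := by
    by_contra h
    push_neg at h
    have : (p : ℝ) ^ (-q.valuation) ≤ 1 := zpow_le_one_of_nonpos₀ hpR1.le h
    rw [← hval] at this; linarith
  set K : ℕ := (-q.valuation).toNat with hKdef
  have hKz : (K : ℤ) = -q.valuation := Int.toNat_of_nonneg hvneg.le
  have hK1 : 1 ≤ K := by omega
  have hqK : ‖q‖ = (p : ℝ) ^ (K : ℤ) := by rw [hval, hKz]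
  -- the inverse of q lives in ℤ_p
  have hbmem : ‖q⁻¹‖ ≤ 1 := by
    rw [norm_inv, hqK]
    rw [inv_le_one_iff₀]
    right
    exact one_le_zpow₀ hpR1.le (by positivity)
  set b : ℤ_[p] := ⟨q⁻¹, hbmem⟩ with hbdef
  have hbq : (b : ℚ_[p]) * q = 1 := by
    show q⁻¹ * q = 1
    exact inv_mul_cancel₀ hq0
  have hbnorm : ‖b‖ = (p : ℝ) ^ (-(K : ℤ)) := by
    show ‖q⁻¹‖ = _
    rw [norm_inv, hqK, ← zpow_neg]
  -- difference formula for T on nearby points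
  have T_sub : ∀ x y : ℤ_[p], ‖q * ((x : ℚ_[p]) - (y : ℚ_[p]))‖ ≤ 1 →
      ((T x : ℚ_[p]) - (T y : ℚ_[p])) = q * ((x : ℚ_[p]) - (y : ℚ_[p])) := by
    intro x y h
    obtain ⟨rx, hrx1, hrx0, hrx2, hrx3⟩ := hT x
    obtain ⟨ry, hry1, hry0, hry2, hry3⟩ := hT y
    have hTnorm : ‖(T x : ℚ_[p]) - (T y : ℚ_[p])‖ ≤ 1 := by
      rw [← PadicInt.coe_sub]
      exact PadicInt.norm_le_one _
    have hdiff : (T x : ℚ_[p]) - (T y : ℚ_[p])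
        = q * ((x : ℚ_[p]) - (y : ℚ_[p])) - ((rx : ℚ_[p]) - (ry : ℚ_[p])) := by
      rw [hrx3, hry3]; ring
    have hrnorm : ‖((rx : ℚ_[p]) - (ry : ℚ_[p]))‖ ≤ 1 := by
      have he : (rx : ℚ_[p]) - (ry : ℚ_[p])
          = q * ((x : ℚ_[p]) - (y : ℚ_[p])) - ((T x : ℚ_[p]) - (T y : ℚ_[p])) := by
        rw [hdiff]; ring
      rw [he, sub_eq_add_neg]
      refine (Padic.nonarchimedean _ _).trans (max_le h ?_)
      rwa [norm_neg]
    have : rx = ry := frac_unique hrx1 hry1 hrx0 hrx2 hry0 hry2 hrnorm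
    rw [hdiff, this]; ring
  -- T is continuous, hence measurable
  have hTcont : Continuous T := by
    rw [Metric.continuous_iff]
    intro x ε hε
    refine ⟨min (ε / (p : ℝ) ^ (K : ℤ)) ((p : ℝ) ^ (-(K : ℤ) - 1)), ?_, ?_⟩
    · apply lt_min
      · positivity
      · positivity
    · intro y hy
      have hy1 : dist y x < (p : ℝ) ^ (-(K : ℤ) - 1) := lt_of_lt_of_le hy (min_le_right _ _)
      have hy2 : dist y x < ε / (p : ℝ) ^ (K : ℤ) := lt_of_lt_of_le hy (min_le_left _ _)
      have hnq : ‖q * ((y : ℚ_[p]) - (x : ℚ_[p]))‖ ≤ 1 := by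
        rw [norm_mul, hqK]
        have hxy : ‖(y : ℚ_[p]) - (x : ℚ_[p])‖ ≤ (p : ℝ) ^ (-(K : ℤ) - 1) := by
          rw [← PadicInt.coe_sub, PadicInt.padic_norm_e_of_padicInt]
          rw [dist_eq_norm] at hy1
          exact hy1.le
        calc (p : ℝ) ^ (K : ℤ) * ‖(y : ℚ_[p]) - (x : ℚ_[p])‖
            ≤ (p : ℝ) ^ (K : ℤ) * (p : ℝ) ^ (-(K : ℤ) - 1) := by
              exact mul_le_mul_of_nonneg_left hxy (by positivity)
          _ = (p : ℝ) ^ (-(1 : ℤ)) := by rw [← zpow_add₀ (ne_of_gt hpR)]; ring_nf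
          _ ≤ 1 := by
              rw [zpow_neg, zpow_one]
              rw [inv_le_one_iff₀]; right; linarith
      have heq := T_sub y x hnq
      have : dist (T y) (T x) = (p : ℝ) ^ (K : ℤ) * dist y x := by
        rw [dist_eq_norm, dist_eq_norm]
        have h1 : ‖T y - T x‖ = ‖(T y : ℚ_[p]) - (T x : ℚ_[p])‖ := by
          rw [← PadicInt.coe_sub, PadicInt.padic_norm_e_of_padicInt]
        have h2 : ‖y - x‖ = ‖(y : ℚ_[p]) - (x : ℚ_[p])‖ := by
          rw [← PadicInt.coe_sub, PadicInt.padic_norm_e_of_padicInt]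
        rw [h1, h2, heq, norm_mul, hqK]
      rw [this]
      calc (p : ℝ) ^ (K : ℤ) * dist y x < (p : ℝ) ^ (K : ℤ) * (ε / (p : ℝ) ^ (K : ℤ)) := by
            exact mul_lt_mul_of_pos_left hy2 (by positivity)
        _ = ε := by field_simp
  have hTmeas : Measurable T := hTcont.measurable
  have hμuniv : μ Set.univ = 1 := measure_univ
  have hμinv : ∀ (t : ℤ_[p]) (E : Set ℤ_[p]), MeasurableSet E →
      μ ((fun x => t + x) ⁻¹' E) = μ E := fun t E _ => measure_preimage_add μ t E
  -- norms of differences in ℤ_p versus ℚ_p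
  have hcnorm : ∀ x y : ℤ_[p], ‖x - y‖ = ‖(x : ℚ_[p]) - (y : ℚ_[p])‖ := by
    intro x y
    rw [← PadicInt.coe_sub, PadicInt.padic_norm_e_of_padicInt]
  -- the key self-similarity lemma
  have key : ∀ n : ℕ, ∀ E : Set ℤ_[p], MeasurableSet E → ∀ c : ℤ_[p],
      μ (C (n * K) c ∩ T^[n] ⁻¹' E) = ((p : ℝ≥0∞) ^ (n * K))⁻¹ * μ E := by
    intro n
    induction n with
    | zero =>
      intro E hE c
      rw [Nat.zero_mul, C_zero, Function.iterate_zero]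
      simp
    | succ n ih =>
      intro E hE c
      have hSn_meas : MeasurableSet (C (n * K) (T c) ∩ T^[n] ⁻¹' E) :=
        (C_measurable _ _).inter (hE.preimage (hTmeas.iterate n))
      have hset : C ((n + 1) * K) c ∩ T^[n + 1] ⁻¹' E
          = (fun y => (c - b * T c) + b * y) '' (C (n * K) (T c) ∩ T^[n] ⁻¹' E) := by
        ext x
        simp only [mem_inter_iff, mem_preimage, mem_image, mem_C]
        constructor
        · rintro ⟨hxc, hTx⟩
          have hxc' : ‖(x : ℚ_[p]) - (c : ℚ_[p])‖ ≤ (p : ℝ) ^ (-(((n + 1) * K : ℕ) : ℤ)) := by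
            rw [← hcnorm]; exact hxc
          have hq1 : ‖q * ((x : ℚ_[p]) - (c : ℚ_[p]))‖ ≤ (p : ℝ) ^ (-((n * K : ℕ) : ℤ)) := by
            rw [norm_mul, hqK]
            calc (p : ℝ) ^ (K : ℤ) * ‖(x : ℚ_[p]) - (c : ℚ_[p])‖
                ≤ (p : ℝ) ^ (K : ℤ) * (p : ℝ) ^ (-(((n + 1) * K : ℕ) : ℤ)) :=
                  mul_le_mul_of_nonneg_left hxc' (by positivity)
              _ = (p : ℝ) ^ (-((n * K : ℕ) : ℤ)) := by
                  rw [← zpow_add₀ (ne_of_gt hpR)]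
                  congr 1
                  push_cast
                  ring
          have hq1' : ‖q * ((x : ℚ_[p]) - (c : ℚ_[p]))‖ ≤ 1 := by
            refine hq1.trans ?_
            apply zpow_le_one_of_nonpos₀ hpR1.le
            omega
          have heq := T_sub x c hq1'
          refine ⟨T x, ⟨?_, ?_⟩, ?_⟩
          · rw [hcnorm, heq]
            exact hq1
          · rw [← Function.iterate_succ_apply]
            exact hTx
          · apply Subtype.coe_injective
            push_cast
            have hbqc : (b : ℚ_[p]) * q = 1 := hbq
            have : (b : ℚ_[p]) * ((T x : ℚ_[p]) - (T c : ℚ_[p]))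
                = (x : ℚ_[p]) - (c : ℚ_[p]) := by
              rw [heq, ← mul_assoc, hbqc, one_mul]
            linear_combination this
        · rintro ⟨y, ⟨hyc, hyE⟩, rfl⟩
          have hxc : (((c - b * T c) + b * y : ℤ_[p]) : ℚ_[p]) - (c : ℚ_[p])
              = (b : ℚ_[p]) * ((y : ℚ_[p]) - (T c : ℚ_[p])) := by
            push_cast
            ring
          have hyc' : ‖(y : ℚ_[p]) - (T c : ℚ_[p])‖ ≤ (p : ℝ) ^ (-((n * K : ℕ) : ℤ)) := by
            rw [← hcnorm]; exact hyc
          constructor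
          · rw [hcnorm, hxc, norm_mul]
            have hb' : ‖(b : ℚ_[p])‖ = (p : ℝ) ^ (-(K : ℤ)) := by
              rw [PadicInt.padic_norm_e_of_padicInt]; exact hbnorm
            rw [hb']
            calc (p : ℝ) ^ (-(K : ℤ)) * ‖(y : ℚ_[p]) - (T c : ℚ_[p])‖
                ≤ (p : ℝ) ^ (-(K : ℤ)) * (p : ℝ) ^ (-((n * K : ℕ) : ℤ)) :=
                  mul_le_mul_of_nonneg_left hyc' (by positivity)
              _ = (p : ℝ) ^ (-(((n + 1) * K : ℕ) : ℤ)) := by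
                  rw [← zpow_add₀ (ne_of_gt hpR)]
                  congr 1
                  push_cast
                  ring
          · set x := (c - b * T c) + b * y with hxdef
            have hq1 : ‖q * ((x : ℚ_[p]) - (c : ℚ_[p]))‖ ≤ 1 := by
              have : q * ((x : ℚ_[p]) - (c : ℚ_[p])) = (y : ℚ_[p]) - (T c : ℚ_[p]) := by
                rw [hxc, ← mul_assoc, mul_comm q (b : ℚ_[p]), hbq, one_mul]
              rw [this]
              refine hyc'.trans ?_
              apply zpow_le_one_of_nonpos₀ hpR1.le
              omega
            have heq := T_sub x c hq1
            have hTxy : T x = y := by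
              apply Subtype.coe_injective
              have : (T x : ℚ_[p]) - (T c : ℚ_[p]) = (y : ℚ_[p]) - (T c : ℚ_[p]) := by
                rw [heq, hxc, ← mul_assoc, mul_comm q (b : ℚ_[p]), hbq, one_mul]
              linear_combination this
            rw [Function.iterate_succ_apply, hTxy]
            exact hyE
      rw [hset, scale μ hμuniv hμinv b (c - b * T c) K hbnorm _ hSn_meas, ih E hE (T c),
        ← mul_assoc, ← ENNReal.mul_inv (Or.inl ?_) (Or.inl ?_)]
      · congr 2
        rw [← pow_add]
        congr 1
        ring
      · apply pow_ne_zero; exact_mod_cast hp.out.ne_zero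
      · apply pow_ne_top; exact ENNReal.natCast_ne_top p
  have hp0K : ∀ m : ℕ, ((p : ℝ≥0∞) ^ m) ≠ 0 := by
    intro m; apply pow_ne_zero; exact_mod_cast hp.out.ne_zero
  have hptopK : ∀ m : ℕ, ((p : ℝ≥0∞) ^ m) ≠ ⊤ := by
    intro m; apply pow_ne_top; exact ENNReal.natCast_ne_top p
  -- measure preservation
  have hmp : MeasurePreserving T μ μ := by
    refine ⟨hTmeas, ?_⟩
    refine Measure.ext fun E hE => ?_
    rw [Measure.map_apply hTmeas hE]
    have hcover : T ⁻¹' E = ⋃ j ∈ Finset.range (p ^ K), C K (j : ℤ_[p]) ∩ T ⁻¹' E := by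
      apply subset_antisymm
      · intro x hx
        refine Set.mem_biUnion (Finset.mem_range.2 (x.appr_lt K)) ⟨mem_C_appr x K, hx⟩
      · intro x hx
        obtain ⟨j, _, hj⟩ := Set.mem_iUnion₂.1 hx
        exact hj.2
    rw [hcover, measure_biUnion_finset ?_ (fun j _ => (C_measurable _ _).inter
      (hE.preimage hTmeas))]
    · have hterm : ∀ j ∈ Finset.range (p ^ K),
          μ (C K (j : ℤ_[p]) ∩ T ⁻¹' E) = ((p : ℝ≥0∞) ^ K)⁻¹ * μ E := by
        intro j _
        have := key 1 E hE (j : ℤ_[p])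
        rwa [one_mul, Function.iterate_one] at this
      rw [Finset.sum_congr rfl hterm, Finset.sum_const, Finset.card_range, nsmul_eq_mul,
        Nat.cast_pow, ← mul_assoc, ENNReal.mul_inv_cancel (hp0K K) (hptopK K), one_mul]
    · intro i hi j hj hne
      exact (C_disjoint (Finset.mem_range.1 hi) (Finset.mem_range.1 hj) hne).mono
        inter_subset_left inter_subset_left
  refine ⟨hmp, ?_⟩
  -- pre-ergodicity
  refine ⟨fun A hA hTA => ?_⟩
  classical
  have hIter : ∀ n : ℕ, T^[n] ⁻¹' A = A := by
    intro n
    induction n with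
    | zero => simp
    | succ n ih =>
      rw [Function.iterate_succ, Set.preimage_comp, ih, hTA]
  -- A has proportional measure in every coset
  have hprop : ∀ (m : ℕ) (c : ℤ_[p]), μ (C m c ∩ A) = μ A * μ (C m c) := by
    intro m c
    set n := m with hndef
    have hmn : m ≤ n * K := Nat.le_mul_of_pos_right m (by omega) |>.trans
      (le_of_eq rfl)
    set F : Finset ℕ := (Finset.range (p ^ (n * K))).filter
      (fun j => C (n * K) ((j : ℕ) : ℤ_[p]) ⊆ C m c) with hF
    have hcover : C m c = ⋃ j ∈ F, C (n * K) ((j : ℕ) : ℤ_[p]) := by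
      apply subset_antisymm
      · intro x hx
        have hx1 : x ∈ C (n * K) ((x.appr (n * K) : ℕ) : ℤ_[p]) := mem_C_appr x (n * K)
        have hsub : C (n * K) ((x.appr (n * K) : ℕ) : ℤ_[p]) ⊆ C m c :=
          C_subset hmn hx1 hx
        refine Set.mem_biUnion ?_ hx1
        rw [hF]
        exact Finset.mem_filter.2 ⟨Finset.mem_range.2 (x.appr_lt _), hsub⟩
      · intro x hx
        obtain ⟨j, hjF, hj⟩ := Set.mem_iUnion₂.1 hx
        exact (Finset.mem_filter.1 hjF).2 hj
    have hdisj : ∀ i ∈ F, ∀ j ∈ F, i ≠ j →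
        Disjoint (C (n * K) ((i : ℕ) : ℤ_[p]) ∩ A) (C (n * K) ((j : ℕ) : ℤ_[p]) ∩ A) := by
      intro i hi j hj hne
      exact (C_disjoint (Finset.mem_range.1 (Finset.mem_filter.1 hi).1)
        (Finset.mem_range.1 (Finset.mem_filter.1 hj).1) hne).mono
        inter_subset_left inter_subset_left
    have hint : C m c ∩ A = ⋃ j ∈ F, C (n * K) ((j : ℕ) : ℤ_[p]) ∩ A := by
      rw [hcover, Set.iUnion₂_inter]
    rw [hint, measure_biUnion_finset hdisj (fun j _ => (C_measurable _ _).inter hA)]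
    have hterm : ∀ j ∈ F, μ (C (n * K) ((j : ℕ) : ℤ_[p]) ∩ A)
        = μ A * μ (C (n * K) ((j : ℕ) : ℤ_[p])) := by
      intro j _
      have h1 : C (n * K) ((j : ℕ) : ℤ_[p]) ∩ A
          = C (n * K) ((j : ℕ) : ℤ_[p]) ∩ T^[n] ⁻¹' A := by rw [hIter n]
      rw [h1, key n A hA, meas_C μ hμuniv hμinv]
      rw [mul_comm]
    rw [Finset.sum_congr rfl hterm, ← Finset.mul_sum]
    congr 1
    rw [← measure_biUnion_finset ?_ (fun j _ => C_measurable _ _), ← hcover]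
    intro i hi j hj hne
    exact C_disjoint (Finset.mem_range.1 (Finset.mem_filter.1 hi).1)
      (Finset.mem_range.1 (Finset.mem_filter.1 hj).1) hne
  -- conclude via uniqueness on the generating π-system
  have hext : μ.restrict A = (μ A) • μ := by
    haveI : IsFiniteMeasure (μ.restrict A) := inferInstance
    refine ext_of_generate_finite 𝒞 borel_eq_C piSystem_C ?_ ?_
    · rintro S ⟨m, c, rfl⟩
      rw [Measure.restrict_apply (C_measurable m c), Measure.smul_apply, smul_eq_mul]
      exact hprop m c
    · rw [Measure.restrict_apply_univ, Measure.smul_apply, smul_eq_mul, hμuniv, mul_one]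
  have hAA : μ A = μ A * μ A := by
    have := congrArg (fun ν : Measure ℤ_[p] => ν A) hext
    simpa [Measure.restrict_apply hA, Set.inter_self, smul_eq_mul] using this
  rw [Filter.eventuallyConst_set']
  rcases eq_or_ne (μ A) 0 with h0 | h0
  · exact Or.inl (ae_eq_empty.2 h0)
  · right
    have htop : μ A ≠ ⊤ := measure_ne_top μ A
    have h1 : μ A = 1 := by
      calc μ A = 1 * μ A := (one_mul _).symm
        _ = (μ A)⁻¹ * (μ A * μ A) := by rw [← mul_assoc, ENNReal.inv_mul_cancel h0 htop]
        _ = (μ A)⁻¹ * μ A := by rw [← hAA]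
        _ = 1 := ENNReal.inv_mul_cancel h0 htop
    apply ae_eq_univ.2
    have hcompl := measure_compl hA htop
    rw [hμuniv, h1] at hcompl
    simpa using hcompl
end

section
/- Let p be a prime, let U denote the set of roots of unity contained in ℚ_p, and let q ∈ ℚ_p \ U. Let Per_n(T_q) = {x ∈ ℤ_p : T_q^n(x) = x} be the set of points of period n of the p-adic β-transformation T_q(x) = q·x − ⟨q·x⟩. Then Per_n(T_q) is finite and log |Per_n(T_q)| = n·log⁺|q|_p; equivalently, the cardinality of Per_n(T_q) equals max(|q|_p, 1)^n. -/
namespace PadicBetaAux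

set_option linter.unusedSectionVars false
set_option linter.unusedVariables false
set_option linter.deprecated false

open Finset

variable {p : ℕ} [Fact p.Prime]

lemma aux_ppow : ∀ m : ℕ, padicNorm p ((p:ℚ) ^ m) = (p:ℚ) ^ (-(m:ℤ)) := by
  intro m
  induction m with
  | zero => simp [padicNorm.one]
  | succ i ih =>
    rw [pow_succ, padicNorm.mul, ih, padicNorm.padicNorm_p_of_prime]
    have hp : (1:ℚ) < p := by exact_mod_cast (Fact.out : p.Prime).one_lt
    rw [← zpow_neg_one, ← zpow_add₀ (by positivity)]
    congr 1
    push_cast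
    ring

lemma aux_int {t : ℚ} (a : ℤ) (m : ℕ) (ht : t = (a:ℚ) / (p:ℚ) ^ m)
    (h : padicNorm p t ≤ 1) : ∃ c : ℤ, t = c := by
  have hp : (0:ℚ) < p := by exact_mod_cast (Fact.out : p.Prime).pos
  have hb : (a:ℚ) = t * (p:ℚ)^m := by rw [ht]; field_simp
  have hnorm : padicNorm p a ≤ (p:ℚ) ^ (-(m:ℤ)) := by
    rw [hb, padicNorm.mul, aux_ppow]
    calc padicNorm p t * (p:ℚ)^(-(m:ℤ)) ≤ 1 * (p:ℚ)^(-(m:ℤ)) := by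
          apply mul_le_mul_of_nonneg_right h (by positivity)
      _ = (p:ℚ)^(-(m:ℤ)) := one_mul _
  have hdvd : ((p ^ m : ℕ) : ℤ) ∣ a := padicNorm.dvd_iff_norm_le.mpr hnorm
  obtain ⟨c, hc⟩ := hdvd
  refine ⟨c, ?_⟩
  rw [ht, hc]
  push_cast
  field_simp

lemma aux_int_pow (k : ℕ) {t : ℚ} (a : ℤ) (m : ℕ) (ht : t = (a : ℚ) / (p : ℚ) ^ m)
    (h : padicNorm p t ≤ (p:ℚ) ^ (k : ℤ)) : ∃ c : ℤ, t = (c : ℚ) / (p:ℚ) ^ k := by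
  have hp : (0:ℚ) < p := by exact_mod_cast (Fact.out : p.Prime).pos
  obtain ⟨c, hc⟩ := aux_int (p := p) (a * p ^ k) m
    (t := t * (p:ℚ)^k)
    (by rw [ht]; push_cast; ring)
    (by rw [padicNorm.mul, aux_ppow]
        calc padicNorm p t * (p:ℚ)^(-(k:ℤ)) ≤ (p:ℚ)^(k:ℤ) * (p:ℚ)^(-(k:ℤ)) := by
              apply mul_le_mul_of_nonneg_right h (by positivity)
          _ = 1 := by rw [← zpow_add₀ (by positivity : (p:ℚ) ≠ 0)]; simp)
  exact ⟨c, by field_simp at hc ⊢; linarith [hc]⟩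

lemma frac_unique_s3 {r s : ℚ}
    (hr : ∃ a : ℤ, ∃ m : ℕ, r = (a:ℚ)/(p:ℚ)^m)
    (hs : ∃ a : ℤ, ∃ m : ℕ, s = (a:ℚ)/(p:ℚ)^m)
    (hr0 : 0 ≤ r) (hr1 : r < 1) (hs0 : 0 ≤ s) (hs1 : s < 1)
    (h : ‖((r:ℚ_[p]) - (s:ℚ_[p]))‖ ≤ 1) : r = s := by
  obtain ⟨a, m, ha⟩ := hr
  obtain ⟨b, l, hb⟩ := hs
  have hcast : (((r - s : ℚ)) : ℚ_[p]) = (r:ℚ_[p]) - (s:ℚ_[p]) := by push_cast; ring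
  rw [← hcast, Padic.eq_padicNorm] at h
  have hpn : padicNorm p (r - s) ≤ 1 := by exact_mod_cast h
  have hp0 : (p:ℚ) ≠ 0 := Nat.cast_ne_zero.mpr (Fact.out : p.Prime).pos.ne'
  have hform : r - s = ((a * (p:ℤ)^l - b * (p:ℤ)^m : ℤ) : ℚ) / (p:ℚ)^(m+l) := by
    rw [ha, hb]
    push_cast
    field_simp
    ring
  obtain ⟨c, hc⟩ := aux_int _ _ hform hpn
  have h1 : (c:ℚ) < 1 := by rw [← hc]; linarith
  have h2 : (-1:ℚ) < c := by rw [← hc]; linarith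
  have h1' : c < 1 := by exact_mod_cast h1
  have h2' : -1 < c := by exact_mod_cast h2
  have : c = 0 := by omega
  have : r - s = 0 := by rw [hc, this]; simp
  linarith


lemma step {q : ℚ_[p]} {T : ℤ_[p] → ℤ_[p]} (hT : IsPadicBetaTransform p q T)
    (x y : ℤ_[p]) (s : ℚ) (hsf : ∃ a : ℤ, ∃ m : ℕ, s = (a:ℚ)/(p:ℚ)^m)
    (hs0 : 0 ≤ s) (hs1 : s < 1)
    (hy : q * (x:ℚ_[p]) = (s:ℚ_[p]) + (y:ℚ_[p])) : T x = y := by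
  obtain ⟨r, hrf, hr0, hr1, hTx⟩ := hT x
  have hrs : (r:ℚ_[p]) - (s:ℚ_[p]) = (y:ℚ_[p]) + (-(T x : ℚ_[p])) := by
    linear_combination hTx + hy
  have hnorm : ‖(r:ℚ_[p]) - (s:ℚ_[p])‖ ≤ 1 := by
    rw [hrs]
    refine le_trans (Padic.nonarchimedean _ _) (max_le y.2 ?_)
    rw [norm_neg]
    exact (T x).2
  have hre : r = s := frac_unique_s3 hrf hsf hr0 hr1 hs0 hs1 hnorm
  apply Subtype.ext
  rw [hTx, hre]
  linear_combination hy


/-- digit sequence -/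
def dg (p k n : ℕ) (hn : 0 < n) (v : Fin n → Fin (p ^ k)) (j : ℕ) : ℚ :=
  ((v ⟨j % n, Nat.mod_lt j hn⟩ : ℕ) : ℚ) / (p:ℚ)^k

/-- candidate periodic orbit -/
noncomputable def xsf (p : ℕ) [Fact p.Prime] (q : ℚ_[p]) (k n : ℕ) (hn : 0 < n)
    (v : Fin n → Fin (p^k)) (j : ℕ) : ℚ_[p] :=
  (1 - q⁻¹^n)⁻¹ * ∑ i ∈ Finset.range n, q⁻¹^(i+1) * ((dg p k n hn v (j+i) : ℚ) : ℚ_[p])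

lemma dg_per (k n : ℕ) (hn : 0 < n) (v : Fin n → Fin (p ^ k)) (j : ℕ) :
    dg p k n hn v (j + n) = dg p k n hn v j := by
  have h : (j + n) % n = j % n := Nat.add_mod_right j n
  simp only [dg, h]

lemma dg_nonneg (k n : ℕ) (hn : 0 < n) (v : Fin n → Fin (p ^ k)) (j : ℕ) :
    0 ≤ dg p k n hn v j := by
  unfold dg; positivity

lemma dg_lt_one (k n : ℕ) (hn : 0 < n) (v : Fin n → Fin (p ^ k)) (j : ℕ) :
    dg p k n hn v j < 1 := by
  unfold dg
  rw [div_lt_one (by have := (Fact.out : p.Prime).pos; positivity)]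
  calc ((v ⟨j % n, Nat.mod_lt j hn⟩ : ℕ) : ℚ) < ((p^k : ℕ) : ℚ) := by
        exact_mod_cast (v _).isLt
    _ = (p:ℚ)^k := by push_cast; ring

lemma dg_form (k n : ℕ) (hn : 0 < n) (v : Fin n → Fin (p ^ k)) (j : ℕ) :
    ∃ a : ℤ, ∃ m : ℕ, dg p k n hn v j = (a:ℚ)/(p:ℚ)^m :=
  ⟨(v ⟨j % n, Nat.mod_lt j hn⟩ : ℕ), k, by unfold dg; push_cast; ring⟩

lemma dg_norm (k n : ℕ) (hn : 0 < n) (v : Fin n → Fin (p ^ k)) (j : ℕ) :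
    ‖((dg p k n hn v j : ℚ) : ℚ_[p])‖ ≤ (p:ℝ)^k := by
  rw [Padic.eq_padicNorm]
  have hq : padicNorm p (dg p k n hn v j) ≤ (p:ℚ)^k := by
    unfold dg
    rw [padicNorm.div, aux_ppow, zpow_neg, zpow_natCast, div_eq_mul_inv, inv_inv]
    calc padicNorm p ((v ⟨j % n, Nat.mod_lt j hn⟩ : ℕ) : ℚ) * (p:ℚ)^k
        ≤ 1 * (p:ℚ)^k := by
          apply mul_le_mul_of_nonneg_right (padicNorm.of_nat _)
          have := (Fact.out : p.Prime).pos; positivity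
      _ = (p:ℚ)^k := one_mul _
  exact_mod_cast hq

lemma xsf_per (q : ℚ_[p]) (k n : ℕ) (hn : 0 < n) (v : Fin n → Fin (p^k)) (j : ℕ) :
    xsf p q k n hn v (j + n) = xsf p q k n hn v j := by
  unfold xsf
  congr 1
  refine Finset.sum_congr rfl fun i _ => ?_
  rw [show j + n + i = j + i + n from by omega, dg_per]

lemma xsf_key (q : ℚ_[p]) (hq0 : q ≠ 0) (k n : ℕ) (hne : (1:ℚ_[p]) - q⁻¹^n ≠ 0)
    (hn : 0 < n) (v : Fin n → Fin (p^k)) (j : ℕ) :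
    q * xsf p q k n hn v j = ((dg p k n hn v j : ℚ) : ℚ_[p]) + xsf p q k n hn v (j+1) := by
  have hqz : q * q⁻¹ = 1 := mul_inv_cancel₀ hq0
  unfold xsf
  set D : ℕ → ℚ_[p] := fun i => ((dg p k n hn v i : ℚ) : ℚ_[p]) with hD
  have htel : q * (∑ i ∈ range n, q⁻¹^(i+1) * D (j+i)) - (∑ i ∈ range n, q⁻¹^(i+1) * D (j+1+i))
      = D j - q⁻¹^n * D j := by
    rw [Finset.mul_sum, ← Finset.sum_sub_distrib]
    have hcong : ∀ i ∈ range n, q * (q⁻¹^(i+1) * D (j+i)) - q⁻¹^(i+1) * D (j+1+i)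
        = (fun i => q⁻¹^i * D (j+i)) i - (fun i => q⁻¹^i * D (j+i)) (i+1) := by
      intro i _
      simp only
      rw [show j+1+i = j+(i+1) from by omega, pow_succ]
      linear_combination (q⁻¹^i * D (j+i)) * hqz
    rw [Finset.sum_congr rfl hcong, Finset.sum_range_sub']
    simp only [pow_zero, one_mul, Nat.add_zero]
    have hDper : D (j + n) = D j := by simp only [hD]; rw [dg_per]
    rw [hDper]
  linear_combination ((1 - q⁻¹^n)⁻¹) * htel + (D j) * (inv_mul_cancel₀ hne)



lemma xsf_norm (q : ℚ_[p]) (k n : ℕ) (hcnorm : ‖(1:ℚ_[p]) - q⁻¹^n‖ = 1)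
    (hqnorm : ‖q‖ = (p:ℝ)^(k:ℕ)) (hk : 0 < k) (hn : 0 < n)
    (v : Fin n → Fin (p^k)) (j : ℕ) : ‖xsf p q k n hn v j‖ ≤ 1 := by
  have hp1 : (1:ℝ) < p := by exact_mod_cast (Fact.out : p.Prime).one_lt
  have hpk1 : (1:ℝ) ≤ (p:ℝ)^k := one_le_pow₀ hp1.le
  have hpkpos : (0:ℝ) < (p:ℝ)^k := lt_of_lt_of_le one_pos hpk1
  unfold xsf
  rw [norm_mul, norm_inv, hcnorm, inv_one, one_mul]
  refine IsUltrametricDist.norm_sum_le_of_forall_le_of_nonneg zero_le_one fun i _ => ?_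
  rw [norm_mul, norm_pow, norm_inv, hqnorm]
  calc (((p:ℝ)^k)⁻¹)^(i+1) * ‖((dg p k n hn v (j+i) : ℚ) : ℚ_[p])‖
      ≤ ((p:ℝ)^k)⁻¹ * (p:ℝ)^k := by
        refine mul_le_mul ?_ (dg_norm k n hn v (j+i)) (norm_nonneg _) (by positivity)
        calc (((p:ℝ)^k)⁻¹)^(i+1) ≤ (((p:ℝ)^k)⁻¹)^1 :=
              pow_le_pow_of_le_one (by positivity) (inv_le_one_of_one_le₀ hpk1) (by omega)
          _ = ((p:ℝ)^k)⁻¹ := pow_one _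
    _ = 1 := inv_mul_cancel₀ (ne_of_gt hpkpos)

lemma case_big {q : ℚ_[p]} {T : ℤ_[p] → ℤ_[p]} (hT : IsPadicBetaTransform p q T)
    (hq : ∀ m : ℕ, 0 < m → q ^ m ≠ 1)
    (k : ℕ) (hqnorm : ‖q‖ = (p:ℝ)^(k:ℕ)) (hk : 0 < k)
    (n : ℕ) (hn : 0 < n) :
    ∃ G : (Fin n → Fin (p^k)) → {x : ℤ_[p] | T^[n] x = x}, Function.Bijective G := by
  classical
  have hp1 : (1:ℝ) < p := by exact_mod_cast (Fact.out : p.Prime).one_lt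
  have hpk1 : (1:ℝ) < (p:ℝ)^k := one_lt_pow₀ hp1 hk.ne'
  have hpkpos : (0:ℝ) < (p:ℝ)^k := lt_trans one_pos hpk1
  have hq0 : q ≠ 0 := fun h => by rw [h, norm_zero] at hqnorm; exact (ne_of_gt hpkpos) hqnorm.symm
  have hqinv_lt : ‖q⁻¹‖ < 1 := by rw [norm_inv, hqnorm]; exact inv_lt_one_of_one_lt₀ hpk1
  have hzlt : ‖q⁻¹^n‖ < 1 := by
    rw [norm_pow]; exact pow_lt_one₀ (norm_nonneg _) hqinv_lt hn.ne'
  have hne : (1:ℚ_[p]) - q⁻¹^n ≠ 0 := by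
    intro h
    rw [sub_eq_zero] at h
    rw [← h, norm_one] at hzlt
    exact lt_irrefl _ hzlt
  have hcnorm : ‖(1:ℚ_[p]) - q⁻¹^n‖ = 1 := by
    refine le_antisymm ?_ ?_
    · have h1 : (1:ℚ_[p]) - q⁻¹^n = 1 + (-(q⁻¹^n)) := by ring
      rw [h1]
      refine le_trans (Padic.nonarchimedean _ _) ?_
      rw [norm_one, norm_neg]
      exact max_le le_rfl hzlt.le
    · by_contra hlt
      push_neg at hlt
      have h2 : ‖(1:ℚ_[p])‖ ≤ max ‖(1:ℚ_[p]) - q⁻¹^n‖ ‖q⁻¹^n‖ := by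
        calc ‖(1:ℚ_[p])‖ = ‖((1:ℚ_[p]) - q⁻¹^n) + q⁻¹^n‖ := by ring_nf
          _ ≤ _ := Padic.nonarchimedean _ _
      rw [norm_one] at h2
      exact absurd h2 (not_le.mpr (max_lt hlt hzlt))
  have hxnorm : ∀ (v : Fin n → Fin (p^k)) (j : ℕ), ‖xsf p q k n hn v j‖ ≤ 1 :=
    fun v j => xsf_norm q k n hcnorm hqnorm hk hn v j
  set X : (Fin n → Fin (p^k)) → ℕ → ℤ_[p] := fun v j => ⟨xsf p q k n hn v j, hxnorm v j⟩ with hX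
  have hstep : ∀ v j, T (X v j) = X v (j+1) := by
    intro v j
    refine step hT _ _ (dg p k n hn v j) (dg_form k n hn v j) (dg_nonneg k n hn v j)
      (dg_lt_one k n hn v j) ?_
    show q * xsf p q k n hn v j = _ + xsf p q k n hn v (j+1)
    exact xsf_key q hq0 k n hne hn v j
  have hiter : ∀ v i, T^[i] (X v 0) = X v i := by
    intro v i
    induction i with
    | zero => rfl
    | succ i ih => rw [Function.iterate_succ_apply', ih, hstep]
  have hfix : ∀ v, T^[n] (X v 0) = X v 0 := by
    intro v
    rw [hiter v n]
    apply Subtype.ext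
    show xsf p q k n hn v n = xsf p q k n hn v 0
    have h := xsf_per q k n hn v 0
    rwa [zero_add] at h
  refine ⟨fun v => ⟨X v 0, hfix v⟩, ?_, ?_⟩
  · intro v v' h
    have h0 : X v 0 = X v' 0 := by
      simpa using congrArg Subtype.val h
    have hall : ∀ j, X v j = X v' j := by
      intro j; rw [← hiter v j, ← hiter v' j, h0]
    have ex : ∀ j, xsf p q k n hn v j = xsf p q k n hn v' j :=
      fun j => congrArg Subtype.val (hall j)
    funext j
    have hj : (j:ℕ) % n = (j:ℕ) := Nat.mod_eq_of_lt j.isLt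
    have e1 : ((dg p k n hn v j : ℚ) : ℚ_[p]) = ((dg p k n hn v' j : ℚ) : ℚ_[p]) := by
      have k1 := xsf_key q hq0 k n hne hn v (j:ℕ)
      have k2 := xsf_key q hq0 k n hne hn v' (j:ℕ)
      rw [ex (j:ℕ), ex ((j:ℕ)+1)] at k1
      exact add_right_cancel (k1.symm.trans k2)
    have e2 : dg p k n hn v (j:ℕ) = dg p k n hn v' (j:ℕ) := by exact_mod_cast e1
    unfold dg at e2
    have hpk0 : ((p:ℚ)^k) ≠ 0 := by
      have := (Fact.out : p.Prime).pos; positivity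
    rw [div_eq_div_iff hpk0 hpk0] at e2
    have e3 : (v ⟨(j:ℕ)%n, Nat.mod_lt _ hn⟩ : ℕ) = (v' ⟨(j:ℕ)%n, Nat.mod_lt _ hn⟩ : ℕ) := by
      exact_mod_cast mul_right_cancel₀ hpk0 e2
    have hjj : (⟨(j:ℕ)%n, Nat.mod_lt _ hn⟩ : Fin n) = j := Fin.ext hj
    rw [hjj] at e3
    exact Fin.val_injective e3
  · rintro ⟨y, hy⟩
    simp only [Set.mem_setOf_eq] at hy
    set ρ : ℤ_[p] → ℚ := fun z => Classical.choose (hT z) with hρdef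
    have hρ : ∀ z : ℤ_[p], (∃ a : ℤ, ∃ m : ℕ, ρ z = (a:ℚ)/(p:ℚ)^m) ∧ 0 ≤ ρ z ∧ ρ z < 1 ∧
        ((T z : ℚ_[p]) = q * (z:ℚ_[p]) - ((ρ z : ℚ) : ℚ_[p])) := fun z => Classical.choose_spec (hT z)
    have hpkQ : (0:ℚ) < (p:ℚ)^k := by
      have := (Fact.out : p.Prime).pos; positivity
    have hρnorm : ∀ z : ℤ_[p], padicNorm p (ρ z) ≤ (p:ℚ)^(k:ℤ) := by
      intro z
      obtain ⟨hf, h0, h1, he⟩ := hρ z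
      have hcast : ((ρ z : ℚ) : ℚ_[p]) = q * (z:ℚ_[p]) - (T z : ℚ_[p]) := by rw [he]; ring
      have hb : ‖((ρ z:ℚ):ℚ_[p])‖ ≤ (p:ℝ)^k := by
        rw [hcast, sub_eq_add_neg]
        refine le_trans (Padic.nonarchimedean _ _) (max_le ?_ ?_)
        · rw [norm_mul]
          calc ‖q‖ * ‖(z:ℚ_[p])‖ ≤ ‖q‖ * 1 := mul_le_mul_of_nonneg_left z.2 (norm_nonneg q)
            _ = (p:ℝ)^k := by rw [mul_one, hqnorm]
        · rw [norm_neg]; exact le_trans (T z).2 hpk1.le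
      rw [Padic.eq_padicNorm] at hb
      rw [zpow_natCast]
      exact_mod_cast hb
    have hc : ∀ z : ℤ_[p], ∃ c : ℤ, ρ z = (c:ℚ)/(p:ℚ)^k := by
      intro z
      obtain ⟨⟨a, m, hf⟩, -, -, -⟩ := hρ z
      exact aux_int_pow k a m hf (hρnorm z)
    set c : ℤ_[p] → ℤ := fun z => Classical.choose (hc z) with hcdef
    have hcspec : ∀ z, ρ z = ((c z : ℤ):ℚ)/(p:ℚ)^k := fun z => Classical.choose_spec (hc z)
    have hc0 : ∀ z, 0 ≤ c z := by
      intro z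
      have h0 := (hρ z).2.1
      rw [hcspec z] at h0
      have hq0' : (0:ℚ) ≤ (c z:ℚ) := by
        by_contra hneg
        push_neg at hneg
        have : ((c z:ℤ):ℚ)/(p:ℚ)^k < 0 := div_neg_of_neg_of_pos hneg hpkQ
        linarith
      exact_mod_cast hq0'
    have hclt : ∀ z, c z < (p:ℤ)^k := by
      intro z
      have h1 := (hρ z).2.2.1
      rw [hcspec z, div_lt_one hpkQ] at h1
      exact_mod_cast h1
    set Y : ℕ → ℤ_[p] := fun j => T^[j] y with hYdef
    have hYstep : ∀ j, T (Y j) = Y (j+1) := fun j => (Function.iterate_succ_apply' T j y).symm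
    have hYmul : ∀ d : ℕ, T^[n*d] y = y := by
      intro d
      induction d with
      | zero => rfl
      | succ d ih => rw [Nat.mul_succ, Function.iterate_add_apply, hy, ih]
    have hYmod : ∀ j, Y j = Y (j % n) := by
      intro j
      show T^[j] y = T^[j % n] y
      conv_lhs => rw [← Nat.mod_add_div j n]
      rw [Function.iterate_add_apply, hYmul (j / n)]
    have hvlt : ∀ jf : Fin n, (c (Y (jf:ℕ))).toNat < p^k := by
      intro jf
      have h1 := hclt (Y (jf:ℕ))
      have h0 := hc0 (Y (jf:ℕ))
      have : ((p:ℤ))^k = ((p^k : ℕ) : ℤ) := by push_cast; ring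
      omega
    set v : Fin n → Fin (p^k) := fun jf => ⟨(c (Y (jf:ℕ))).toNat, hvlt jf⟩ with hvdef
    have hdg : ∀ j, dg p k n hn v j = ρ (Y j) := by
      intro j
      have h0 := hc0 (Y (j % n))
      rw [hYmod j, hcspec (Y (j % n))]
      unfold dg
      simp only [hvdef]
      congr 1
      exact_mod_cast congrArg (fun z : ℤ => (z:ℚ)) (Int.toNat_of_nonneg h0)
    have hYrec : ∀ j, q * ((Y j : ℚ_[p])) = ((dg p k n hn v j : ℚ):ℚ_[p]) + (Y (j+1) : ℚ_[p]) := by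
      intro j
      have he := (hρ (Y j)).2.2.2
      rw [hdg j]
      have hYc : (T (Y j) : ℚ_[p]) = (Y (j+1) : ℚ_[p]) := congrArg _ (hYstep j)
      rw [← hYc, he]
      ring
    have hXrec := xsf_key q hq0 k n hne hn v
    have hdiff : ∀ i : ℕ, q^i * (xsf p q k n hn v 0 - (Y 0 : ℚ_[p]))
        = xsf p q k n hn v i - (Y i : ℚ_[p]) := by
      intro i
      induction i with
      | zero => simp
      | succ i ih =>
        calc q^(i+1) * (xsf p q k n hn v 0 - (Y 0 : ℚ_[p]))
            = q * (q^i * (xsf p q k n hn v 0 - (Y 0 : ℚ_[p]))) := by ring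
          _ = q * (xsf p q k n hn v i - (Y i : ℚ_[p])) := by rw [ih]
          _ = (((dg p k n hn v i : ℚ):ℚ_[p]) + xsf p q k n hn v (i+1))
              - (((dg p k n hn v i : ℚ):ℚ_[p]) + (Y (i+1) : ℚ_[p])) := by
                rw [mul_sub, hXrec i, hYrec i]
          _ = xsf p q k n hn v (i+1) - (Y (i+1) : ℚ_[p]) := by ring
    have hqn1 : q^n - 1 ≠ 0 := sub_ne_zero.mpr (hq n hn)
    have hzero : xsf p q k n hn v 0 = (Y 0 : ℚ_[p]) := by
      have h1 := hdiff n
      have h2 : xsf p q k n hn v n = xsf p q k n hn v 0 := by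
        have h := xsf_per q k n hn v 0
        rwa [zero_add] at h
      have h3 : (Y n : ℚ_[p]) = (Y 0 : ℚ_[p]) := by
        have : Y n = Y 0 := hy
        rw [this]
      rw [h2, h3] at h1
      have h4 : (q^n - 1) * (xsf p q k n hn v 0 - (Y 0 : ℚ_[p])) = 0 := by linear_combination h1
      rcases mul_eq_zero.mp h4 with h5 | h5
      · exact absurd h5 hqn1
      · exact sub_eq_zero.mp h5
    refine ⟨v, ?_⟩
    apply Subtype.ext
    show X v 0 = y
    apply Subtype.ext
    exact hzero


lemma case_small {q : ℚ_[p]} {T : ℤ_[p] → ℤ_[p]} (hT : IsPadicBetaTransform p q T)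
    (hq : ∀ m : ℕ, 0 < m → q ^ m ≠ 1) (hqle : ‖q‖ ≤ 1)
    (n : ℕ) (hn : 0 < n) : {x : ℤ_[p] | T^[n] x = x} = {0} := by
  have hTx : ∀ x : ℤ_[p], ((T x : ℚ_[p])) = q * (x:ℚ_[p]) := by
    intro x
    obtain ⟨r, hrf, hr0, hr1, hTx⟩ := hT x
    have hnorm : ‖(r:ℚ_[p]) - ((0:ℚ):ℚ_[p])‖ ≤ 1 := by
      have : (r:ℚ_[p]) - ((0:ℚ):ℚ_[p]) = q * (x:ℚ_[p]) + (-(T x : ℚ_[p])) := by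
        push_cast
        linear_combination hTx
      rw [this]
      refine le_trans (Padic.nonarchimedean _ _) (max_le ?_ ?_)
      · rw [norm_mul]
        calc ‖q‖ * ‖(x:ℚ_[p])‖ ≤ 1 * 1 :=
          mul_le_mul hqle x.2 (norm_nonneg _) zero_le_one
          _ = 1 := one_mul _
      · rw [norm_neg]; exact (T x).2
    have hr : r = 0 :=
      frac_unique_s3 hrf ⟨0, 0, by simp⟩ hr0 hr1 le_rfl one_pos hnorm
    rw [hTx, hr]
    push_cast
    ring
  have hiter : ∀ (i : ℕ) (x : ℤ_[p]), ((T^[i] x : ℚ_[p])) = q^i * (x:ℚ_[p]) := by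
    intro i
    induction i with
    | zero => intro x; simp
    | succ i ih =>
      intro x
      rw [Function.iterate_succ_apply', hTx, ih, pow_succ]
      ring
  ext x
  simp only [Set.mem_setOf_eq, Set.mem_singleton_iff]
  constructor
  · intro h
    have h1 : q^n * (x:ℚ_[p]) = (x:ℚ_[p]) := by
      rw [← hiter n x, h]
    have h2 : (q^n - 1) * (x:ℚ_[p]) = 0 := by linear_combination h1
    rcases mul_eq_zero.mp h2 with h3 | h3
    · exact absurd (sub_eq_zero.mp h3) (hq n hn)
    · exact Subtype.ext h3
  · rintro rfl
    apply Subtype.ext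
    rw [hiter n 0]
    simp


end PadicBetaAux

open PadicBetaAux in
/-- If `q ∈ ℚ_p` is not a root of unity, then the set `Per_n(T_q)` of points of
period `n` of the p-adic β-transformation `T_q` is finite, its cardinality equals
`max(|q|_p, 1)^n`, and equivalently `log |Per_n(T_q)| = n · log⁺|q|_p`. -/
theorem card_periodicPts_padic_beta_transform (p : ℕ) [Fact p.Prime] (q : ℚ_[p])
    (hq : ∀ m : ℕ, 0 < m → q ^ m ≠ 1)
    (T : ℤ_[p] → ℤ_[p]) (hT : IsPadicBetaTransform p q T)
    (n : ℕ) (hn : 0 < n) :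
    {x : ℤ_[p] | T^[n] x = x}.Finite ∧
      (Nat.card {x : ℤ_[p] | T^[n] x = x} : ℝ) = (max ‖q‖ 1) ^ n ∧
      Real.log (Nat.card {x : ℤ_[p] | T^[n] x = x}) = n * max (Real.log ‖q‖) 0 := by
  have hp1 : (1:ℝ) < p := by exact_mod_cast (Fact.out : p.Prime).one_lt
  rcases le_or_gt ‖q‖ 1 with hle | hgt
  · have hset := case_small hT hq hle n hn
    rw [hset]
    have hcard : Nat.card ({0} : Set ℤ_[p]) = 1 := by simp
    rw [hcard]
    refine ⟨Set.finite_singleton 0, ?_, ?_⟩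
    · rw [max_eq_right hle]
      simp
    · have hlog : Real.log ‖q‖ ≤ 0 := Real.log_nonpos (norm_nonneg q) hle
      rw [Nat.cast_one, Real.log_one, max_eq_right hlog, mul_zero]
  · -- ‖q‖ = p^k with k ≥ 1
    have hq0 : q ≠ 0 := by
      intro h; rw [h, norm_zero] at hgt; linarith
    obtain ⟨k, hk, hqnorm⟩ : ∃ k : ℕ, 0 < k ∧ ‖q‖ = (p:ℝ)^(k:ℕ) := by
      have hval := Padic.norm_eq_zpow_neg_valuation hq0
      set m : ℤ := -q.valuation with hm
      have hmpos : 0 < m := by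
        by_contra hcon
        push_neg at hcon
        have : (p:ℝ)^m ≤ 1 := zpow_le_one_of_nonpos₀ hp1.le hcon
        rw [← hval] at this
        linarith
      refine ⟨m.toNat, by omega, ?_⟩
      rw [hval, ← zpow_natCast]
      congr 1
      omega
    obtain ⟨G, hG⟩ := case_big hT hq k hqnorm hk n hn
    have hfin : Finite {x : ℤ_[p] | T^[n] x = x} :=
      Finite.of_surjective G hG.surjective
    have hcard : Nat.card {x : ℤ_[p] | T^[n] x = x} = (p^k)^n := by
      rw [← Nat.card_eq_of_bijective G hG]
      simp [Nat.card_eq_fintype_card]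
    have hmax : max ‖q‖ 1 = (p:ℝ)^k := by rw [max_eq_left hgt.le, hqnorm]
    have hcardR : (Nat.card {x : ℤ_[p] | T^[n] x = x} : ℝ) = ((p:ℝ)^k)^n := by
      rw [hcard]; push_cast; ring
    refine ⟨Set.toFinite _, ?_, ?_⟩
    · rw [hcardR, hmax]
    · have hlogpos : 0 ≤ Real.log ‖q‖ := Real.log_nonneg hgt.le
      rw [hcardR, max_eq_left hlogpos, hqnorm, Real.log_pow]
end

section
/- Uniform rigidity and weak mixing are mutually exclusive notions on a Cantor set: if T is a homeomorphism of a Cantor set K (a nonempty compact, totally disconnected, perfect metric space) preserving a Borel probability measure μ that is not a Dirac point mass, and T is weakly mixing with respect to μ (i.e., T × T is ergodic with respect to μ × μ), then T is not uniformly rigid. -/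
open MeasureTheory Filter Set

/-- A self-map `T` of a metric space is uniformly rigid if there is a sequence
`n_k → ∞` with `sup_x d(T^{n_k} x, x) → 0`. -/
def UniformlyRigid {K : Type*} [MetricSpace K] (T : K → K) : Prop :=
  ∃ u : ℕ → ℕ, StrictMono u ∧
    Filter.Tendsto (fun k => ⨆ x : K, dist (T^[u k] x) x) Filter.atTop (nhds 0)

lemma exists_iterate_fix {K : Type*} [MetricSpace K] [CompactSpace K] [Nonempty K]
    {T : K → K} (hT : Continuous T) (hUR : UniformlyRigid T)
    {A : Set K} (hA : IsClopen A) (hne : A.Nonempty) (hnec : Aᶜ.Nonempty) :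
    ∃ n, 1 ≤ n ∧ ∀ x, T^[n] x ∈ A ↔ x ∈ A := by
  obtain ⟨u, hu, hconv⟩ := hUR
  set φ : K → ℝ := fun x => Metric.infDist x Aᶜ with hφ
  have hφc : Continuous φ := Metric.continuous_infDist_pt Aᶜ
  have hAcomp : IsCompact A := hA.isClosed.isCompact
  have hAc : IsClosed Aᶜ := hA.isOpen.isClosed_compl
  obtain ⟨z, hzA, hz⟩ := hAcomp.exists_isMinOn hne hφc.continuousOn
  set ε : ℝ := φ z with hεdef
  have hε : 0 < ε := ((hAc.notMem_iff_infDist_pos hnec).mp (by simpa using hzA))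
  have h1 : ∀ᶠ k in atTop, (⨆ x : K, dist (T^[u k] x) x) < ε :=
    hconv.eventually (gt_mem_nhds hε)
  obtain ⟨k, hk, hk1⟩ := (h1.and (eventually_ge_atTop 1)).exists
  refine ⟨u k, le_trans hk1 hu.le_apply, fun x => ?_⟩
  have hbdd : BddAbove (Set.range fun x : K => dist (T^[u k] x) x) := by
    rw [← Set.image_univ]
    exact (isCompact_univ.bddAbove_image ((hT.iterate (u k)).dist continuous_id).continuousOn)
  have hdist : ∀ x : K, dist (T^[u k] x) x < ε := fun x =>
    lt_of_le_of_lt (le_ciSup hbdd x) hk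
  constructor
  · intro h
    by_contra hx
    have h2 : φ (T^[u k] x) ≤ dist (T^[u k] x) x := Metric.infDist_le_dist_of_mem hx
    have h3 : ε ≤ φ (T^[u k] x) := hz h
    exact absurd (hdist x) (not_lt.mpr (le_trans h3 h2))
  · intro h
    by_contra hx
    have h2 : φ x ≤ dist x (T^[u k] x) := Metric.infDist_le_dist_of_mem hx
    have h3 : ε ≤ φ x := hz h
    rw [dist_comm] at h2
    exact absurd (hdist x) (not_lt.mpr (le_trans h3 h2))

lemma exists_clopen_measure_pos_lt_one {K : Type*} [MetricSpace K] [CompactSpace K] [Nonempty K]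
    [TotallyDisconnectedSpace K] [MeasurableSpace K] [BorelSpace K]
    (μ : Measure K) [IsProbabilityMeasure μ] (hdirac : ∀ x : K, μ ≠ Measure.dirac x) :
    ∃ A : Set K, IsClopen A ∧ 0 < μ A ∧ μ A < 1 := by
  by_contra hcon
  push_neg at hcon
  have h01 : ∀ A : Set K, IsClopen A → μ A = 0 ∨ μ A = 1 := by
    intro A hA
    rcases eq_or_lt_of_le (zero_le : 0 ≤ μ A) with h0 | h0
    · exact Or.inl h0.symm
    · exact Or.inr (le_antisymm prob_le_one (hcon A hA h0))
  set F : Set (Set K) := {A | IsClopen A ∧ μ A = 1} with hF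
  have hunivF : (Set.univ : Set K) ∈ F := ⟨isClopen_univ, measure_univ⟩
  have hFdir : DirectedOn (· ⊇ ·) F := by
    rintro A ⟨hA, hA1⟩ B ⟨hB, hB1⟩
    refine ⟨A ∩ B, ⟨hA.inter hB, ?_⟩, inter_subset_left, inter_subset_right⟩
    rw [← prob_compl_eq_zero_iff (hA.inter hB).isClosed.measurableSet, Set.compl_inter]
    refine measure_union_null ?_ ?_
    · exact (prob_compl_eq_zero_iff hA.isClosed.measurableSet).mpr hA1
    · exact (prob_compl_eq_zero_iff hB.isClosed.measurableSet).mpr hB1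
  have : Nonempty F := ⟨⟨Set.univ, hunivF⟩⟩
  obtain ⟨x₀, hx₀⟩ := IsCompact.nonempty_sInter_of_directed_nonempty_isCompact_isClosed hFdir
    (fun U hU => nonempty_of_measure_ne_zero (by rw [hU.2]; exact one_ne_zero))
    (fun U hU => hU.1.isClosed.isCompact) (fun U hU => hU.1.isClosed)
  -- every open neighborhood of x₀ has measure 1
  have hopen : ∀ U : Set K, IsOpen U → x₀ ∈ U → μ U = 1 := by
    intro U hU hxU
    obtain ⟨V, hV, hxV, hVU⟩ := compact_exists_isClopen_in_isOpen hU hxU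
    rcases h01 V hV with h0 | h1
    · exfalso
      have : Vᶜ ∈ F := ⟨hV.compl, (prob_compl_eq_zero_iff hV.compl.isClosed.measurableSet).mp
        (by rwa [compl_compl])⟩
      exact (hx₀ _ this) hxV
    · exact le_antisymm prob_le_one (h1 ▸ measure_mono hVU)
  -- μ {x₀} = 1
  have hsing : μ {x₀} = 1 := by
    have heq : ({x₀} : Set K) = ⋂ n : ℕ, Metric.ball x₀ (1 / (n + 1)) := by
      ext y
      simp only [Set.mem_singleton_iff, Set.mem_iInter, Metric.mem_ball]
      constructor
      · rintro rfl n; simp; positivity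
      · intro h
        have : dist y x₀ ≤ 0 := by
          by_contra hd
          push_neg at hd
          obtain ⟨n, hn⟩ := exists_nat_one_div_lt hd
          exact absurd (h n) (not_lt.mpr hn.le)
        exact dist_le_zero.mp this
    have hb : ∀ n : ℕ, μ (Metric.ball x₀ (1 / (n + 1))) = 1 := fun n =>
      hopen _ Metric.isOpen_ball (Metric.mem_ball_self (by positivity))
    rw [heq, Directed.measure_iInter]
    · simp only [hb, iInf_const]
    · exact fun n => (Metric.isOpen_ball.measurableSet).nullMeasurableSet
    · intro m n
      refine ⟨max m n, Metric.ball_subset_ball ?_, Metric.ball_subset_ball ?_⟩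
      · gcongr <;> simp [Nat.cast_le.mpr (le_max_left m n)]
      · gcongr <;> simp [Nat.cast_le.mpr (le_max_right m n)]
    · exact ⟨0, by simp [measure_ne_top]⟩
  refine hdirac x₀ (Measure.ext fun s hs => ?_)
  rw [Measure.dirac_apply' _ hs]
  by_cases hxs : x₀ ∈ s
  · have h1 : (1 : ENNReal) ≤ μ s := hsing ▸ measure_mono (Set.singleton_subset_iff.mpr hxs)
    simp [Set.indicator_of_mem hxs, le_antisymm prob_le_one h1]
  · have h0 : μ s ≤ μ ({x₀}ᶜ) := measure_mono (Set.subset_compl_singleton_iff.mpr hxs)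
    rw [prob_compl_eq_zero_iff (measurableSet_singleton x₀) |>.mpr hsing] at h0
    simp [Set.indicator_of_notMem hxs, le_antisymm h0 zero_le]

lemma eigenfunction_ae_const {K : Type*} [MeasurableSpace K]
    (μ : Measure K) [IsProbabilityMeasure μ] {T : K → K}
    (hTm : Measurable T) (hpres : MeasurePreserving T μ μ)
    (hwm : Ergodic (fun q : K × K => (T q.1, T q.2)) (μ.prod μ))
    {g : K → ℂ} (hgm : Measurable g) {c : ℂ} (hc : c * (starRingEnd ℂ) c = 1)
    (heig : ∀ x, g (T x) = c * g x) :
    ∃ a : ℂ, (g =ᵐ[μ] fun _ => a) ∧ (c = 1 ∨ a = 0) := by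
  set H : K × K → ℂ := fun q => g q.1 * (starRingEnd ℂ) (g q.2) with hH
  have hHm : Measurable H :=
    (hgm.comp measurable_fst).mul
      (Complex.continuous_conj.measurable.comp (hgm.comp measurable_snd))
  have hHinv : H ∘ (fun q : K × K => (T q.1, T q.2)) = H := by
    funext q
    show g (T q.1) * (starRingEnd ℂ) (g (T q.2)) = g q.1 * (starRingEnd ℂ) (g q.2)
    rw [heig, heig, map_mul]
    calc c * g q.1 * ((starRingEnd ℂ) c * (starRingEnd ℂ) (g q.2))
        = (c * (starRingEnd ℂ) c) * (g q.1 * (starRingEnd ℂ) (g q.2)) := by ring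
      _ = _ := by rw [hc, one_mul]
  obtain ⟨k, hk⟩ := hwm.toPreErgodic.ae_eq_const_of_ae_eq_comp hHm hHinv
  by_cases hg0 : g =ᵐ[μ] fun _ => (0 : ℂ)
  · exact ⟨0, hg0, Or.inr rfl⟩
  · have hae := Measure.ae_ae_of_ae_prod hk
    have hpos : μ {x | g x ≠ 0} ≠ 0 := by
      intro h0
      refine hg0 ?_
      rw [Filter.EventuallyEq, ae_iff]
      exact h0
    obtain ⟨x₀, hx₀ne, hx₀⟩ : ∃ x₀, g x₀ ≠ 0 ∧ ∀ᵐ y ∂μ, H (x₀, y) = k := by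
      by_contra hcon
      push_neg at hcon
      refine hpos (measure_mono_null ?_ (ae_iff.mp hae))
      intro x hx
      simp only [Set.mem_setOf_eq]
      exact fun h => hcon x hx (h.mono fun y hy hne => hne hy)
    set a : ℂ := (starRingEnd ℂ) k / (starRingEnd ℂ) (g x₀) with ha
    have hga : g =ᵐ[μ] fun _ => a := by
      refine hx₀.mono fun y hy => ?_
      simp only [hH] at hy
      have : (starRingEnd ℂ) (g y) = k / g x₀ := by
        field_simp at hy ⊢
        linear_combination hy
      calc g y = (starRingEnd ℂ) ((starRingEnd ℂ) (g y)) := by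
            rw [Complex.conj_conj]
        _ = a := by rw [this, ha, map_div₀]
    refine ⟨a, hga, ?_⟩
    by_cases hc1 : c = 1
    · exact Or.inl hc1
    · right
      have h1 : g ∘ T =ᵐ[μ] (fun _ => a) ∘ T :=
        ae_eq_comp hTm.aemeasurable (by rwa [hpres.map_eq])
      have h2 : g ∘ T =ᵐ[μ] fun _ => c * a := hga.mono fun x hx => by
        simp only [Function.comp_apply, heig, hx]
      have h3 : (fun _ : K => a) =ᵐ[μ] fun _ => c * a := h1.symm.trans h2
      have hne : (ae μ).NeBot := ae_neBot.mpr (IsProbabilityMeasure.ne_zero μ)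
      obtain ⟨x, hx⟩ := h3.exists
      have : a * (1 - c) = 0 := by linear_combination hx
      rcases mul_eq_zero.mp this with h | h
      · exact h
      · exact absurd (by linear_combination -h) hc1

lemma aux_shift (n : ℕ) (ζ : ℂ) (hζ0 : ζ ≠ 0) (hζn : ζ ^ n = 1) (m : ℕ) (F : ℕ → ℂ)
    (hF : F n = F 0) :
    ∑ i ∈ Finset.range n, ζ ^ (m * i) * F (i + 1)
      = ζ⁻¹ ^ m * ∑ i ∈ Finset.range n, ζ ^ (m * i) * F i := by
  have key : ∑ i ∈ Finset.range n, ζ ^ (m * (i + 1)) * F (i + 1)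
      = ∑ i ∈ Finset.range n, ζ ^ (m * i) * F i := by
    have h1 := Finset.sum_range_succ' (fun j => ζ ^ (m * j) * F j) n
    have h2 := Finset.sum_range_succ (fun j => ζ ^ (m * j) * F j) n
    have hlast : ζ ^ (m * n) * F n = ζ ^ (m * 0) * F 0 := by
      rw [hF, mul_comm m n, pow_mul, hζn, one_pow, Nat.mul_zero, pow_zero]
    linear_combination h2 - h1 + hlast
  calc ∑ i ∈ Finset.range n, ζ ^ (m * i) * F (i + 1)
      = ζ⁻¹ ^ m * ∑ i ∈ Finset.range n, ζ ^ (m * (i + 1)) * F (i + 1) := by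
        rw [Finset.mul_sum]
        refine Finset.sum_congr rfl fun i _ => ?_
        rw [Nat.mul_succ, pow_add, inv_pow]
        have hne : ζ ^ m ≠ 0 := pow_ne_zero _ hζ0
        field_simp
    _ = ζ⁻¹ ^ m * ∑ i ∈ Finset.range n, ζ ^ (m * i) * F i := by rw [key]

lemma aux_fourier (n : ℕ) (hn : 1 ≤ n) (ζ : ℂ) (hprim : IsPrimitiveRoot ζ n) (F : ℕ → ℂ) :
    ∑ m ∈ Finset.range n, ∑ i ∈ Finset.range n, ζ ^ (m * i) * F i = n * F 0 := by
  rw [Finset.sum_comm]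
  have hinner : ∀ i ∈ Finset.range n,
      ∑ m ∈ Finset.range n, ζ ^ (m * i) * F i = if i = 0 then (n : ℂ) * F 0 else 0 := by
    intro i hi
    rw [← Finset.sum_mul]
    have hswap : ∑ m ∈ Finset.range n, ζ ^ (m * i) = ∑ m ∈ Finset.range n, (ζ ^ i) ^ m := by
      refine Finset.sum_congr rfl fun m _ => ?_
      rw [← pow_mul, mul_comm]
    rw [hswap]
    by_cases h0 : i = 0
    · subst h0; simp
    · rw [if_neg h0, geom_sum_eq (hprim.pow_ne_one_of_pos_of_lt h0
        (Finset.mem_range.mp hi)), ← pow_mul, mul_comm i n, pow_mul, hprim.pow_eq_one, one_pow,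
        sub_self, zero_div, zero_mul]
  rw [Finset.sum_congr rfl hinner]
  rw [Finset.sum_ite_eq' (Finset.range n) 0 (fun _ => (n : ℂ) * F 0)]
  simp [Nat.lt_of_lt_of_le Nat.zero_lt_one hn]

/-- Uniform rigidity and weak mixing are mutually exclusive on a Cantor set:
a weakly mixing measure-preserving homeomorphism of a Cantor set (with respect to a
Borel probability measure which is not a Dirac point mass) is not uniformly rigid. -/
theorem weakMixing_not_uniformlyRigid_on_cantor
    {K : Type*} [MetricSpace K] [CompactSpace K] [Nonempty K]
    [TotallyDisconnectedSpace K] (hperf : Perfect (Set.univ : Set K))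
    [MeasurableSpace K] [BorelSpace K]
    (T : K ≃ₜ K) (μ : Measure K) [IsProbabilityMeasure μ]
    (hpres : MeasurePreserving T μ μ)
    (hdirac : ∀ x : K, μ ≠ Measure.dirac x)
    (hwm : Ergodic (fun q : K × K => (T q.1, T q.2)) (μ.prod μ)) :
    ¬ UniformlyRigid (T : K → K) := by
  intro hUR
  obtain ⟨A, hA, hA0, hA1⟩ := exists_clopen_measure_pos_lt_one μ hdirac
  have hAm : MeasurableSet A := hA.isClosed.measurableSet
  have hAne : A.Nonempty := nonempty_of_measure_ne_zero hA0.ne'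
  have hAcne0 : μ Aᶜ ≠ 0 := fun h => hA1.ne ((prob_compl_eq_zero_iff hAm).mp h)
  have hAcne : Aᶜ.Nonempty := nonempty_of_measure_ne_zero hAcne0
  obtain ⟨n, hn1, hfix⟩ := exists_iterate_fix T.continuous hUR hA hAne hAcne
  set f : K → ℂ := A.indicator (fun _ => (1 : ℂ)) with hfdef
  have hfm : Measurable f := measurable_const.indicator hAm
  have hfinv : ∀ x, f ((T : K → K)^[n] x) = f x := by
    intro x
    by_cases hx : x ∈ A
    · rw [hfdef, Set.indicator_of_mem ((hfix x).mpr hx), Set.indicator_of_mem hx]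
    · rw [hfdef, Set.indicator_of_notMem (fun h => hx ((hfix x).mp h)),
        Set.indicator_of_notMem hx]
  set ζ : ℂ := Complex.exp (2 * Real.pi * Complex.I / n) with hζdef
  have hprim : IsPrimitiveRoot ζ n := Complex.isPrimitiveRoot_exp n (by omega)
  have hζn : ζ ^ n = 1 := hprim.pow_eq_one
  have hζ0 : ζ ≠ 0 := fun h => by
    rw [h, zero_pow (by omega : n ≠ 0)] at hζn
    exact zero_ne_one hζn
  have hζconj : ζ * (starRingEnd ℂ) ζ = 1 := by
    have hconjw : (starRingEnd ℂ) (2 * (Real.pi : ℂ) * Complex.I / n)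
        = -(2 * (Real.pi : ℂ) * Complex.I / n) := by
      simp [map_div₀, Complex.conj_I, Complex.conj_ofReal, map_ofNat]
      ring
    rw [hζdef, ← Complex.exp_conj, hconjw, ← Complex.exp_add]
    simp
  set g : ℕ → K → ℂ := fun m x => ∑ i ∈ Finset.range n, ζ ^ (m * i) * f ((T : K → K)^[i] x)
    with hgdef
  have hgm : ∀ m, Measurable (g m) := by
    intro m
    refine Finset.measurable_sum _ fun i _ => ?_
    exact (hfm.comp (T.continuous.iterate i).measurable).const_mul _
  have heig : ∀ m x, g m ((T : K → K) x) = (ζ⁻¹ ^ m) * g m x := by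
    intro m x
    have h := aux_shift n ζ hζ0 hζn m (fun j => f ((T : K → K)^[j] x))
      (by simpa using hfinv x)
    calc g m ((T : K → K) x)
        = ∑ i ∈ Finset.range n, ζ ^ (m * i) * f ((T : K → K)^[i + 1] x) := by
          rw [hgdef]
          exact Finset.sum_congr rfl fun i _ => by rw [← Function.iterate_succ_apply]
      _ = ζ⁻¹ ^ m * ∑ i ∈ Finset.range n, ζ ^ (m * i) * f ((T : K → K)^[i] x) := h
      _ = ζ⁻¹ ^ m * g m x := rfl
  have hcconj : ∀ m : ℕ, (ζ⁻¹ ^ m) * (starRingEnd ℂ) (ζ⁻¹ ^ m) = 1 := by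
    intro m
    rw [map_pow, map_inv₀, ← mul_pow, ← mul_inv, hζconj, inv_one, one_pow]
  have H : ∀ m : ℕ, ∃ a : ℂ, (g m =ᵐ[μ] fun _ => a) ∧ (ζ⁻¹ ^ m = 1 ∨ a = 0) :=
    fun m => eigenfunction_ae_const μ T.continuous.measurable hpres hwm (hgm m)
      (hcconj m) (heig m)
  choose a haeq hor using H
  have hzero : ∀ m, 1 ≤ m → m < n → a m = 0 := by
    intro m hm1 hmn
    rcases hor m with h | h
    · exfalso
      rw [inv_pow, inv_eq_one] at h
      exact hprim.pow_ne_one_of_pos_of_lt (by omega) hmn h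
    · exact h
  set b : ℂ := ∑ m ∈ Finset.range n, a m with hbdef
  have hsum : ∀ᵐ x ∂μ, (n : ℂ) * f x = b := by
    have hall : ∀ᵐ x ∂μ, ∀ m ∈ Finset.range n, g m x = a m :=
      (Filter.eventually_all_finset _).mpr fun m _ => haeq m
    refine hall.mono fun x hx => ?_
    have h1 : ∑ m ∈ Finset.range n, g m x = b :=
      Finset.sum_congr rfl fun m hm => hx m hm
    have h2 : ∑ m ∈ Finset.range n, g m x = (n : ℂ) * f x := by
      rw [hgdef]
      have := aux_fourier n hn1 ζ hprim (fun j => f ((T : K → K)^[j] x))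
      simpa using this
    rw [← h2, h1]
  set E : Set K := {x | (n : ℂ) * f x = b} with hEdef
  have hEc : μ Eᶜ = 0 := by
    rw [ae_iff] at hsum
    exact hsum
  have hbn : b = (n : ℂ) := by
    have hAE : (A ∩ E).Nonempty := by
      rw [Set.nonempty_iff_ne_empty]
      intro hemp
      refine hA0.ne' ?_
      refine measure_mono_null (fun x hx => ?_) hEc
      by_contra hxE
      simp only [Set.mem_compl_iff, not_not] at hxE
      exact Set.eq_empty_iff_forall_notMem.mp hemp x ⟨hx, hxE⟩
    obtain ⟨x, hxA, hxE⟩ := hAE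
    have : (n : ℂ) * f x = b := hxE
    rw [hfdef, Set.indicator_of_mem hxA] at this
    simpa using this.symm
  have hb0 : b = 0 := by
    have hAE : (Aᶜ ∩ E).Nonempty := by
      rw [Set.nonempty_iff_ne_empty]
      intro hemp
      refine hAcne0 ?_
      refine measure_mono_null (fun x hx => ?_) hEc
      by_contra hxE
      simp only [Set.mem_compl_iff, not_not] at hxE
      exact Set.eq_empty_iff_forall_notMem.mp hemp x ⟨hx, hxE⟩
    obtain ⟨x, hxA, hxE⟩ := hAE
    have : (n : ℂ) * f x = b := hxE
    rw [hfdef, Set.indicator_of_notMem hxA] at this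
    simpa using this.symm
  rw [hbn] at hb0
  have : n = 0 := Nat.cast_eq_zero.mp hb0
  omega
end

section
/- Let p be an odd prime and f(x) = x³ + c·x + d ∈ 𝔽_p[x] a cubic polynomial whose discriminant −16(4c³ + 27d²) is zero in 𝔽_p (so the curve y² = f(x) is not an elliptic curve). Then a_p = −Σ_{x ∈ 𝔽_p} (f(x)/p) equals 1, −1, or 0. -/
/-- For an odd prime `p` and a cubic `f(x) = x³ + c·x + d` over `𝔽_p` with vanishing
discriminant `−16(4c³ + 27d²) = 0` (so `y² = f(x)` is not an elliptic curve), the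
quantity `a_p = −Σ_x (f(x)/p)` equals `1`, `−1` or `0`. -/
theorem ap_singular_weierstrass (p : ℕ) [Fact p.Prime] (hodd : p ≠ 2) (c d : ZMod p)
    (hdisc : (-16 : ZMod p) * (4 * c ^ 3 + 27 * d ^ 2) = 0) :
    (- ∑ x : ZMod p, quadraticChar (ZMod p) (x ^ 3 + c * x + d) : ℤ) = 1 ∨
    (- ∑ x : ZMod p, quadraticChar (ZMod p) (x ^ 3 + c * x + d) : ℤ) = -1 ∨
    (- ∑ x : ZMod p, quadraticChar (ZMod p) (x ^ 3 + c * x + d) : ℤ) = 0 := by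
  have hchar : ringChar (ZMod p) ≠ 2 := by
    rw [ZMod.ringChar_zmod_n]; exact hodd
  have h2 : (2 : ZMod p) ≠ 0 := Ring.two_ne_zero hchar
  have hdisc' : 4 * c ^ 3 + 27 * d ^ 2 = 0 := by
    have h16 : (-16 : ZMod p) ≠ 0 := by
      have : (-16 : ZMod p) = -(2^4) := by norm_num
      rw [this]
      exact neg_ne_zero.mpr (pow_ne_zero 4 h2)
    exact (mul_eq_zero.mp hdisc).resolve_left h16
  obtain ⟨r, hr⟩ : ∃ r : ZMod p, ∀ x : ZMod p, x ^ 3 + c * x + d = (x - r)^2 * (x + 2*r) := by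
    by_cases hp3 : p = 3
    · subst hp3
      have h3 : (3 : ZMod 3) = 0 := by
        have := ZMod.natCast_self 3; exact_mod_cast this
      have hc : c = 0 := by
        have hc3 : c ^ 3 = 0 := by linear_combination hdisc' - (c^3 + 9*d^2) * h3
        exact pow_eq_zero_iff (by norm_num : (3:ℕ) ≠ 0) |>.mp hc3
      have hd3 : d ^ 3 = d := ZMod.pow_card d
      refine ⟨-d, fun x => ?_⟩
      subst hc
      linear_combination (d^2*x + d)*h3 + 2*hd3
    · have h3 : (3 : ZMod p) ≠ 0 := by
        intro h
        have h3' : ((3 : ℕ) : ZMod p) = 0 := by exact_mod_cast h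
        rw [ZMod.natCast_eq_zero_iff] at h3'
        exact hp3 ((Nat.prime_dvd_prime_iff_eq Fact.out (by norm_num)).mp h3')
      by_cases hc : c = 0
      · refine ⟨0, fun x => ?_⟩
        have h27 : (27 : ZMod p) ≠ 0 := by
          have : (27 : ZMod p) = 3^3 := by norm_num
          rw [this]; exact pow_ne_zero 3 h3
        have hd : d = 0 := by
          have hd2 : d ^ 2 = 0 := by
            have h' : (27 : ZMod p) * d ^ 2 = 0 := by linear_combination hdisc' - c^2 * 4 * (by rw [hc] : c = 0)
            exact (mul_eq_zero.mp h').resolve_left h27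
          exact pow_eq_zero_iff (by norm_num : (2:ℕ) ≠ 0) |>.mp hd2
        rw [hc, hd]; ring
      · set r : ZMod p := -3*d/(2*c) with hrdef
        have h2c : 2*c ≠ 0 := mul_ne_zero h2 hc
        have hr2 : -3 * r^2 = c := by
          rw [hrdef]; field_simp
          linear_combination -hdisc'
        have hr3 : 2 * r^3 = d := by
          rw [hrdef]; field_simp
          linear_combination (-d)*hdisc'
        exact ⟨r, fun x => by linear_combination (-x)*hr2 - hr3⟩
  -- now compute the sum
  have hzero : ∑ a : ZMod p, quadraticChar (ZMod p) a = 0 := quadraticChar_sum_zero hchar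
  have hshift : ∑ x : ZMod p, quadraticChar (ZMod p) (x + 2*r) = 0 := by
    rw [← hzero]
    exact Fintype.sum_equiv (Equiv.addRight (2*r)) _ _ (fun x => rfl)
  have hpt : ∀ x : ZMod p, quadraticChar (ZMod p) (x ^ 3 + c * x + d)
      = quadraticChar (ZMod p) (x + 2*r) - (if x = r then quadraticChar (ZMod p) (r + 2*r) else 0) := by
    intro x
    by_cases hx : x = r
    · subst hx
      rw [hr x]
      simp
    · rw [hr x, if_neg hx, map_mul, quadraticChar_sq_one' (sub_ne_zero.mpr hx), one_mul, sub_zero]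
  have hsum : ∑ x : ZMod p, quadraticChar (ZMod p) (x ^ 3 + c * x + d)
      = - quadraticChar (ZMod p) (r + 2*r) := by
    rw [Finset.sum_congr rfl (fun x _ => hpt x), Finset.sum_sub_distrib, hshift,
      Finset.sum_ite_eq' Finset.univ r, if_pos (Finset.mem_univ r)]
    ring
  rw [hsum, neg_neg]
  rcases quadraticChar_isQuadratic (ZMod p) (r + 2*r) with h | h | h
  · right; right; exact h
  · left; exact h
  · right; left; exact h
end

section
/- (Furstenberg's ×p,×q theorem) Let a, b ≥ 2 be multiplicatively independent integers (i.e., a^m = b^n with m, n ≥ 0 implies m = n = 0). If S ⊆ ℝ/ℤ is a closed subset invariant under both x ↦ a·x and x ↦ b·x, then S is finite or S = ℝ/ℤ. -/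
set_option maxHeartbeats 1000000

namespace Furstenberg

open Set Metric Real

local notation "T1" => AddCircle (1 : ℝ)

instance fact_one_pos : Fact ((0:ℝ) < 1) := ⟨one_pos⟩

/-- integers are zero in the circle -/
lemma coe_int_zero (t : ℤ) : (((t : ℝ)) : T1) = 0 := by
  rw [AddCircle.coe_eq_zero_iff]
  exact ⟨t, by simp⟩

lemma coe_nat_zero (t : ℕ) : (((t : ℝ)) : T1) = 0 := by
  simpa using coe_int_zero (t : ℤ)

lemma norm_coe_le (v : ℝ) : ‖(v : T1)‖ ≤ |v| := by
  rcases le_or_gt |v| (1/2) with h | h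
  · rw [(AddCircle.norm_coe_eq_abs_iff (1:ℝ) one_ne_zero).mpr (by simpa using h)]
  · calc ‖(v : T1)‖ ≤ |(1:ℝ)|/2 := AddCircle.norm_le_half_period (1:ℝ) one_ne_zero
    _ ≤ |v| := by rw [abs_one]; linarith

lemma zsmul_coe (n : ℤ) (r : ℝ) : n • ((r : ℝ) : T1) = (((n : ℝ) * r : ℝ) : T1) := by
  rw [← AddCircle.coe_zsmul]
  norm_num

/-- lift to Ioc a (a+1) -/
lemma exists_lift_Ioc (a : ℝ) (x : T1) :
    ∃ r : ℝ, r ∈ Set.Ioc a (a + 1) ∧ ((r : ℝ) : T1) = x := by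
  induction x using QuotientAddGroup.induction_on with
  | H r₀ =>
    refine ⟨toIocMod one_pos a r₀, toIocMod_mem_Ioc one_pos a r₀, ?_⟩
    rw [toIocMod]
    have hz : ((toIocDiv one_pos a r₀ • (1:ℝ) : ℝ) : T1) = 0 := by
      rw [AddCircle.coe_eq_zero_iff]; exact ⟨_, rfl⟩
    rw [AddCircle.coe_sub, hz, sub_zero]

lemma exists_lift_Ico (a : ℝ) (x : T1) :
    ∃ r : ℝ, r ∈ Set.Ico a (a + 1) ∧ ((r : ℝ) : T1) = x := by
  induction x using QuotientAddGroup.induction_on with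
  | H r₀ =>
    refine ⟨toIcoMod one_pos a r₀, toIcoMod_mem_Ico one_pos a r₀, ?_⟩
    rw [toIcoMod]
    have hz : ((toIcoDiv one_pos a r₀ • (1:ℝ) : ℝ) : T1) = 0 := by
      rw [AddCircle.coe_eq_zero_iff]; exact ⟨_, rfl⟩
    rw [AddCircle.coe_sub, hz, sub_zero]

section Chain

/-- helper for the chain lemma: one small positive element `m log A - n log B`. -/
lemma chain_aux (A B : ℕ) (hA : 2 ≤ A) (hB : 2 ≤ B) (ε : ℝ) (hε : 0 < ε)
    (m n : ℕ) (hm : 1 ≤ m) (hn : 1 ≤ n)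
    (hg0 : 0 < (m : ℝ) * Real.log A - n * Real.log B)
    (hgδ : (m : ℝ) * Real.log A - n * Real.log B ≤ Real.log (1 + ε)) :
    ∃ N₀ : ℝ, 1 ≤ N₀ ∧ ∀ x : ℝ, N₀ ≤ x →
      ∃ σ : ℕ, (∃ m' n' : ℕ, σ = A ^ m' * B ^ n') ∧ x ≤ (σ : ℝ) ∧ (σ : ℝ) ≤ (1 + ε) * x := by
  have hA1 : (1:ℝ) < (A:ℝ) := by exact_mod_cast lt_of_lt_of_le one_lt_two (by exact_mod_cast hA)
  have hB1 : (1:ℝ) < (B:ℝ) := by exact_mod_cast lt_of_lt_of_le one_lt_two (by exact_mod_cast hB)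
  have hla : 0 < Real.log A := Real.log_pos hA1
  have hlb : 0 < Real.log B := Real.log_pos hB1
  set g : ℝ := (m : ℝ) * Real.log A - n * Real.log B with hgdef
  set LQ : ℝ := (n : ℝ) * Real.log B with hLQdef
  have hLQ : 0 < LQ := by
    apply mul_pos _ hlb
    exact_mod_cast hn
  set N₁ : ℕ := ⌈LQ / g⌉₊ + 1 with hN₁def
  have hN₁g : LQ ≤ (N₁ : ℝ) * g := by
    have h1 : LQ / g ≤ (⌈LQ / g⌉₊ : ℝ) := Nat.le_ceil _
    have h2 : ((⌈LQ / g⌉₊ : ℝ)) ≤ (N₁ : ℝ) := by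
      rw [hN₁def]; push_cast; linarith
    calc LQ = (LQ / g) * g := (div_mul_cancel₀ LQ hg0.ne').symm
    _ ≤ (N₁ : ℝ) * g := by
        apply mul_le_mul_of_nonneg_right _ hg0.le
        linarith
  refine ⟨Real.exp ((N₁ : ℝ) * LQ), Real.one_le_exp (mul_nonneg (Nat.cast_nonneg _) hLQ.le), ?_⟩
  intro x hx
  have hx0 : (0:ℝ) < x := lt_of_lt_of_le (Real.exp_pos _) hx
  set y : ℝ := Real.log x with hydef
  have hy : (N₁ : ℝ) * LQ ≤ y := by
    rw [hydef, Real.le_log_iff_exp_le hx0]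
    exact hx
  set N : ℕ := ⌊y / LQ⌋₊ with hNdef
  have hN₁N : (N₁ : ℝ) ≤ (N : ℝ) := by
    have : (N₁ : ℝ) ≤ y / LQ := by
      rw [le_div_iff₀ hLQ]; linarith [hy]
    have := Nat.le_floor (α := ℝ) (by exact_mod_cast this)
    exact_mod_cast this
  have hNy : (N : ℝ) * LQ ≤ y := by
    have h := Nat.floor_le (a := y / LQ)
      (div_nonneg (le_trans (mul_nonneg (Nat.cast_nonneg _) hLQ.le) hy) hLQ.le)
    calc (N : ℝ) * LQ ≤ (y / LQ) * LQ := mul_le_mul_of_nonneg_right h hLQ.le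
    _ = y := div_mul_cancel₀ y hLQ.ne'
  have hyN : y < ((N : ℝ) + 1) * LQ := by
    have h := Nat.lt_floor_add_one (y / LQ)
    calc y = (y / LQ) * LQ := (div_mul_cancel₀ y hLQ.ne').symm
    _ < ((N:ℝ) + 1) * LQ := by
        apply mul_lt_mul_of_pos_right _ hLQ
        exact_mod_cast h
  have hyNg : y - (N : ℝ) * LQ < (N : ℝ) * g := by
    have : LQ ≤ (N:ℝ) * g := by
      calc LQ ≤ (N₁ : ℝ) * g := hN₁g
      _ ≤ (N : ℝ) * g := mul_le_mul_of_nonneg_right hN₁N hg0.le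
    linarith
  set j : ℕ := ⌊(y - (N : ℝ) * LQ) / g⌋₊ with hjdef
  have hj1 : (j : ℝ) * g ≤ y - (N : ℝ) * LQ := by
    have h := Nat.floor_le (a := (y - (N : ℝ) * LQ) / g) (by
      apply div_nonneg _ hg0.le; linarith)
    calc (j:ℝ) * g ≤ ((y - (N : ℝ) * LQ) / g) * g := mul_le_mul_of_nonneg_right h hg0.le
    _ = y - (N : ℝ) * LQ := div_mul_cancel₀ _ hg0.ne'
  have hj2 : y - (N : ℝ) * LQ < ((j : ℝ) + 1) * g := by
    have h := Nat.lt_floor_add_one ((y - (N : ℝ) * LQ) / g)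
    calc y - (N : ℝ) * LQ = ((y - (N : ℝ) * LQ) / g) * g := (div_mul_cancel₀ _ hg0.ne').symm
    _ < ((j:ℝ)+1) * g := by
        apply mul_lt_mul_of_pos_right _ hg0
        exact_mod_cast h
  have hjN : j + 1 ≤ N := by
    have : (j : ℝ) < (N : ℝ) := by
      by_contra hcon
      push_neg at hcon
      have : (N : ℝ) * g ≤ (j:ℝ) * g := mul_le_mul_of_nonneg_right hcon hg0.le
      linarith
    have : j < N := by exact_mod_cast this
    omega
  -- the chain element
  refine ⟨A ^ ((j+1) * m) * B ^ ((N - (j+1)) * n), ⟨(j+1)*m, (N-(j+1))*n, rfl⟩, ?_, ?_⟩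
  · -- x ≤ σ
    have hcast : ((A ^ ((j+1) * m) * B ^ ((N - (j+1)) * n) : ℕ) : ℝ)
        = Real.exp ((N:ℝ) * LQ + ((j:ℝ)+1) * g) := by
      push_cast
      rw [← Real.rpow_natCast (A:ℝ), ← Real.rpow_natCast (B:ℝ)]
      rw [← Real.exp_log (x := (A:ℝ)) (by linarith), ← Real.exp_log (x := (B:ℝ)) (by linarith)]
      rw [← Real.exp_mul, ← Real.exp_mul, ← Real.exp_add]
      congr 1
      have hNsub : ((N - (j+1) : ℕ) : ℝ) = (N : ℝ) - ((j:ℝ)+1) := by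
        have := hjN
        push_cast [Nat.cast_sub this]
        ring
      push_cast [hNsub]
      rw [hgdef, hLQdef]
      ring
    rw [hcast]
    have : y < (N:ℝ) * LQ + ((j:ℝ)+1) * g := by linarith
    calc x = Real.exp y := by rw [hydef, Real.exp_log hx0]
    _ ≤ Real.exp ((N:ℝ) * LQ + ((j:ℝ)+1) * g) := by
        apply Real.exp_le_exp.mpr; linarith
  · -- σ ≤ (1+ε) x
    have hcast : ((A ^ ((j+1) * m) * B ^ ((N - (j+1)) * n) : ℕ) : ℝ)
        = Real.exp ((N:ℝ) * LQ + ((j:ℝ)+1) * g) := by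
      push_cast
      rw [← Real.rpow_natCast (A:ℝ), ← Real.rpow_natCast (B:ℝ)]
      rw [← Real.exp_log (x := (A:ℝ)) (by linarith), ← Real.exp_log (x := (B:ℝ)) (by linarith)]
      rw [← Real.exp_mul, ← Real.exp_mul, ← Real.exp_add]
      congr 1
      have hNsub : ((N - (j+1) : ℕ) : ℝ) = (N : ℝ) - ((j:ℝ)+1) := by
        have := hjN
        push_cast [Nat.cast_sub this]
        ring
      push_cast [hNsub]
      rw [hgdef, hLQdef]
      ring
    rw [hcast]
    have hle : (N:ℝ) * LQ + ((j:ℝ)+1) * g ≤ y + Real.log (1+ε) := by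
      have : (N:ℝ) * LQ + ((j:ℝ)+1) * g ≤ y + g := by linarith
      linarith
    calc Real.exp ((N:ℝ) * LQ + ((j:ℝ)+1) * g) ≤ Real.exp (y + Real.log (1+ε)) :=
      Real.exp_le_exp.mpr hle
    _ = (1+ε) * x := by
        rw [Real.exp_add, hydef, Real.exp_log hx0, Real.exp_log (by linarith)]
        ring

/-- The chain lemma: products `A^m B^n` are multiplicatively `(1+ε)`-dense at infinity. -/
lemma chain (A B : ℕ) (hA : 2 ≤ A) (hB : 2 ≤ B)
    (hind : ∀ m n : ℕ, A ^ m = B ^ n → m = 0 ∧ n = 0) (ε : ℝ) (hε : 0 < ε) :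
    ∃ N₀ : ℝ, 1 ≤ N₀ ∧ ∀ x : ℝ, N₀ ≤ x →
      ∃ σ : ℕ, (∃ m' n' : ℕ, σ = A ^ m' * B ^ n') ∧ x ≤ (σ : ℝ) ∧ (σ : ℝ) ≤ (1 + ε) * x := by
  have hA1 : (1:ℝ) < (A:ℝ) := by exact_mod_cast lt_of_lt_of_le one_lt_two (by exact_mod_cast hA)
  have hB1 : (1:ℝ) < (B:ℝ) := by exact_mod_cast lt_of_lt_of_le one_lt_two (by exact_mod_cast hB)
  have hla : 0 < Real.log A := Real.log_pos hA1
  have hlb : 0 < Real.log B := Real.log_pos hB1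
  -- the subgroup generated by log A, log B is dense
  have hdense : Dense ((AddSubgroup.closure {Real.log A, Real.log B} : AddSubgroup ℝ) : Set ℝ) := by
    rcases AddSubgroup.dense_or_cyclic (AddSubgroup.closure {Real.log A, Real.log B}) with h | ⟨c, hc⟩
    · exact h
    · exfalso
      have hmemA : Real.log A ∈ AddSubgroup.closure ({Real.log A, Real.log B} : Set ℝ) :=
        AddSubgroup.subset_closure (by simp)
      have hmemB : Real.log B ∈ AddSubgroup.closure ({Real.log A, Real.log B} : Set ℝ) :=
        AddSubgroup.subset_closure (by simp)
      rw [hc, AddSubgroup.mem_closure_singleton] at hmemA hmemB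
      obtain ⟨z₁, hz₁⟩ := hmemA
      obtain ⟨z₂, hz₂⟩ := hmemB
      -- z₂ • log A = z₁ z₂ c = z₁ • log B
      have key : (z₂ : ℝ) * Real.log A = (z₁ : ℝ) * Real.log B := by
        rw [← hz₁, ← hz₂]
        push_cast [zsmul_eq_mul]
        ring
      have hz₁0 : z₁ ≠ 0 := by
        rintro rfl
        simp [zsmul_eq_mul] at hz₁
        linarith
      have hz₂0 : z₂ ≠ 0 := by
        rintro rfl
        simp [zsmul_eq_mul] at hz₂
        linarith
      -- same sign
      have hsame : 0 < (z₁ : ℝ) * z₂ := by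
        rcases lt_or_gt_of_ne (show (z₁:ℝ) ≠ 0 by exact_mod_cast hz₁0) with h1 | h1
        · rcases lt_or_gt_of_ne (show (z₂:ℝ) ≠ 0 by exact_mod_cast hz₂0) with h2 | h2
          · exact mul_pos_of_neg_of_neg h1 h2
          · nlinarith
        · rcases lt_or_gt_of_ne (show (z₂:ℝ) ≠ 0 by exact_mod_cast hz₂0) with h2 | h2
          · nlinarith
          · exact mul_pos h1 h2
      -- produce natural exponents
      have habs : (z₂.natAbs : ℝ) * Real.log A = (z₁.natAbs : ℝ) * Real.log B := by
        rcases lt_or_gt_of_ne (show (z₁:ℝ) ≠ 0 by exact_mod_cast hz₁0) with h1 | h1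
        · have h2 : (z₂ : ℝ) < 0 := by nlinarith
          have e1 : (z₁.natAbs : ℝ) = -(z₁ : ℝ) := by
            rw [Nat.cast_natAbs]
            rw [abs_of_neg (by exact_mod_cast h1)]
            push_cast; ring
          have e2 : (z₂.natAbs : ℝ) = -(z₂ : ℝ) := by
            rw [Nat.cast_natAbs]
            rw [abs_of_neg (by exact_mod_cast h2)]
            push_cast; ring
          rw [e1, e2]; linarith [key]
        · have h2 : (0:ℝ) < (z₂ : ℝ) := by nlinarith
          have e1 : (z₁.natAbs : ℝ) = (z₁ : ℝ) := by
            rw [Nat.cast_natAbs, abs_of_pos (by exact_mod_cast h1)]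
          have e2 : (z₂.natAbs : ℝ) = (z₂ : ℝ) := by
            rw [Nat.cast_natAbs, abs_of_pos (by exact_mod_cast h2)]
          rw [e1, e2]; linarith [key]
      have hnA : A ^ z₂.natAbs = B ^ z₁.natAbs := by
        have hlog : Real.log ((A:ℝ) ^ z₂.natAbs) = Real.log ((B:ℝ) ^ z₁.natAbs) := by
          rw [Real.log_pow, Real.log_pow]; exact_mod_cast habs
        have hApos : (0:ℝ) < (A:ℝ) ^ z₂.natAbs := by positivity
        have hBpos : (0:ℝ) < (B:ℝ) ^ z₁.natAbs := by positivity
        have : ((A:ℝ)) ^ z₂.natAbs = ((B:ℝ)) ^ z₁.natAbs := by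
          rw [← Real.exp_log hApos, ← Real.exp_log hBpos, hlog]
        exact_mod_cast this
      have := hind _ _ hnA
      have hz₂abs : z₂.natAbs ≠ 0 := Int.natAbs_ne_zero.mpr hz₂0
      exact hz₂abs this.1
  -- pick a small positive element of the subgroup
  set δ : ℝ := min (Real.log (1+ε)) (min (Real.log A) (Real.log B) / 2) with hδdef
  have hδ0 : 0 < δ := lt_min (Real.log_pos (by linarith)) (div_pos (lt_min hla hlb) two_pos)
  obtain ⟨gel, hgel, hgmem⟩ : ∃ gel ∈ Set.Ioo (0:ℝ) δ,
      gel ∈ (AddSubgroup.closure {Real.log A, Real.log B} : AddSubgroup ℝ) := by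
    have := hdense.exists_mem_open isOpen_Ioo (Set.nonempty_Ioo.mpr hδ0)
    obtain ⟨gel, hmem, hoo⟩ := this
    exact ⟨gel, hoo, hmem⟩
  rw [AddSubgroup.mem_closure_pair] at hgmem
  obtain ⟨z₁, z₂, hz⟩ := hgmem
  obtain ⟨hg0, hgδ⟩ := hgel
  -- sign analysis
  have hδlA : δ < Real.log A := by
    have : δ ≤ min (Real.log A) (Real.log B) / 2 := min_le_right _ _
    have h2 : min (Real.log A) (Real.log B) / 2 < min (Real.log A) (Real.log B) := by
      have := lt_min hla hlb
      linarith [lt_min hla hlb]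
    calc δ ≤ _ := this
    _ < min (Real.log A) (Real.log B) := h2
    _ ≤ Real.log A := min_le_left _ _
  have hδlB : δ < Real.log B := by
    have : δ ≤ min (Real.log A) (Real.log B) / 2 := min_le_right _ _
    have h2 : min (Real.log A) (Real.log B) / 2 < min (Real.log A) (Real.log B) := by
      linarith [lt_min hla hlb]
    calc δ ≤ _ := this
    _ < min (Real.log A) (Real.log B) := h2
    _ ≤ Real.log B := min_le_right _ _
  have hδε : δ ≤ Real.log (1+ε) := min_le_left _ _
  -- gel = z₁ • log A + z₂ • log B
  have hzeq : (z₁ : ℝ) * Real.log A + (z₂ : ℝ) * Real.log B = gel := by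
    rw [← hz]; push_cast [zsmul_eq_mul]; ring
  rcases le_or_gt z₁ 0 with h₁ | h₁
  · rcases le_or_gt z₂ 0 with h₂ | h₂
    · exfalso
      have : gel ≤ 0 := by
        rw [← hzeq]
        have c1 : (z₁:ℝ) * Real.log A ≤ 0 :=
          mul_nonpos_of_nonpos_of_nonneg (by exact_mod_cast h₁) hla.le
        have c2 : (z₂:ℝ) * Real.log B ≤ 0 :=
          mul_nonpos_of_nonpos_of_nonneg (by exact_mod_cast h₂) hlb.le
        linarith
      linarith
    ·
      have h₁' : z₁ < 0 := by
        rcases lt_or_eq_of_le h₁ with h | h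
        · exact h
        · exfalso
          rw [h] at hzeq
          simp at hzeq
          have : (1:ℝ) ≤ (z₂ : ℝ) := by exact_mod_cast h₂
          nlinarith [hlb]
      -- gel = z₂ log B - (-z₁) log A ; apply chain_aux with roles (B, A)
      have hm : 1 ≤ z₂.natAbs := by
        rw [Nat.one_le_iff_ne_zero]
        exact Int.natAbs_ne_zero.mpr (by omega)
      have hn : 1 ≤ z₁.natAbs := by
        rw [Nat.one_le_iff_ne_zero]
        exact Int.natAbs_ne_zero.mpr (by omega)
      have hrepr : (z₂.natAbs : ℝ) * Real.log B - (z₁.natAbs : ℝ) * Real.log A = gel := by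
        have e1 : (z₁.natAbs : ℝ) = -(z₁ : ℝ) := by
          rw [Nat.cast_natAbs, abs_of_neg (by exact_mod_cast h₁')]; push_cast; ring
        have e2 : (z₂.natAbs : ℝ) = (z₂ : ℝ) := by
          rw [Nat.cast_natAbs, abs_of_pos (by exact_mod_cast h₂)]
        rw [e1, e2, ← hzeq]; ring
      obtain ⟨N₀, hN₀1, hN₀⟩ := chain_aux B A hB hA ε hε z₂.natAbs z₁.natAbs hm hn
        (by rw [hrepr]; exact hg0) (by rw [hrepr]; linarith)
      refine ⟨N₀, hN₀1, fun x hx => ?_⟩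
      obtain ⟨σ, ⟨m', n', hσ⟩, h1, h2⟩ := hN₀ x hx
      exact ⟨σ, ⟨n', m', by rw [hσ]; ring⟩, h1, h2⟩
  · -- z₁ > 0; then z₂ < 0 (else gel ≥ log A > δ)
    have h₂ : z₂ < 0 := by
      by_contra hcon
      push_neg at hcon
      have c1 : (1:ℝ) ≤ (z₁ : ℝ) := by exact_mod_cast h₁
      have c2 : (0:ℝ) ≤ (z₂ : ℝ) * Real.log B :=
        mul_nonneg (by exact_mod_cast hcon) hlb.le
      nlinarith [hla]
    have hm : 1 ≤ z₁.natAbs := by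
      rw [Nat.one_le_iff_ne_zero]
      exact Int.natAbs_ne_zero.mpr (by omega)
    have hn : 1 ≤ z₂.natAbs := by
      rw [Nat.one_le_iff_ne_zero]
      exact Int.natAbs_ne_zero.mpr (by omega)
    have hrepr : (z₁.natAbs : ℝ) * Real.log A - (z₂.natAbs : ℝ) * Real.log B = gel := by
      have e1 : (z₁.natAbs : ℝ) = (z₁ : ℝ) := by
        rw [Nat.cast_natAbs, abs_of_pos (by exact_mod_cast h₁)]
      have e2 : (z₂.natAbs : ℝ) = -(z₂ : ℝ) := by
        rw [Nat.cast_natAbs, abs_of_neg (by exact_mod_cast h₂)]; push_cast; ring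
      rw [e1, e2, ← hzeq]; ring
    obtain ⟨N₀, hN₀1, hN₀⟩ := chain_aux A B hA hB ε hε z₁.natAbs z₂.natAbs hm hn
      (by rw [hrepr]; exact hg0) (by rw [hrepr]; linarith)
    exact ⟨N₀, hN₀1, hN₀⟩

end Chain

section Core

lemma smul_mem_pow {Y : Set T1} {c : ℕ} (h : ∀ y ∈ Y, (c:ℤ) • y ∈ Y) :
    ∀ (k : ℕ), ∀ y ∈ Y, ((c^k : ℕ) : ℤ) • y ∈ Y := by
  intro k
  induction k with
  | zero => intro y hy; simpa using hy
  | succ k ih =>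
    intro y hy
    have hcast : ((c ^ (k+1) : ℕ) : ℤ) = ((c^k : ℕ) : ℤ) * (c : ℤ) := by
      push_cast [pow_succ]; ring
    rw [hcast, mul_smul]
    exact ih _ (h y hy)

lemma smul_fix_pow {x : T1} {c : ℕ} (h : (c:ℤ) • x = x) :
    ∀ (k : ℕ), ((c^k : ℕ) : ℤ) • x = x := by
  intro k
  induction k with
  | zero => simp
  | succ k ih =>
    have hcast : ((c ^ (k+1) : ℕ) : ℤ) = ((c^k : ℕ) : ℤ) * (c : ℤ) := by
      push_cast [pow_succ]; ring
    rw [hcast, mul_smul, h, ih]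

/-- The core sweeping lemma: a closed invariant set that accumulates at a fixed point
of the semigroup is everything. -/
lemma core (A B : ℕ) (hA : 2 ≤ A) (hB : 2 ≤ B)
    (hind : ∀ m n : ℕ, A ^ m = B ^ n → m = 0 ∧ n = 0)
    (Y : Set T1) (hYc : IsClosed Y)
    (hAY : ∀ y ∈ Y, (A:ℤ) • y ∈ Y) (hBY : ∀ y ∈ Y, (B:ℤ) • y ∈ Y)
    (x₁ : T1) (hfixA : (A:ℤ) • x₁ = x₁) (hfixB : (B:ℤ) • x₁ = x₁)
    (happ : ∀ δ : ℝ, 0 < δ → ∃ w ∈ Y, w ≠ x₁ ∧ ‖w - x₁‖ < δ) :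
    Y = Set.univ := by
  have horb : ∀ (m n : ℕ), ∀ y ∈ Y, ((A^m * B^n : ℕ) : ℤ) • y ∈ Y := by
    intro m n y hy
    have hcast : ((A^m * B^n : ℕ) : ℤ) = ((A^m : ℕ) : ℤ) * ((B^n : ℕ) : ℤ) := by
      push_cast; ring
    rw [hcast, mul_smul]
    exact smul_mem_pow hAY m _ (smul_mem_pow hBY n y hy)
  have hfix : ∀ (m n : ℕ), ((A^m * B^n : ℕ) : ℤ) • x₁ = x₁ := by
    intro m n
    have hcast : ((A^m * B^n : ℕ) : ℤ) = ((A^m : ℕ) : ℤ) * ((B^n : ℕ) : ℤ) := by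
      push_cast; ring
    rw [hcast, mul_smul, smul_fix_pow hfixB, smul_fix_pow hfixA]
  have hx₁Y : x₁ ∈ Y := by
    rw [← hYc.closure_eq, Metric.mem_closure_iff]
    intro ε hε
    obtain ⟨w, hwY, -, hw⟩ := happ ε hε
    exact ⟨w, hwY, by rwa [dist_eq_norm, norm_sub_rev]⟩
  have hdense : Dense Y := by
    intro u
    rw [Metric.mem_closure_iff]
    intro ε hε
    set ε' : ℝ := min ε (1/4) with hε'def
    have hε'0 : 0 < ε' := lt_min hε (by norm_num)
    have hε'ε : ε' ≤ ε := min_le_left _ _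
    have hε'4 : ε' ≤ 1/4 := min_le_right _ _
    set ε₁ : ℝ := ε' / 2 with hε₁def
    have hε₁0 : 0 < ε₁ := by positivity
    obtain ⟨N₀, hN₀1, hchain⟩ := chain A B hA hB hind ε₁ hε₁0
    have hN₀0 : 0 < N₀ := by linarith
    set δ : ℝ := ε' / (2 * N₀) with hδdef
    have hδ0 : 0 < δ := div_pos hε'0 (by linarith)
    obtain ⟨w, hwY, hwne, hwδ⟩ := happ δ hδ0
    obtain ⟨r, hrIoc, hr⟩ := exists_lift_Ioc (-(1/2)) (w - x₁)
    have hrlow : -(1/2) < r := hrIoc.1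
    have hrhigh : r ≤ 1/2 := by have := hrIoc.2; linarith
    have hrabs : |r| ≤ 1/2 := abs_le.mpr ⟨by linarith, hrhigh⟩
    have hnorm : ‖w - x₁‖ = |r| := by
      rw [← hr]
      exact (AddCircle.norm_coe_eq_abs_iff (1:ℝ) one_ne_zero).mpr (by rw [abs_one]; linarith)
    have hrne : r ≠ 0 := by
      intro h0
      apply hwne
      have : w - x₁ = 0 := by rw [← hr, h0]; simp
      exact sub_eq_zero.mp this
    have hrδ : |r| < δ := by rw [← hnorm]; exact hwδ
    set s : ℝ := |r| with hsdef
    have hs0 : 0 < s := abs_pos.mpr hrne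
    have hw' : w = x₁ + ((r : ℝ) : T1) := by
      rw [hr]
      abel
    obtain ⟨τ, hτIco, hτ⟩ := exists_lift_Ico 0 (u - x₁)
    have hτ0 : 0 ≤ τ := hτIco.1
    have hτ1 : τ < 1 := by have := hτIco.2; linarith
    have hu' : u = x₁ + ((τ : ℝ) : T1) := by rw [hτ]; abel
    have hNδ : N₀ * δ < ε' := by
      rw [hδdef]
      rw [mul_div_assoc']
      rw [div_lt_iff₀ (by linarith)]
      nlinarith
    rcases lt_or_gt_of_ne hrne with hrneg | hrpos
    · -- r < 0
      have hsr : s = -r := abs_of_neg hrneg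
      set τ' : ℝ := 1 - τ with hτ'def
      have hτ'0 : 0 < τ' := by simp [hτ'def]; linarith
      have hτ'1 : τ' ≤ 1 := by simp [hτ'def]; linarith
      rcases le_or_gt (N₀ * s) τ' with hcase | hcase
      · have hτs : N₀ ≤ τ' / s := (le_div_iff₀ hs0).mpr (by linarith)
        obtain ⟨σ, ⟨m', n', hσform⟩, hσ1, hσ2⟩ := hchain (τ' / s) hτs
        have hσs1 : τ' ≤ (σ:ℝ) * s := by
          have := (div_le_iff₀ hs0).mp hσ1
          linarith
        have hσs2 : (σ:ℝ) * s ≤ (1 + ε₁) * τ' := by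
          calc (σ:ℝ) * s ≤ ((1+ε₁) * (τ'/s)) * s := mul_le_mul_of_nonneg_right hσ2 hs0.le
          _ = (1+ε₁) * τ' := by field_simp
        have hyY : ((σ:ℕ):ℤ) • w ∈ Y := by rw [hσform]; exact horb m' n' w hwY
        have hyval : ((σ:ℕ):ℤ) • w = x₁ + (((σ:ℝ) * r : ℝ) : T1) := by
          rw [hw', smul_add]
          have h1 : ((σ:ℕ):ℤ) • x₁ = x₁ := by rw [hσform]; exact hfix m' n'
          rw [h1, zsmul_coe]
          norm_num
        refine ⟨((σ:ℕ):ℤ) • w, hyY, ?_⟩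
        rw [hyval, hu', dist_eq_norm]
        have heq1 : x₁ + ((τ:ℝ) : T1) - (x₁ + (((σ:ℝ) * r : ℝ) : T1))
            = ((τ - (σ:ℝ)*r - 1 : ℝ) : T1) := by
          have h2 : ((1:ℝ) : T1) = 0 := AddCircle.coe_period 1
          rw [AddCircle.coe_sub, AddCircle.coe_sub, h2]
          abel
        rw [heq1]
        calc ‖((τ - (σ:ℝ)*r - 1 : ℝ) : T1)‖ ≤ |τ - (σ:ℝ)*r - 1| := norm_coe_le _
        _ = |(σ:ℝ)*s - τ'| := by
            rw [hsr, hτ'def]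
            congr 1
            ring
        _ < ε := by
            have hb1 : (σ:ℝ)*s - τ' ≤ ε₁ * τ' := by nlinarith
            have hb2 : ε₁ * τ' ≤ ε₁ := by nlinarith
            rw [abs_sub_lt_iff]
            constructor
            · linarith
            · linarith
      · refine ⟨x₁, hx₁Y, ?_⟩
        rw [hu', dist_eq_norm]
        have heq1 : x₁ + ((τ:ℝ) : T1) - x₁ = ((τ - 1 : ℝ) : T1) := by
          have h2 : ((1:ℝ) : T1) = 0 := AddCircle.coe_period 1
          rw [AddCircle.coe_sub, h2]
          abel
        rw [heq1]
        calc ‖((τ - 1 : ℝ) : T1)‖ ≤ |τ - 1| := norm_coe_le _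
        _ = τ' := by rw [hτ'def, abs_of_nonpos (by linarith)]; ring
        _ < N₀ * s := hcase
        _ ≤ N₀ * δ := mul_le_mul_of_nonneg_left hrδ.le (by linarith)
        _ < ε := by linarith
    · -- r > 0
      have hsr : s = r := abs_of_pos hrpos
      rcases le_or_gt (N₀ * s) τ with hcase | hcase
      · have hτpos : 0 < τ := lt_of_lt_of_le (mul_pos hN₀0 hs0) hcase
        have hτs : N₀ ≤ τ / s := (le_div_iff₀ hs0).mpr (by linarith)
        obtain ⟨σ, ⟨m', n', hσform⟩, hσ1, hσ2⟩ := hchain (τ / s) hτs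
        have hσs1 : τ ≤ (σ:ℝ) * s := by
          have := (div_le_iff₀ hs0).mp hσ1
          linarith
        have hσs2 : (σ:ℝ) * s ≤ (1 + ε₁) * τ := by
          calc (σ:ℝ) * s ≤ ((1+ε₁) * (τ/s)) * s := mul_le_mul_of_nonneg_right hσ2 hs0.le
          _ = (1+ε₁) * τ := by field_simp
        have hyY : ((σ:ℕ):ℤ) • w ∈ Y := by rw [hσform]; exact horb m' n' w hwY
        have hyval : ((σ:ℕ):ℤ) • w = x₁ + (((σ:ℝ) * r : ℝ) : T1) := by
          rw [hw', smul_add]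
          have h1 : ((σ:ℕ):ℤ) • x₁ = x₁ := by rw [hσform]; exact hfix m' n'
          rw [h1, zsmul_coe]
          norm_num
        refine ⟨((σ:ℕ):ℤ) • w, hyY, ?_⟩
        rw [hyval, hu', dist_eq_norm]
        have heq1 : x₁ + ((τ:ℝ) : T1) - (x₁ + (((σ:ℝ) * r : ℝ) : T1))
            = ((τ - (σ:ℝ)*r : ℝ) : T1) := by
          rw [AddCircle.coe_sub]
          abel
        rw [heq1]
        calc ‖((τ - (σ:ℝ)*r : ℝ) : T1)‖ ≤ |τ - (σ:ℝ)*r| := norm_coe_le _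
        _ < ε := by
            rw [hsr] at hσs1 hσs2
            have hb1 : (σ:ℝ)*r - τ ≤ ε₁ * τ := by nlinarith
            have hb2 : ε₁ * τ ≤ ε₁ := by nlinarith
            rw [abs_sub_lt_iff]
            constructor
            · linarith
            · linarith
      · refine ⟨x₁, hx₁Y, ?_⟩
        rw [hu', dist_eq_norm]
        have heq1 : x₁ + ((τ:ℝ) : T1) - x₁ = ((τ : ℝ) : T1) := by abel
        rw [heq1]
        calc ‖((τ : ℝ) : T1)‖ ≤ |τ| := norm_coe_le _
        _ = τ := abs_of_nonneg hτ0
        _ < N₀ * s := hcase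
        _ ≤ N₀ * δ := mul_le_mul_of_nonneg_left hrδ.le (by linarith)
        _ < ε := by linarith
  rw [← hYc.closure_eq, hdense.closure_eq]

end Core

section AccSection

def Acc' (x : T1) (S : Set T1) : Prop := ∀ δ : ℝ, 0 < δ → ∃ y ∈ S, y ≠ x ∧ dist y x < δ

lemma exists_acc {S : Set T1} (hinf : S.Infinite) : ∃ x, Acc' x S := by
  obtain ⟨x, -, hx⟩ := hinf.exists_accPt_of_subset_isCompact isCompact_univ (Set.subset_univ S)
  refine ⟨x, fun δ hδ => ?_⟩
  rw [accPt_iff_nhds] at hx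
  obtain ⟨y, ⟨hyb, hyS⟩, hyx⟩ := hx (Metric.ball x δ) (Metric.ball_mem_nhds x hδ)
  exact ⟨y, hyS, hyx, by simpa [Metric.mem_ball] using hyb⟩

lemma acc_mem {S : Set T1} (hS : IsClosed S) {x : T1} (hx : Acc' x S) : x ∈ S := by
  rw [← hS.closure_eq, Metric.mem_closure_iff]
  intro ε hε
  obtain ⟨y, hyS, -, hy⟩ := hx ε hε
  exact ⟨y, hyS, by rwa [dist_comm]⟩

lemma acc_closed (S : Set T1) : IsClosed {x | Acc' x S} := by
  rw [← isOpen_compl_iff, Metric.isOpen_iff]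
  intro x hx
  rw [Set.mem_compl_iff, Set.mem_setOf_eq, Acc'] at hx
  push_neg at hx
  obtain ⟨δ, hδ0, hδ⟩ := hx
  refine ⟨δ/2, by positivity, ?_⟩
  intro z hz
  rw [Set.mem_compl_iff, Set.mem_setOf_eq]
  intro hzacc
  rw [Metric.mem_ball] at hz
  by_cases hzx : z = x
  · subst hzx
    obtain ⟨y, hyS, hyne, hyd⟩ := hzacc (δ/2) (by positivity)
    have := hδ y hyS hyne
    linarith
  · have hdzx : 0 < dist z x := dist_pos.mpr hzx
    obtain ⟨y, hyS, hyne, hyd⟩ := hzacc (min (δ/2) (dist z x)) (lt_min (by positivity) hdzx)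
    have hyx : y ≠ x := by
      intro h
      have h2 : dist y z < dist z x := lt_of_lt_of_le hyd (min_le_right _ _)
      rw [h, dist_comm] at h2
      exact lt_irrefl _ h2
    have h3 : dist y x ≤ dist y z + dist z x := dist_triangle _ _ _
    have h4 := hδ y hyS hyx
    have h5 : dist y z < δ/2 := lt_of_lt_of_le hyd (min_le_left _ _)
    linarith

lemma torsion_finite (k : ℕ) (hk : 0 < k) : {w : T1 | (k:ℤ) • w = 0}.Finite := by
  have hsub : {w : T1 | (k:ℤ) • w = 0} ⊆
      (fun i : ℕ => (((i : ℝ) / k : ℝ) : T1)) '' Set.Iio k := by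
    intro w hw
    obtain ⟨r, hrIco, hr⟩ := exists_lift_Ico 0 w
    rw [Set.mem_setOf_eq, ← hr, zsmul_coe, AddCircle.coe_eq_zero_iff] at hw
    obtain ⟨t, ht⟩ := hw
    have ht' : (t : ℝ) = (k:ℝ) * r := by
      have := ht
      push_cast [zsmul_eq_mul] at this
      linarith [this]
    have hk0 : (0:ℝ) < (k:ℝ) := by exact_mod_cast hk
    have hr0 : 0 ≤ r := hrIco.1
    have hr1 : r < 1 := by have := hrIco.2; linarith
    have h0t : 0 ≤ t := by
      have : (0:ℝ) ≤ (t:ℝ) := by rw [ht']; positivity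
      exact_mod_cast this
    have htk : t < (k:ℤ) := by
      have : (t:ℝ) < (k:ℝ) := by rw [ht']; nlinarith
      exact_mod_cast this
    refine ⟨t.toNat, ?_, ?_⟩
    · rw [Set.mem_Iio]; omega
    · have he : ((t.toNat : ℕ) : ℝ) / (k:ℝ) = r := by
        have h1 : ((t.toNat : ℕ) : ℝ) = (t : ℝ) := by
          exact_mod_cast congrArg (Int.cast : ℤ → ℝ) (Int.toNat_of_nonneg h0t)
        rw [h1, ht']
        field_simp
      show ((((t.toNat : ℕ) : ℝ) / (k:ℝ) : ℝ) : T1) = w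
      rw [he, hr]
  exact ((Set.finite_Iio k).image _).subset hsub

lemma acc_smul {S : Set T1} (k : ℕ) (hk : 0 < k) (hS : ∀ s ∈ S, (k:ℤ) • s ∈ S)
    {x : T1} (hx : Acc' x S) : Acc' ((k:ℤ) • x) S := by
  by_contra hcon
  rw [Acc'] at hcon
  push_neg at hcon
  obtain ⟨δ₀, hδ₀, hfar⟩ := hcon
  have hfin : ({w : T1 | (k:ℤ) • w = 0} \ {0}).Finite := (torsion_finite k hk).diff
  have hcl : IsClosed ({w : T1 | (k:ℤ) • w = 0} \ {0}) := hfin.isClosed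
  have h0m : (0:T1) ∈ ({w : T1 | (k:ℤ) • w = 0} \ {0})ᶜ := by simp
  obtain ⟨ρ, hρ0, hρ⟩ := Metric.isOpen_iff.mp hcl.isOpen_compl 0 h0m
  have hδ2pos : (0:ℝ) < δ₀ / ((k:ℝ)+1) := by positivity
  set δ := min ρ (δ₀ / ((k:ℝ)+1)) with hδdef
  have hδpos : 0 < δ := lt_min hρ0 hδ2pos
  obtain ⟨y, hyS, hyne, hyd⟩ := hx δ hδpos
  have hky : (k:ℤ) • y ∈ S := hS y hyS
  have hdist : dist ((k:ℤ) • y) ((k:ℤ) • x) ≤ (k:ℝ) * dist y x := by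
    rw [dist_eq_norm, dist_eq_norm, ← smul_sub]
    have hnat : (k:ℤ) • (y - x) = k • (y - x) := natCast_zsmul _ _
    rw [hnat]
    exact norm_nsmul_le
  by_cases heq : (k:ℤ) • y = (k:ℤ) • x
  · have hw : (y - x) ∈ {w : T1 | (k:ℤ) • w = 0} \ {0} := by
      constructor
      · rw [Set.mem_setOf_eq, smul_sub, heq, sub_self]
      · simp only [Set.mem_singleton_iff]
        exact sub_ne_zero_of_ne hyne
    have hball : (y - x) ∈ Metric.ball (0:T1) ρ := by
      rw [Metric.mem_ball, dist_zero_right]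
      calc ‖y - x‖ = dist y x := (dist_eq_norm y x).symm
      _ < δ := hyd
      _ ≤ ρ := min_le_left _ _
    exact (hρ hball) hw
  · have hfar' := hfar ((k:ℤ) • y) hky heq
    have h1 : dist y x < δ₀ / ((k:ℝ)+1) := lt_of_lt_of_le hyd (min_le_right _ _)
    have hk0 : (0:ℝ) ≤ (k:ℝ) := Nat.cast_nonneg _
    have h2 : (k:ℝ) * dist y x < ((k:ℝ)+1) * (δ₀/((k:ℝ)+1)) := by
      have hd0 : 0 ≤ dist y x := dist_nonneg
      calc (k:ℝ) * dist y x ≤ (k:ℝ) * (δ₀/((k:ℝ)+1)) :=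
        mul_le_mul_of_nonneg_left h1.le hk0
      _ < ((k:ℝ)+1) * (δ₀/((k:ℝ)+1)) := by
          apply mul_lt_mul_of_pos_right (by linarith) hδ2pos
    have h3 : ((k:ℝ)+1) * (δ₀/((k:ℝ)+1)) = δ₀ := by field_simp
    linarith

end AccSection

section Diff

lemma diff_total (A B : ℕ) (hA : 2 ≤ A) (hB : 2 ≤ B)
    (hind : ∀ m n : ℕ, A ^ m = B ^ n → m = 0 ∧ n = 0)
    (Y : Set T1) (hYc : IsClosed Y)
    (hAY : ∀ y ∈ Y, (A:ℤ) • y ∈ Y) (hBY : ∀ y ∈ Y, (B:ℤ) • y ∈ Y)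
    (hinf : Y.Infinite) : ∀ t : T1, ∃ x ∈ Y, x + t ∈ Y := by
  set D : Set T1 := (fun p : T1 × T1 => p.1 - p.2) '' (Y ×ˢ Y) with hDdef
  have hDc : IsClosed D :=
    (((hYc.isCompact).prod (hYc.isCompact)).image (continuous_fst.sub continuous_snd)).isClosed
  have hDA : ∀ d ∈ D, (A:ℤ) • d ∈ D := by
    rintro d ⟨⟨y, x⟩, hmem, rfl⟩
    exact ⟨((A:ℤ)•y, (A:ℤ)•x), ⟨hAY y hmem.1, hAY x hmem.2⟩, (smul_sub _ _ _).symm⟩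
  have hDB : ∀ d ∈ D, (B:ℤ) • d ∈ D := by
    rintro d ⟨⟨y, x⟩, hmem, rfl⟩
    exact ⟨((B:ℤ)•y, (B:ℤ)•x), ⟨hBY y hmem.1, hBY x hmem.2⟩, (smul_sub _ _ _).symm⟩
  have happ : ∀ δ : ℝ, 0 < δ → ∃ w ∈ D, w ≠ 0 ∧ ‖w - 0‖ < δ := by
    intro δ hδ
    obtain ⟨z, hz⟩ := exists_acc hinf
    obtain ⟨y₁, hy₁S, hy₁ne, hy₁d⟩ := hz (δ/2) (by positivity)
    have h1 : 0 < dist y₁ z := dist_pos.mpr hy₁ne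
    obtain ⟨y₂, hy₂S, hy₂ne, hy₂d⟩ := hz (min (δ/2) (dist y₁ z)) (lt_min (by positivity) h1)
    have hne : y₁ ≠ y₂ := by
      intro h
      have h2 : dist y₂ z < dist y₁ z := lt_of_lt_of_le hy₂d (min_le_right _ _)
      rw [← h] at h2
      exact lt_irrefl _ h2
    refine ⟨y₁ - y₂, ⟨(y₁, y₂), ⟨hy₁S, hy₂S⟩, rfl⟩, sub_ne_zero_of_ne hne, ?_⟩
    rw [sub_zero, ← dist_eq_norm]
    have h3 : dist y₂ z < δ/2 := lt_of_lt_of_le hy₂d (min_le_left _ _)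
    calc dist y₁ y₂ ≤ dist y₁ z + dist z y₂ := dist_triangle _ _ _
    _ < δ/2 + δ/2 := by rw [dist_comm z y₂]; exact add_lt_add hy₁d h3
    _ = δ := by ring
  have hDuniv : D = Set.univ :=
    core A B hA hB hind D hDc hDA hDB 0 (smul_zero _) (smul_zero _) happ
  intro t
  have ht : t ∈ D := hDuniv ▸ Set.mem_univ t
  obtain ⟨⟨y, x⟩, hmem, heq⟩ := ht
  refine ⟨x, hmem.2, ?_⟩
  have heq' : y - x = t := heq
  have hxt : x + t = y := by rw [← heq']; abel
  rw [hxt]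
  exact hmem.1

end Diff
section Enemy

/-- torsion ("rational") points of the circle -/
def IsRatC (x : T1) : Prop := ∃ n : ℕ, 0 < n ∧ (n:ℤ) • x = 0

lemma irr_set_infinite {V : Set T1} {c : ℕ} (hc : 2 ≤ c)
    (hV : ∀ z ∈ V, (c:ℤ) • z ∈ V) (hirr : ∀ z ∈ V, ¬ IsRatC z)
    (hne : V.Nonempty) : V.Infinite := by
  obtain ⟨z, hz⟩ := hne
  have hmem : ∀ m : ℕ, ((c^m : ℕ) : ℤ) • z ∈ V := fun m => smul_mem_pow hV m z hz
  have key : ∀ p q : ℕ, p < q → ((c^p:ℕ):ℤ) • z = ((c^q:ℕ):ℤ) • z → False := by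
    intro p q hpq heq
    have h1 : c^p < c^q := Nat.pow_lt_pow_right (by omega) hpq
    refine hirr z hz ⟨c^q - c^p, by omega, ?_⟩
    have hcast : ((c^q - c^p : ℕ) : ℤ) = ((c^q : ℕ) : ℤ) - ((c^p : ℕ):ℤ) :=
      Int.ofNat_sub h1.le
    rw [hcast, sub_smul, ← heq, sub_self]
  have hinj : Function.Injective (fun m : ℕ => ((c^m : ℕ) : ℤ) • z) := by
    intro m m' hmm'
    simp only at hmm'
    rcases Nat.lt_trichotomy m m' with h | h | h
    · exact absurd hmm' (fun he => key m m' h he)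
    · exact h
    · exact absurd hmm'.symm (fun he => key m' m h he)
  exact Set.infinite_of_injective_forall_mem hinj hmem

lemma trans_iter {V : Set T1} {c : ℕ} (hc : 0 < c)
    (h : ∀ z ∈ V, z + (((c:ℝ)⁻¹ : ℝ) : T1) ∈ V) :
    ∀ (t : ℤ), ∀ z ∈ V, z + (((t : ℝ) / (c:ℝ) : ℝ) : T1) ∈ V := by
  have hc0 : ((c:ℕ):ℝ) ≠ 0 := Nat.cast_ne_zero.mpr hc.ne'
  have hnat : ∀ (j : ℕ), ∀ z ∈ V, z + (((j : ℝ) / (c:ℝ) : ℝ) : T1) ∈ V := by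
    intro j
    induction j with
    | zero => intro z hz; simpa using hz
    | succ j ih =>
      intro z hz
      have h1 := h _ (ih z hz)
      have heq : (z + (((j : ℝ) / (c:ℝ) : ℝ) : T1)) + (((c:ℝ)⁻¹ : ℝ) : T1)
          = z + ((((j+1 : ℕ) : ℝ) / (c:ℝ) : ℝ) : T1) := by
        rw [add_assoc, ← AddCircle.coe_add]
        congr 2
        push_cast
        field_simp
      rwa [heq] at h1
  intro t z hz
  set tm := t % (c:ℤ) with htm
  have hcz : ((c:ℕ):ℤ) ≠ 0 := by exact_mod_cast hc.ne'
  have htm0 : 0 ≤ tm := Int.emod_nonneg t hcz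
  have key : (((t : ℝ) / (c:ℝ)) : T1) = (((tm : ℝ) / (c:ℝ)) : T1) := by
    have hdvd : t - tm = ((c:ℕ):ℤ) * (t / ((c:ℕ):ℤ)) := by
      rw [htm]
      linarith [Int.mul_ediv_add_emod t ((c:ℕ):ℤ)]
    have hrr : ((t:ℝ)/(c:ℝ)) - ((tm:ℝ)/(c:ℝ)) = ((t / (c:ℤ) : ℤ) : ℝ) := by
      have hcast : (t:ℝ) - (tm:ℝ) = ((c:ℕ):ℝ) * ((t / (c:ℤ) : ℤ) : ℝ) := by
        exact_mod_cast congrArg (Int.cast : ℤ → ℝ) hdvd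
      field_simp
      linarith [hcast]
    have h2 : (((t : ℝ) / (c:ℝ)) : T1) - (((tm : ℝ) / (c:ℝ)) : T1) = 0 := by
      rw [← AddCircle.coe_sub, hrr]
      exact coe_int_zero _
    have := sub_eq_zero.mp h2
    exact this
  rw [key]
  have hres := hnat tm.toNat z hz
  have hcast : ((tm.toNat : ℕ) : ℝ) = (tm:ℝ) := by
    exact_mod_cast congrArg (Int.cast : ℤ → ℝ) (Int.toNat_of_nonneg htm0)
  rwa [hcast] at hres

/-- data for a stage of the recursion -/
structure Stage (a b : ℕ) (P : Set T1) where
  Z : Set T1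
  e : ℕ
  D : ℕ
  he : 0 < e
  hD : 0 < D
  hsub : Z ⊆ P
  hne : Z.Nonempty
  hcl : IsClosed Z
  hA : ∀ z ∈ Z, ((a^e : ℕ) : ℤ) • z ∈ Z
  hB : ∀ z ∈ Z, ((b^e : ℕ) : ℤ) • z ∈ Z
  htr : ∀ z ∈ Z, z + (((D:ℝ)⁻¹ : ℝ) : T1) ∈ Z

lemma stage_step {a b : ℕ} (ha : 2 ≤ a) (hb : 2 ≤ b)
    (hind : ∀ m n : ℕ, a ^ m = b ^ n → m = 0 ∧ n = 0)
    {P : Set T1} (hirr : ∀ z ∈ P, ¬ IsRatC z)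
    (s : Stage a b P) :
    ∃ s' : Stage a b P, s'.Z ⊆ s.Z ∧ s.D ∣ s'.D ∧ 2 * s.D ≤ s'.D := by
  obtain ⟨p, hple, hp⟩ := Nat.exists_infinite_primes (max (a*b) s.D + 1)
  have hab1 : a ≤ a * b := Nat.le_mul_of_pos_right a (by omega)
  have hab2 : b ≤ a * b := Nat.le_mul_of_pos_left b (by omega)
  have hpab : a*b < p := by
    have := le_max_left (a*b) s.D
    omega
  have hpD : s.D < p := by
    have := le_max_right (a*b) s.D
    omega
  have hp2 : 2 ≤ p := hp.two_le
  have hpa : ¬ (p ∣ a) := by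
    intro hdvd
    have := Nat.le_of_dvd (by omega) hdvd
    omega
  have hpb : ¬ (p ∣ b) := by
    intro hdvd
    have := Nat.le_of_dvd (by omega) hdvd
    omega
  set e' := s.e * Nat.totient p with he'def
  have hφ : 0 < Nat.totient p := Nat.totient_pos.mpr (by omega)
  have he'pos : 0 < e' := Nat.mul_pos s.he hφ
  set A' := a ^ e' with hA'def
  set B' := b ^ e' with hB'def
  have hA'2 : 2 ≤ A' := le_trans ha (Nat.le_self_pow he'pos.ne' a)
  have hB'2 : 2 ≤ B' := le_trans hb (Nat.le_self_pow he'pos.ne' b)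
  have hAmod : A' ≡ 1 [MOD p] := by
    have hcop : Nat.Coprime (a ^ s.e) p :=
      (((Nat.Prime.coprime_iff_not_dvd hp).mpr
        (fun hd => hpa (hp.dvd_of_dvd_pow hd)))).symm
    have := Nat.ModEq.pow_totient hcop
    rw [hA'def, he'def, pow_mul]
    exact this
  have hBmod : B' ≡ 1 [MOD p] := by
    have hcop : Nat.Coprime (b ^ s.e) p :=
      (((Nat.Prime.coprime_iff_not_dvd hp).mpr
        (fun hd => hpb (hp.dvd_of_dvd_pow hd)))).symm
    have := Nat.ModEq.pow_totient hcop
    rw [hB'def, he'def, pow_mul]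
    exact this
  set q : T1 := (((p:ℝ)⁻¹ : ℝ) : T1) with hqdef
  have hp0R : ((p:ℕ):ℝ) ≠ 0 := Nat.cast_ne_zero.mpr (by omega)
  have hppq : ((p:ℕ):ℤ) • q = 0 := by
    rw [hqdef, zsmul_coe]
    have heq : (((p:ℕ):ℤ):ℝ) * ((p:ℕ):ℝ)⁻¹ = 1 := by
      push_cast
      field_simp
    rw [heq]
    exact AddCircle.coe_period 1
  have hfixq : ∀ σ : ℕ, σ ≡ 1 [MOD p] → (σ:ℤ) • q = q := by
    intro σ hσ
    have hdvd : ((p:ℕ):ℤ) ∣ (σ:ℤ) - 1 := by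
      have := Nat.ModEq.dvd hσ.symm
      simpa using this
    obtain ⟨t, ht⟩ := hdvd
    have hz : ((σ:ℤ) - 1) • q = 0 := by
      rw [ht, mul_comm, mul_smul, hppq, smul_zero]
    have : (σ:ℤ) • q - q = 0 := by
      rw [← hz, sub_smul, one_smul]
    linear_combination (norm := abel) this
  -- invariance of s.Z under the new generators
  have hZA' : ∀ z ∈ s.Z, ((A':ℕ):ℤ) • z ∈ s.Z := by
    intro z hz
    have := smul_mem_pow (c := a^(s.e)) s.hA (Nat.totient p) z hz
    rwa [← pow_mul] at this
  have hZB' : ∀ z ∈ s.Z, ((B':ℕ):ℤ) • z ∈ s.Z := by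
    intro z hz
    have := smul_mem_pow (c := b^(s.e)) s.hB (Nat.totient p) z hz
    rwa [← pow_mul] at this
  have hindep' : ∀ m n : ℕ, A' ^ m = B' ^ n → m = 0 ∧ n = 0 := by
    intro m n hmn
    rw [hA'def, hB'def, ← pow_mul, ← pow_mul] at hmn
    have h := hind _ _ hmn
    constructor
    · exact (Nat.mul_eq_zero.mp h.1).resolve_left he'pos.ne'
    · exact (Nat.mul_eq_zero.mp h.2).resolve_left he'pos.ne'
  -- inner recursion
  have hmain : ∀ j : ℕ, ∃ V : Set T1, V.Nonempty ∧ IsClosed V ∧ V ⊆ s.Z ∧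
      (∀ z ∈ V, ((A' : ℕ) : ℤ) • z ∈ V) ∧ (∀ z ∈ V, ((B' : ℕ) : ℤ) • z ∈ V) ∧
      (∀ z ∈ V, z + (((s.D:ℝ)⁻¹ : ℝ) : T1) ∈ V) ∧
      (∀ z ∈ V, ∀ i : ℕ, i ≤ j → z + ((i:ℕ):ℤ) • q ∈ s.Z) := by
    intro j
    induction j with
    | zero =>
      refine ⟨s.Z, s.hne, s.hcl, subset_rfl, hZA', hZB', s.htr, ?_⟩
      intro z hz i hi
      have : i = 0 := by omega
      subst this
      simpa using hz
    | succ j ih =>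
      obtain ⟨V, hVne, hVcl, hVsub, hVA, hVB, hVtr, hVcum⟩ := ih
      have hVirr : ∀ z ∈ V, ¬ IsRatC z := fun z hz => hirr z (s.hsub (hVsub hz))
      have hVinf : V.Infinite := irr_set_infinite hA'2 hVA hVirr hVne
      obtain ⟨x, hxV, hxq⟩ := diff_total A' B' hA'2 hB'2 hindep' V hVcl hVA hVB hVinf q
      refine ⟨V ∩ {x' | x' + q ∈ V}, ⟨x, hxV, hxq⟩,
        hVcl.inter (hVcl.preimage (continuous_id.add continuous_const)),
        (Set.inter_subset_left).trans hVsub, ?_, ?_, ?_, ?_⟩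
      · intro z hz
        refine ⟨hVA z hz.1, ?_⟩
        show ((A':ℕ):ℤ) • z + q ∈ V
        have h1 : ((A':ℕ):ℤ) • z + q = ((A':ℕ):ℤ) • (z + q) := by
          rw [smul_add, hfixq A' hAmod]
        rw [h1]
        exact hVA _ hz.2
      · intro z hz
        refine ⟨hVB z hz.1, ?_⟩
        show ((B':ℕ):ℤ) • z + q ∈ V
        have h1 : ((B':ℕ):ℤ) • z + q = ((B':ℕ):ℤ) • (z + q) := by
          rw [smul_add, hfixq B' hBmod]
        rw [h1]
        exact hVB _ hz.2
      · intro z hz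
        refine ⟨hVtr z hz.1, ?_⟩
        show z + (((s.D:ℝ)⁻¹ : ℝ) : T1) + q ∈ V
        have h1 : z + (((s.D:ℝ)⁻¹ : ℝ) : T1) + q = (z + q) + (((s.D:ℝ)⁻¹ : ℝ) : T1) := by
          abel
        rw [h1]
        exact hVtr _ hz.2
      · intro z hz i hi
        cases i with
        | zero => simpa using hVsub hz.1
        | succ i' =>
          have hi' : i' ≤ j := by omega
          have hres := hVcum (z + q) hz.2 i' hi'
          have heq : z + q + ((i':ℕ):ℤ) • q = z + (((i'+1 : ℕ)):ℤ) • q := by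
            have hcast : (((i'+1:ℕ)):ℤ) = ((i':ℕ):ℤ) + 1 := by push_cast; ring
            rw [hcast, add_smul, one_smul]
            abel
          rwa [heq] at hres
  obtain ⟨V, hVne, hVcl, hVsub, hVA, hVB, hVtr, hVcum⟩ := hmain (p - 1)
  set W : Set T1 := {x | ∀ i : ℕ, i < p → x + ((i:ℕ):ℤ) • q ∈ s.Z} with hWdef
  have hWne : W.Nonempty := by
    obtain ⟨x, hx⟩ := hVne
    exact ⟨x, fun i hi => hVcum x hx i (by omega)⟩
  have hWcl : IsClosed W := by
    have hWeq : W = ⋂ (i : ℕ) (_ : i < p), (fun x => x + ((i:ℕ):ℤ) • q) ⁻¹' s.Z := by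
      ext x
      simp [hWdef, Set.mem_iInter]
    rw [hWeq]
    exact isClosed_iInter (fun i => isClosed_iInter
      (fun _ => s.hcl.preimage (continuous_id.add continuous_const)))
  have hWsub : W ⊆ s.Z := by
    intro x hx
    have := hx 0 (by omega)
    simpa using this
  have hWA : ∀ z ∈ W, ((A':ℕ):ℤ) • z ∈ W := by
    intro z hz i hi
    have hfix_iq : ((A':ℕ):ℤ) • (((i:ℕ):ℤ) • q) = ((i:ℕ):ℤ) • q := by
      rw [smul_comm, hfixq A' hAmod]
    have heq : ((A':ℕ):ℤ) • z + ((i:ℕ):ℤ) • q = ((A':ℕ):ℤ) • (z + ((i:ℕ):ℤ) • q) := by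
      rw [smul_add, hfix_iq]
    rw [heq]
    exact hZA' _ (hz i hi)
  have hWB : ∀ z ∈ W, ((B':ℕ):ℤ) • z ∈ W := by
    intro z hz i hi
    have hfix_iq : ((B':ℕ):ℤ) • (((i:ℕ):ℤ) • q) = ((i:ℕ):ℤ) • q := by
      rw [smul_comm, hfixq B' hBmod]
    have heq : ((B':ℕ):ℤ) • z + ((i:ℕ):ℤ) • q = ((B':ℕ):ℤ) • (z + ((i:ℕ):ℤ) • q) := by
      rw [smul_add, hfix_iq]
    rw [heq]
    exact hZB' _ (hz i hi)
  have hWq : ∀ z ∈ W, z + q ∈ W := by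
    intro z hz i hi
    rcases Nat.lt_or_ge (i+1) p with h | h
    · have hres := hz (i+1) h
      have heq : z + q + ((i:ℕ):ℤ) • q = z + (((i+1:ℕ)):ℤ) • q := by
        have hcast : (((i+1:ℕ)):ℤ) = ((i:ℕ):ℤ) + 1 := by push_cast; ring
        rw [hcast, add_smul, one_smul]
        abel
      rwa [heq]
    · have hip : i + 1 = p := by omega
      have heq : z + q + ((i:ℕ):ℤ) • q = z := by
        have h1 : q + ((i:ℕ):ℤ) • q = ((p:ℕ):ℤ) • q := by
          have hcast : ((p:ℕ):ℤ) = ((i:ℕ):ℤ) + 1 := by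
            rw [← hip]; push_cast; ring
          rw [hcast, add_smul, one_smul]
          abel
        rw [add_assoc, h1, hppq, add_zero]
      rw [heq]
      exact hWsub hz
  have hWtr : ∀ z ∈ W, z + (((s.D:ℝ)⁻¹ : ℝ) : T1) ∈ W := by
    intro z hz i hi
    have hres := hz i hi
    have heq : z + (((s.D:ℝ)⁻¹ : ℝ) : T1) + ((i:ℕ):ℤ) • q
        = (z + ((i:ℕ):ℤ) • q) + (((s.D:ℝ)⁻¹:ℝ) : T1) := by abel
    rw [heq]
    exact s.htr _ hres
  -- combined translation invariance
  have hWq' : ∀ (t : ℤ), ∀ z ∈ W, z + (((t:ℝ) / (p:ℝ) : ℝ) : T1) ∈ W :=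
    trans_iter (by omega) hWq
  have hWD' : ∀ (t : ℤ), ∀ z ∈ W, z + (((t:ℝ) / (s.D:ℝ) : ℝ) : T1) ∈ W :=
    trans_iter s.hD hWtr
  have hcop : Nat.Coprime p s.D := (Nat.Prime.coprime_iff_not_dvd hp).mpr
    (fun hd => absurd (Nat.le_of_dvd s.hD hd) (by omega))
  obtain ⟨u, v, huv⟩ : ∃ u v : ℤ, u * ((p:ℕ):ℤ) + v * ((s.D:ℕ):ℤ) = 1 := by
    have h1 : IsCoprime ((p:ℕ):ℤ) ((s.D:ℕ):ℤ) := by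
      rw [Int.isCoprime_iff_gcd_eq_one, Int.gcd_natCast_natCast]
      exact hcop
    obtain ⟨u, v, h⟩ := h1
    exact ⟨u, v, by linarith [h]⟩
  have hWnew : ∀ z ∈ W, z + ((((s.D * p : ℕ):ℝ)⁻¹ : ℝ) : T1) ∈ W := by
    intro z hz
    have hD0 : ((s.D:ℕ):ℝ) ≠ 0 := Nat.cast_ne_zero.mpr s.hD.ne'
    have hcast : (u:ℝ) * ((p:ℕ):ℝ) + (v:ℝ) * ((s.D:ℕ):ℝ) = 1 := by
      exact_mod_cast congrArg (Int.cast : ℤ → ℝ) huv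
    have hkey : ((v:ℝ) / (p:ℝ)) + ((u:ℝ) / (s.D:ℝ)) = (((s.D * p : ℕ):ℝ))⁻¹ := by
      rw [div_add_div _ _ hp0R hD0]
      have hnum : (v:ℝ) * ((s.D:ℕ):ℝ) + ((p:ℕ):ℝ) * (u:ℝ) = 1 := by linarith
      rw [hnum, one_div]
      congr 1
      push_cast
      ring
    have hkey2 : ((((s.D * p : ℕ):ℝ)⁻¹ : ℝ) : T1)
        = (((v:ℝ) / (p:ℝ) : ℝ) : T1) + (((u:ℝ) / (s.D:ℝ) : ℝ) : T1) := by
      rw [← AddCircle.coe_add, hkey]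
    rw [hkey2, ← add_assoc]
    exact hWD' u _ (hWq' v z hz)
  refine ⟨⟨W, e', s.D * p, he'pos, Nat.mul_pos s.hD (by omega),
    hWsub.trans s.hsub, hWne, hWcl, hWA, hWB, hWnew⟩, hWsub, ⟨p, rfl⟩, ?_⟩
  have : 2 ≤ p := hp2
  calc 2 * s.D = s.D * 2 := by ring
  _ ≤ s.D * p := Nat.mul_le_mul_left s.D hp2

end Enemy
section EnemyFinal

noncomputable def stageSeq {a b : ℕ} (ha : 2 ≤ a) (hb : 2 ≤ b)
    (hind : ∀ m n : ℕ, a ^ m = b ^ n → m = 0 ∧ n = 0)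
    {P : Set T1} (hirr : ∀ z ∈ P, ¬ IsRatC z) (s₀ : Stage a b P) : ℕ → Stage a b P :=
  fun k => Nat.rec s₀ (fun _ s => Classical.choose (stage_step ha hb hind hirr s)) k

lemma enemy {a b : ℕ} (ha : 2 ≤ a) (hb : 2 ≤ b)
    (hind : ∀ m n : ℕ, a ^ m = b ^ n → m = 0 ∧ n = 0)
    {P : Set T1} (hPne : P.Nonempty) (hPcl : IsClosed P)
    (hPa : ∀ z ∈ P, (a:ℤ) • z ∈ P) (hPb : ∀ z ∈ P, (b:ℤ) • z ∈ P)
    (hirr : ∀ z ∈ P, ¬ IsRatC z) : False := by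
  have s₀ : Stage a b P :=
    { Z := P, e := 1, D := 1, he := one_pos, hD := one_pos, hsub := subset_rfl,
      hne := hPne, hcl := hPcl,
      hA := by
        intro z hz
        have h1 : ((a^1 : ℕ):ℤ) = (a:ℤ) := by norm_num
        rw [h1]; exact hPa z hz,
      hB := by
        intro z hz
        have h1 : ((b^1 : ℕ):ℤ) = (b:ℤ) := by norm_num
        rw [h1]; exact hPb z hz,
      htr := by
        intro z hz
        have h1 : (((1:ℕ):ℝ)⁻¹ : ℝ) = (1:ℝ) := by norm_num
        rw [h1]
        have h2 : ((1:ℝ) : T1) = 0 := AddCircle.coe_period 1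
        rw [h2, add_zero]
        exact hz }
  set f := stageSeq ha hb hind hirr s₀ with hfdef
  have hstep : ∀ k, (f (k+1)).Z ⊆ (f k).Z ∧ (f k).D ∣ (f (k+1)).D ∧
      2 * (f k).D ≤ (f (k+1)).D :=
    fun k => Classical.choose_spec (stage_step ha hb hind hirr (f k))
  have hmono : ∀ j k, j ≤ k → (f k).Z ⊆ (f j).Z := by
    intro j k hjk
    induction k with
    | zero =>
      have hj : j = 0 := by omega
      subst hj; exact subset_rfl
    | succ k ih =>
      rcases Nat.eq_or_lt_of_le hjk with h | h
      · exact h ▸ subset_rfl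
      · exact ((hstep k).1).trans (ih (by omega))
  have hdvd : ∀ j k, j ≤ k → (f j).D ∣ (f k).D := by
    intro j k hjk
    induction k with
    | zero =>
      have hj : j = 0 := by omega
      subst hj; exact dvd_rfl
    | succ k ih =>
      rcases Nat.eq_or_lt_of_le hjk with h | h
      · exact h ▸ dvd_rfl
      · exact (ih (by omega)).trans (hstep k).2.1
  have hgrow : ∀ k, 2^k ≤ (f k).D := by
    intro k
    induction k with
    | zero => simpa using Nat.one_le_iff_ne_zero.mpr (f 0).hD.ne'
    | succ k ih =>
      have h2 := (hstep k).2.2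
      calc 2^(k+1) = 2 * 2^k := by ring
      _ ≤ 2 * (f k).D := by omega
      _ ≤ (f (k+1)).D := h2
  set Zinf := ⋂ k, (f k).Z with hZinfdef
  have hZcl : IsClosed Zinf := isClosed_iInter (fun k => (f k).hcl)
  have hZne : Zinf.Nonempty :=
    IsCompact.nonempty_iInter_of_sequence_nonempty_isCompact_isClosed
      (fun k => (f k).Z) (fun k => (hstep k).1) (fun k => (f k).hne)
      ((f 0).hcl.isCompact) (fun k => (f k).hcl)
  obtain ⟨z₀, hz₀⟩ := hZne
  have hz₀k : ∀ k, z₀ ∈ (f k).Z := fun k => Set.mem_iInter.mp hz₀ k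
  have htrans : ∀ k : ℕ, ∀ t : ℤ, z₀ + (((t:ℝ) / (((f k).D : ℕ) : ℝ) : ℝ) : T1) ∈ Zinf := by
    intro k t
    rw [hZinfdef, Set.mem_iInter]
    intro m
    rcases le_total m k with h | h
    · exact hmono m k h (trans_iter (f k).hD (f k).htr t z₀ (hz₀k k))
    · obtain ⟨c, hc⟩ := hdvd k m h
      have hc0 : c ≠ 0 := by
        intro h0
        rw [h0, mul_zero] at hc
        have := (f m).hD
        omega
      have h2 := trans_iter (f m).hD (f m).htr (t * (c:ℤ)) z₀ (hz₀k m)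
      have heq : (((t * (c:ℤ) : ℤ):ℝ) / (((f m).D : ℕ):ℝ)) = ((t:ℝ) / (((f k).D : ℕ):ℝ)) := by
        have hk0 : (((f k).D : ℕ):ℝ) ≠ 0 := Nat.cast_ne_zero.mpr (f k).hD.ne'
        have hcc : ((c:ℕ):ℝ) ≠ 0 := Nat.cast_ne_zero.mpr hc0
        rw [hc]
        push_cast
        field_simp
      rwa [heq] at h2
  have hdense : Dense Zinf := by
    intro uu
    rw [Metric.mem_closure_iff]
    intro ε hε
    obtain ⟨k, hk⟩ := pow_unbounded_of_one_lt (1/ε) (one_lt_two (α := ℝ))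
    have hDk2 : (2:ℝ)^k ≤ (((f k).D : ℕ):ℝ) := by exact_mod_cast hgrow k
    have hDk0 : (0:ℝ) < (((f k).D : ℕ):ℝ) := by exact_mod_cast (f k).hD
    obtain ⟨τ, hτIco, hτ⟩ := exists_lift_Ico 0 (uu - z₀)
    set j : ℕ := ⌊τ * (((f k).D:ℕ):ℝ)⌋₊ with hjdef
    have hj1 : (j:ℝ) ≤ τ * (((f k).D:ℕ):ℝ) := Nat.floor_le (mul_nonneg hτIco.1 hDk0.le)
    have hj2 : τ * (((f k).D:ℕ):ℝ) < (j:ℝ) + 1 := Nat.lt_floor_add_one _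
    have hmem := htrans k (j:ℤ)
    have hcast : (((j:ℕ):ℤ):ℝ) = (j:ℝ) := by push_cast; ring
    rw [hcast] at hmem
    refine ⟨z₀ + (((j:ℝ)/(((f k).D:ℕ):ℝ) : ℝ) : T1), hmem, ?_⟩
    rw [dist_eq_norm]
    have heq : uu - (z₀ + (((j:ℝ)/(((f k).D:ℕ):ℝ) : ℝ) : T1))
        = ((τ - (j:ℝ)/(((f k).D:ℕ):ℝ) : ℝ) : T1) := by
      rw [AddCircle.coe_sub, hτ]
      abel
    rw [heq]
    have hbound : |τ - (j:ℝ)/(((f k).D:ℕ):ℝ)| < ε := by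
      have h2k : (0:ℝ) < 2^k := by positivity
      have hinvk : 1/(((f k).D:ℕ):ℝ) < ε := by
        have h1 : 1 < ε * 2^k := by
          have h := (div_lt_iff₀ hε).mp hk
          nlinarith
        rw [div_lt_iff₀ hDk0]
        nlinarith
      have hle1 : 0 ≤ τ - (j:ℝ)/(((f k).D:ℕ):ℝ) := by
        rw [sub_nonneg, div_le_iff₀ hDk0]
        linarith
      have hle2 : τ - (j:ℝ)/(((f k).D:ℕ):ℝ) < 1/(((f k).D:ℕ):ℝ) := by
        have hlt : τ < ((j:ℝ)+1)/(((f k).D:ℕ):ℝ) := by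
          rw [lt_div_iff₀ hDk0]; linarith
        have hsplit : ((j:ℝ)+1)/(((f k).D:ℕ):ℝ)
            = (j:ℝ)/(((f k).D:ℕ):ℝ) + 1/(((f k).D:ℕ):ℝ) := by ring
        linarith
      rw [abs_of_nonneg hle1]
      linarith
    calc ‖((τ - (j:ℝ)/(((f k).D:ℕ):ℝ) : ℝ) : T1)‖
        ≤ |τ - (j:ℝ)/(((f k).D:ℕ):ℝ)| := norm_coe_le _
    _ < ε := hbound
  have huniv : Zinf = Set.univ := by rw [← hZcl.closure_eq, hdense.closure_eq]
  have h0P : (0:T1) ∈ P := by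
    have h0 : (0:T1) ∈ Zinf := huniv ▸ Set.mem_univ _
    exact (f 0).hsub (Set.mem_iInter.mp h0 0)
  exact hirr 0 h0P ⟨1, one_pos, by simp⟩

end EnemyFinal

section SplitCoprime

lemma split_coprime (ab : ℕ) (hab : 2 ≤ ab) :
    ∀ n : ℕ, 0 < n → ∃ d u : ℕ, n = d * u ∧ Nat.Coprime d ab ∧ u ∣ ab ^ n := by
  intro n
  induction n using Nat.strong_induction_on with
  | _ n ih =>
    intro hn
    by_cases hcop : Nat.Coprime n ab
    · exact ⟨n, 1, (mul_one n).symm, hcop, one_dvd _⟩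
    · set g := Nat.gcd n ab with hg
      have hg1 : g ≠ 1 := hcop
      have hgpos : 0 < g := Nat.gcd_pos_of_pos_left ab hn
      have hg2 : 2 ≤ g := by omega
      have hgn : g ∣ n := Nat.gcd_dvd_left n ab
      obtain ⟨n', hn'⟩ := hgn
      have hn'pos : 0 < n' := by
        rcases Nat.eq_zero_or_pos n' with h | h
        · rw [h, mul_zero] at hn'; omega
        · exact h
      have hn'lt : n' < n := by
        rw [hn']
        nlinarith
      obtain ⟨d, u', hdu', hcop', hu'⟩ := ih n' hn'lt hn'pos
      refine ⟨d, u' * g, ?_, hcop', ?_⟩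
      · rw [hn', hdu']; ring
      · have h1 : u' * g ∣ ab ^ n' * ab := mul_dvd_mul hu' (Nat.gcd_dvd_right n ab)
        have h2 : ab ^ n' * ab = ab ^ (n' + 1) := (pow_succ ab n').symm
        have h3 : ab ^ (n'+1) ∣ ab ^ n := pow_dvd_pow ab (by omega)
        exact dvd_trans (h2 ▸ h1) h3

end SplitCoprime

end Furstenberg

open Furstenberg

/-- Furstenberg's ×a,×b theorem: if `a, b ≥ 2` are multiplicatively independent
integers, then every closed subset of the circle `ℝ/ℤ` invariant under both `x ↦ a·x`
and `x ↦ b·x` is finite or is the whole circle. -/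
theorem furstenberg_times_a_times_b (a b : ℕ) (ha : 2 ≤ a) (hb : 2 ≤ b)
    (hind : ∀ m n : ℕ, a ^ m = b ^ n → m = 0 ∧ n = 0)
    (S : Set (AddCircle (1 : ℝ))) (hclosed : IsClosed S)
    (haS : (fun x : AddCircle (1 : ℝ) => (a : ℤ) • x) '' S ⊆ S)
    (hbS : (fun x : AddCircle (1 : ℝ) => (b : ℤ) • x) '' S ⊆ S) :
    S.Finite ∨ S = Set.univ := by
  by_cases hfin : S.Finite
  · exact Or.inl hfin
  right
  have hinf : S.Infinite := hfin
  have hSa : ∀ x ∈ S, (a:ℤ) • x ∈ S := fun x hx => haS ⟨x, hx, rfl⟩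
  have hSb : ∀ x ∈ S, (b:ℤ) • x ∈ S := fun x hx => hbS ⟨x, hx, rfl⟩
  set SA := {x : AddCircle (1:ℝ) | Acc' x S} with hSAdef
  obtain ⟨x₀, hx₀⟩ := exists_acc hinf
  have hSAne : SA.Nonempty := ⟨x₀, hx₀⟩
  have hSAcl : IsClosed SA := acc_closed S
  have hSAa : ∀ z ∈ SA, (a:ℤ) • z ∈ SA := fun z hz => acc_smul a (by omega) hSa hz
  have hSAb : ∀ z ∈ SA, (b:ℤ) • z ∈ SA := fun z hz => acc_smul b (by omega) hSb hz
  by_cases hrat : ∀ z ∈ SA, ¬ IsRatC z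
  · exact (enemy ha hb hind hSAne hSAcl hSAa hSAb hrat).elim
  · push_neg at hrat
    obtain ⟨xs, hxsSA, hxsrat⟩ := hrat
    obtain ⟨n, hn, hnx⟩ := hxsrat
    obtain ⟨d, u, hdu, hcop, hudvd⟩ := split_coprime (a*b) (by nlinarith) n hn
    set m₀ := (a*b)^n with hm₀def
    have hm₀pos : 0 < m₀ := pow_pos (by positivity) n
    have hSab : ∀ x ∈ S, ((a*b : ℕ):ℤ) • x ∈ S := by
      intro x hx
      have hc : ((a*b:ℕ):ℤ) = (a:ℤ) * (b:ℤ) := by push_cast; ring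
      rw [hc, mul_smul]
      exact hSa _ (hSb _ hx)
    have hSm₀ : ∀ x ∈ S, ((m₀:ℕ):ℤ) • x ∈ S := fun x hx => smul_mem_pow hSab n x hx
    set x₁ := ((m₀:ℕ):ℤ) • xs with hx₁def
    have hx₁acc : Acc' x₁ S := acc_smul m₀ hm₀pos hSm₀ hxsSA
    have hd0 : 0 < d := by
      rcases Nat.eq_zero_or_pos d with h | h
      · exfalso; rw [h, zero_mul] at hdu; omega
      · exact h
    have hdx₁ : ((d:ℕ):ℤ) • x₁ = 0 := by
      obtain ⟨w, hw⟩ := hudvd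
      have hmul : ((d:ℕ):ℤ) • x₁ = ((d * m₀ : ℕ):ℤ) • xs := by
        rw [hx₁def, ← mul_smul]
        congr 1
        all_goals push_cast
        all_goals try ring
      have harith : d * m₀ = n * w := by rw [hdu, hw]; ring
      rw [hmul, harith]
      have hsplit : ((n * w : ℕ):ℤ) • xs = ((w:ℕ):ℤ) • (((n:ℕ):ℤ) • xs) := by
        rw [← mul_smul]
        congr 1
        all_goals push_cast
        all_goals try ring
      rw [hsplit, hnx, smul_zero]
    set e := Nat.totient d with hedef
    have hepos : 0 < e := Nat.totient_pos.mpr hd0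
    set A := a^e with hAdef
    set B := b^e with hBdef
    have hA2 : 2 ≤ A := le_trans ha (Nat.le_self_pow hepos.ne' a)
    have hB2 : 2 ≤ B := le_trans hb (Nat.le_self_pow hepos.ne' b)
    have hindep : ∀ m' n' : ℕ, A ^ m' = B ^ n' → m' = 0 ∧ n' = 0 := by
      intro m' n' hmn
      rw [hAdef, hBdef, ← pow_mul, ← pow_mul] at hmn
      have h := hind _ _ hmn
      exact ⟨(Nat.mul_eq_zero.mp h.1).resolve_left hepos.ne',
        (Nat.mul_eq_zero.mp h.2).resolve_left hepos.ne'⟩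
    have hcopa : Nat.Coprime a d :=
      Nat.Coprime.coprime_dvd_left (dvd_mul_right a b) hcop.symm
    have hcopb : Nat.Coprime b d :=
      Nat.Coprime.coprime_dvd_left (dvd_mul_left b a) hcop.symm
    have hfixgen : ∀ c : ℕ, Nat.Coprime c d → ((c^e : ℕ):ℤ) • x₁ = x₁ := by
      intro c hc
      have hmod : c^e ≡ 1 [MOD d] := Nat.ModEq.pow_totient hc
      have hdvd : ((d:ℕ):ℤ) ∣ ((c^e : ℕ):ℤ) - 1 := by
        have := Nat.ModEq.dvd hmod.symm
        simpa using this
      obtain ⟨t, ht⟩ := hdvd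
      have hzero : ((c^e : ℕ):ℤ) • x₁ - x₁ = 0 := by
        have h2 : ((c^e : ℕ):ℤ) • x₁ - x₁ = (((c^e : ℕ):ℤ) - 1) • x₁ := by
          rw [sub_smul, one_smul]
        rw [h2, ht, mul_comm, mul_smul, hdx₁, smul_zero]
      linear_combination (norm := abel) hzero
    have hfixA : ((A:ℕ):ℤ) • x₁ = x₁ := hfixgen a hcopa
    have hfixB : ((B:ℕ):ℤ) • x₁ = x₁ := hfixgen b hcopb
    have hSA' : ∀ y ∈ S, ((A:ℕ):ℤ) • y ∈ S := fun y hy => smul_mem_pow hSa e y hy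
    have hSB' : ∀ y ∈ S, ((B:ℕ):ℤ) • y ∈ S := fun y hy => smul_mem_pow hSb e y hy
    have happ : ∀ δ : ℝ, 0 < δ → ∃ w ∈ S, w ≠ x₁ ∧ ‖w - x₁‖ < δ := by
      intro δ hδ
      obtain ⟨y, hyS, hyne, hyd⟩ := hx₁acc δ hδ
      exact ⟨y, hyS, hyne, by rwa [← dist_eq_norm]⟩
    exact core A B hA2 hB2 hindep S hclosed hSA' hSB' x₁ hfixA hfixB happ
end
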